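/- arXiv:math/0612513 — 2 statements merged into one kernel-verified Lean document; each statement's English description precedes it below -/
import Mathlib

section
/- Let S = (P, L) be a generalized quadrangle of order (2,t) and let (R, ψ) be a faithful representation of S such that (t, |R|) ≠ (2, 2^4). If x and y are distinct points of P such that r_x r_y ∈ R_ψ, then x and y are collinear. -/
open scoped Classical

/-- A slim partial linear space: a nonempty point set, a nonempty collection of
lines each of which is a 3-element set of points, such that any two distinct
points lie in at most one common line. -/
structure SlimPLS (P : Type*) where
  lines : Set (Finset P)
  nonempty_pts : Nonempty P
  nonempty_lines : lines.Nonempty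
  three_points : ∀ l ∈ lines, l.card = 3
  unique_line : ∀ l₁ ∈ lines, ∀ l₂ ∈ lines, ∀ x y : P,
    x ≠ y → x ∈ l₁ → y ∈ l₁ → x ∈ l₂ → y ∈ l₂ → l₁ = l₂

namespace SlimPLS

variable {P : Type*}

/-- Two points are collinear if they are distinct and lie on a common line. -/
def Collinear (S : SlimPLS P) (x y : P) : Prop :=
  x ≠ y ∧ ∃ l ∈ S.lines, x ∈ l ∧ y ∈ l

/-- The collinearity graph of a slim partial linear space. -/
def graph (S : SlimPLS P) : SimpleGraph P where
  Adj x y := S.Collinear x y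
  symm := ⟨fun x y h => ⟨Ne.symm h.1, h.2.elim fun l hl => ⟨l, hl.1, hl.2.2, hl.2.1⟩⟩⟩
  loopless := ⟨fun x h => h.1 rfl⟩

/-- `S` is a generalized quadrangle of order `(2, t)`: it is connected, no point
is collinear with all other points, every point is on exactly `t+1` lines, and
for every point `x` and line `l` with `x ∉ l` there is exactly one point of `l`
collinear with `x`. -/
def IsGQ (S : SlimPLS P) (t : ℕ) : Prop :=
  S.graph.Connected ∧
  (∀ x : P, ∃ y : P, y ≠ x ∧ ¬ S.Collinear x y) ∧
  (∀ x : P, {l | l ∈ S.lines ∧ x ∈ l}.ncard = t + 1) ∧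
  (∀ x : P, ∀ l ∈ S.lines, x ∉ l → ∃! y : P, y ∈ l ∧ S.Collinear x y)

/-- A set of points is an arc if its points are pairwise non-collinear. -/
def IsArc (S : SlimPLS P) (T : Set P) : Prop :=
  ∀ x ∈ T, ∀ y ∈ T, x ≠ y → ¬ S.Collinear x y

/-- `{a,b,c}` is a complete 3-arc: three pairwise distinct, pairwise
non-collinear points not contained in a 4-arc. -/
def Complete3Arc (S : SlimPLS P) (a b c : P) : Prop :=
  a ≠ b ∧ a ≠ c ∧ b ≠ c ∧ S.IsArc {a, b, c} ∧
  ∀ d : P, d ∉ ({a, b, c} : Set P) → ¬ S.IsArc (insert d {a, b, c})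

/-- `{a,b,c}` is a complete 3-arc of the subset `Q`: three pairwise distinct,
pairwise non-collinear points of `Q` not contained in a 4-arc inside `Q`. -/
def Complete3ArcIn (S : SlimPLS P) (Q : Set P) (a b c : P) : Prop :=
  a ∈ Q ∧ b ∈ Q ∧ c ∈ Q ∧ a ≠ b ∧ a ≠ c ∧ b ≠ c ∧ S.IsArc {a, b, c} ∧
  ∀ d ∈ Q, d ∉ ({a, b, c} : Set P) → ¬ S.IsArc (insert d {a, b, c})

/-- `Q` is a sub-generalized-quadrangle of order `(2,t)` of `S`: together with
the lines of `S` contained in it, `Q` is a `(2,t)`-GQ; in particular any line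
meeting `Q` in at least two points is contained in `Q`. -/
def IsSubGQ (S : SlimPLS P) (Q : Set P) (t : ℕ) : Prop :=
  Q.Nonempty ∧
  (∃ l ∈ S.lines, (l : Set P) ⊆ Q) ∧
  (∀ l ∈ S.lines, ∀ x ∈ l, ∀ y ∈ l, x ≠ y → x ∈ Q → y ∈ Q → (l : Set P) ⊆ Q) ∧
  (SimpleGraph.induce Q S.graph).Connected ∧
  (∀ x ∈ Q, ∃ y ∈ Q, y ≠ x ∧ ¬ S.Collinear x y) ∧
  (∀ x ∈ Q, {l | l ∈ S.lines ∧ x ∈ l ∧ (l : Set P) ⊆ Q}.ncard = t + 1) ∧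
  (∀ x ∈ Q, ∀ l ∈ S.lines, (l : Set P) ⊆ Q → x ∉ l → ∃! y : P, y ∈ l ∧ S.Collinear x y)

/-- `S` is a near hexagon: connected of diameter 3, no point collinear with all
other points, and for every point `x` and line `l` there is a unique point of
`l` nearest to `x`. -/
def IsNearHexagon (S : SlimPLS P) : Prop :=
  S.graph.Connected ∧
  (∀ x y : P, S.graph.dist x y ≤ 3) ∧
  (∃ x y : P, S.graph.dist x y = 3) ∧
  (∀ x : P, ∃ y : P, y ≠ x ∧ ¬ S.Collinear x y) ∧
  (∀ x : P, ∀ l ∈ S.lines, ∃! y : P, y ∈ l ∧ ∀ z ∈ l, S.graph.dist x y ≤ S.graph.dist x z)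

/-- `S` is dense: any two points at distance 2 have at least two common
neighbours. -/
def IsDense (S : SlimPLS P) : Prop :=
  ∀ x y : P, S.graph.dist x y = 2 →
    ∃ u v : P, u ≠ v ∧ S.Collinear x u ∧ S.Collinear u y ∧ S.Collinear x v ∧ S.Collinear v y

/-- `Q` is a quad: a convex subset of diameter 2 in which no point is collinear
with all other points of `Q`. -/
def IsQuad (S : SlimPLS P) (Q : Set P) : Prop :=
  (∀ u ∈ Q, ∀ v ∈ Q, ∀ w : P,
      S.graph.dist u w + S.graph.dist w v = S.graph.dist u v → w ∈ Q) ∧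
  (∀ u ∈ Q, ∀ v ∈ Q, S.graph.dist u v ≤ 2) ∧
  (∃ u ∈ Q, ∃ v ∈ Q, S.graph.dist u v = 2) ∧
  (∀ u ∈ Q, ∃ v ∈ Q, v ≠ u ∧ ¬ S.Collinear u v)

/-- A quad `Q` is of type `(2, t₂)` if every point of `Q` lies on exactly
`t₂ + 1` lines contained in `Q`. -/
def QuadType (S : SlimPLS P) (Q : Set P) (t₂ : ℕ) : Prop :=
  ∀ x ∈ Q, {l | l ∈ S.lines ∧ x ∈ l ∧ (l : Set P) ⊆ Q}.ncard = t₂ + 1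

/-- The point-quad pair `(x, Q)` is classical: there is a unique point `y ∈ Q`
nearest to `x`, with `d(x,z) = d(x,y) + d(y,z)` for all `z ∈ Q`. -/
def IsClassicalPair (S : SlimPLS P) (x : P) (Q : Set P) : Prop :=
  ∃! y : P, y ∈ Q ∧ ∀ z ∈ Q, S.graph.dist x z = S.graph.dist x y + S.graph.dist y z

/-- A quad is classical (big) if every point-quad pair with it is classical. -/
def IsClassicalQuad (S : SlimPLS P) (Q : Set P) : Prop :=
  ∀ x : P, S.IsClassicalPair x Q

/-- A subspace: any line containing two of its points is contained in it. -/
def IsSubspace (S : SlimPLS P) (X : Set P) : Prop :=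
  ∀ l ∈ S.lines, ∀ x ∈ l, ∀ y ∈ l, x ≠ y → x ∈ X → y ∈ X → (l : Set P) ⊆ X

/-- The subspace generated by a set of points. -/
def subspaceGen (S : SlimPLS P) (A : Set P) : Set P :=
  ⋂₀ {X | S.IsSubspace X ∧ A ⊆ X}

/-- `NPdim S` is the rank over `F₂` of the distance-3 adjacency matrix. -/
noncomputable def NPdim [Fintype P] (S : SlimPLS P) : ℕ :=
  Matrix.rank (Matrix.of fun x y : P => if S.graph.dist x y = 3 then (1 : ZMod 2) else 0)

/-- `dimV S` is the dimension of the universal representation module of `S`: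
the free `F₂`-vector space on the points modulo the span of the elements
`v_x + v_y + v_z` for the lines `{x,y,z}`. -/
noncomputable def dimV (S : SlimPLS P) : ℕ :=
  Module.finrank (ZMod 2)
    ((P →₀ ZMod 2) ⧸ Submodule.span (ZMod 2)
      {f : P →₀ ZMod 2 | ∃ l ∈ S.lines, f = ∑ x ∈ l, Finsupp.single x 1})

end SlimPLS

/-- A representation of a slim partial linear space `S`: an assignment of an
order-2 element `r x` of `R` to each point `x`, such that the images generate
`R` and for every line `{x,y,z}` the set `{1, r x, r y, r z}` is a Klein four
subgroup (`r x * r y = r z` for the three pairwise distinct points of a line). -/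
structure SlimPLS.Rep {P : Type*} (S : SlimPLS P) (R : Type*) [Group R] where
  r : P → R
  order_two : ∀ x : P, orderOf (r x) = 2
  gen : Subgroup.closure (Set.range r) = ⊤
  line_rel : ∀ l ∈ S.lines, ∀ x ∈ l, ∀ y ∈ l, ∀ z ∈ l,
    x ≠ y → x ≠ z → y ≠ z → r x * r y = r z

/-- A finite 2-group is extraspecial if its Frattini subgroup, commutator
subgroup and center coincide and have order 2. -/
def IsExtraspecial (G : Type*) [Group G] : Prop :=
  Finite G ∧ IsPGroup 2 G ∧ frattini G = commutator G ∧
    commutator G = Subgroup.center G ∧ Nat.card (Subgroup.center G) = 2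

-- ============ AUX START ============
namespace GQaux

open SlimPLS

variable {P : Type*} {S : SlimPLS P}

theorem col_symm {x y : P} (h : S.Collinear x y) : S.Collinear y x :=
  ⟨h.1.symm, h.2.elim fun l hl => ⟨l, hl.1, hl.2.2, hl.2.1⟩⟩

theorem col_ne {x y : P} (h : S.Collinear x y) : x ≠ y := h.1

theorem not_col_self (x : P) : ¬ S.Collinear x x := fun h => h.1 rfl

theorem col_of_mem {l : Finset P} (hl : l ∈ S.lines) {p q : P}
    (hp : p ∈ l) (hq : q ∈ l) (h : p ≠ q) : S.Collinear p q :=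
  ⟨h, l, hl, hp, hq⟩

/-- The line through two collinear points. -/
noncomputable def lineOf (S : SlimPLS P) (p q : P) : Finset P :=
  if h : S.Collinear p q then h.2.choose else ∅

theorem lineOf_mem_lines {p q : P} (h : S.Collinear p q) : lineOf S p q ∈ S.lines := by
  rw [lineOf, dif_pos h]; exact h.2.choose_spec.1

theorem mem_lineOf_left {p q : P} (h : S.Collinear p q) : p ∈ lineOf S p q := by
  rw [lineOf, dif_pos h]; exact h.2.choose_spec.2.1

theorem mem_lineOf_right {p q : P} (h : S.Collinear p q) : q ∈ lineOf S p q := by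
  rw [lineOf, dif_pos h]; exact h.2.choose_spec.2.2

theorem lineOf_eq {p q : P} (h : S.Collinear p q) {l : Finset P} (hl : l ∈ S.lines)
    (hp : p ∈ l) (hq : q ∈ l) : lineOf S p q = l :=
  S.unique_line _ (lineOf_mem_lines h) _ hl p q h.1 (mem_lineOf_left h) (mem_lineOf_right h) hp hq

theorem lineOf_symm {p q : P} (h : S.Collinear p q) : lineOf S p q = lineOf S q p :=
  lineOf_eq h (lineOf_mem_lines (col_symm h)) (mem_lineOf_right (col_symm h))
    (mem_lineOf_left (col_symm h))

/-- The third point on the line through two collinear points. -/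
noncomputable def star (S : SlimPLS P) (p q : P) : P :=
  if h : (((lineOf S p q).erase p).erase q).Nonempty then h.choose else p

theorem star_spec {p q : P} (h : S.Collinear p q) :
    star S p q ∈ lineOf S p q ∧ star S p q ≠ p ∧ star S p q ≠ q := by
  have hcard : ((((lineOf S p q).erase p).erase q)).Nonempty := by
    rw [← Finset.card_pos]
    have h3 : (lineOf S p q).card = 3 := S.three_points _ (lineOf_mem_lines h)
    have h1 : ((lineOf S p q).erase p).card = 2 := by
      rw [Finset.card_erase_of_mem (mem_lineOf_left h), h3]
    have h2 : q ∈ (lineOf S p q).erase p :=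
      Finset.mem_erase.2 ⟨h.1.symm, mem_lineOf_right h⟩
    rw [Finset.card_erase_of_mem h2, h1]; norm_num
  rw [star, dif_pos hcard]
  have := hcard.choose_spec
  rw [Finset.mem_erase, Finset.mem_erase] at this
  exact ⟨this.2.2, this.2.1, this.1⟩

theorem star_mem {p q : P} (h : S.Collinear p q) : star S p q ∈ lineOf S p q :=
  (star_spec h).1

theorem star_ne_left {p q : P} (h : S.Collinear p q) : star S p q ≠ p :=
  (star_spec h).2.1

theorem star_ne_right {p q : P} (h : S.Collinear p q) : star S p q ≠ q :=
  (star_spec h).2.2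

theorem col_star_left {p q : P} (h : S.Collinear p q) : S.Collinear p (star S p q) :=
  col_of_mem (lineOf_mem_lines h) (mem_lineOf_left h) (star_mem h) (star_ne_left h).symm

theorem col_star_right {p q : P} (h : S.Collinear p q) : S.Collinear q (star S p q) :=
  col_of_mem (lineOf_mem_lines h) (mem_lineOf_right h) (star_mem h) (star_ne_right h).symm

/-- coverage: every point of the line is p, q or star p q -/
theorem mem_lineOf_iff {p q : P} (h : S.Collinear p q) {w : P} :
    w ∈ lineOf S p q ↔ w = p ∨ w = q ∨ w = star S p q := by
  constructor
  · intro hw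
    have h3 : (lineOf S p q).card = 3 := S.three_points _ (lineOf_mem_lines h)
    by_contra hc
    push_neg at hc
    have hsub : insert w (insert p (insert q {star S p q})) ⊆ lineOf S p q := by
      intro a ha
      simp only [Finset.mem_insert, Finset.mem_singleton] at ha
      rcases ha with rfl | rfl | rfl | rfl
      exacts [hw, mem_lineOf_left h, mem_lineOf_right h, star_mem h]
    have hcard : (insert w (insert p (insert q ({star S p q} : Finset P)))).card = 4 := by
      rw [Finset.card_insert_of_notMem, Finset.card_insert_of_notMem,
        Finset.card_insert_of_notMem, Finset.card_singleton]
      · simp only [Finset.mem_singleton]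
        exact fun he => (star_spec h).2.2 he.symm
      · simp only [Finset.mem_insert, Finset.mem_singleton]
        push_neg
        exact ⟨h.1, fun he => (star_ne_left h) he.symm⟩
      · simp only [Finset.mem_insert, Finset.mem_singleton]
        push_neg
        exact ⟨hc.1, hc.2.1, hc.2.2⟩
    have := Finset.card_le_card hsub
    omega
  · rintro (rfl | rfl | rfl)
    exacts [mem_lineOf_left h, mem_lineOf_right h, star_mem h]

theorem star_unique {p q w : P} (h : S.Collinear p q) (hw : w ∈ lineOf S p q)
    (h1 : w ≠ p) (h2 : w ≠ q) : w = star S p q := by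
  rcases (mem_lineOf_iff h).1 hw with rfl | rfl | rfl
  · exact absurd rfl h1
  · exact absurd rfl h2
  · rfl

theorem star_symm {p q : P} (h : S.Collinear p q) : star S p q = star S q p := by
  have h' := col_symm h
  refine star_unique h' ?_ (star_ne_right h) (star_ne_left h)
  rw [← lineOf_symm h]; exact star_mem h

end GQaux

section Part1
namespace GQaux

open SlimPLS

variable {P : Type*} {S : SlimPLS P} {t : ℕ}

theorem unique_nbr_on_line (hGQ : S.IsGQ t) {l : Finset P} (hl : l ∈ S.lines) {s p q : P}
    (hs : s ∉ l) (hp : p ∈ l) (hq : q ∈ l) (hpq : p ≠ q) (hsp : S.Collinear s p) :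
    ¬ S.Collinear s q := fun hsq =>
  hpq ((hGQ.2.2.2 s l hl hs).unique ⟨hp, hsp⟩ ⟨hq, hsq⟩)

theorem no_triangle (hGQ : S.IsGQ t) {p q s : P} (hpq : S.Collinear p q)
    (hsp : S.Collinear s p) (hsq : S.Collinear s q) : s ∈ lineOf S p q := by
  by_contra hs
  exact unique_nbr_on_line hGQ (lineOf_mem_lines hpq) hs (mem_lineOf_left hpq)
    (mem_lineOf_right hpq) hpq.1 hsp hsq

/-- If `u, u'` are both collinear with `v` but not with each other, then the third point
of the line through `u,v` is distinct from and not collinear with `u'`. -/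
theorem star_not_col (hGQ : S.IsGQ t) {u u' v : P} (h1 : S.Collinear u v)
    (h2 : S.Collinear u' v) (h3 : ¬ S.Collinear u u') (hne : u ≠ u') :
    star S u v ≠ u' ∧ ¬ S.Collinear (star S u v) u' := by
  have hav : S.Collinear v (star S u v) := col_star_right h1
  have hua : S.Collinear u (star S u v) := col_star_left h1
  have hne1 : star S u v ≠ u' := by
    intro he
    exact h3 (col_of_mem (lineOf_mem_lines h1) (mem_lineOf_left h1) (he ▸ star_mem h1) hne)
  refine ⟨hne1, fun hcol => ?_⟩
  have hmem : star S u v ∈ lineOf S u' v := no_triangle hGQ h2 hcol (col_symm hav)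
  have hl_eq : lineOf S u' v = lineOf S u v := by
    refine S.unique_line _ (lineOf_mem_lines h2) _ (lineOf_mem_lines h1) (star S u v) v
      (star_ne_right h1) hmem (mem_lineOf_right h2) (star_mem h1) (mem_lineOf_right h1)
  have hu' : u' ∈ lineOf S u v := hl_eq ▸ mem_lineOf_left h2
  rcases (mem_lineOf_iff h1).1 hu' with rfl | rfl | rfl
  · exact hne rfl
  · exact h2.1 rfl
  · exact hne1 rfl

variable {R : Type*} [Group R] {ρ : S.Rep R}

theorem rr_sq (ρ : S.Rep R) (p : P) : ρ.r p * ρ.r p = 1 := by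
  have := pow_orderOf_eq_one (ρ.r p)
  rwa [ρ.order_two, pow_two] at this

theorem rr_inv (ρ : S.Rep R) (p : P) : (ρ.r p)⁻¹ = ρ.r p :=
  inv_eq_of_mul_eq_one_right (rr_sq ρ p)

theorem rr_ne_one (ρ : S.Rep R) (p : P) : ρ.r p ≠ 1 := fun h => by
  have := ρ.order_two p
  rw [h, orderOf_one] at this
  omega

theorem line_mul (ρ : S.Rep R) {p q : P} (h : S.Collinear p q) :
    ρ.r p * ρ.r q = ρ.r (star S p q) :=
  ρ.line_rel _ (lineOf_mem_lines h) p (mem_lineOf_left h) q (mem_lineOf_right h)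
    (star S p q) (star_mem h) h.1 (fun he => star_ne_left h he.symm)
    (fun he => star_ne_right h he.symm)

theorem line_mul' (ρ : S.Rep R) {p q : P} (h : S.Collinear p q) :
    ρ.r q * ρ.r p = ρ.r (star S p q) :=
  ρ.line_rel _ (lineOf_mem_lines h) q (mem_lineOf_right h) p (mem_lineOf_left h)
    (star S p q) (star_mem h) h.1.symm (fun he => star_ne_right h he.symm)
    (fun he => star_ne_left h he.symm)

theorem line_comm (ρ : S.Rep R) {p q : P} (h : S.Collinear p q) :
    ρ.r p * ρ.r q = ρ.r q * ρ.r p := by rw [line_mul ρ h, line_mul' ρ h]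

theorem star_eq_of_mul (hf : Function.Injective ρ.r) {p q w : P} (h : S.Collinear p q)
    (hw : ρ.r p * ρ.r q = ρ.r w) : star S p q = w := hf ((line_mul ρ h).symm.trans hw)

/-- A hyperbolic triple. -/
structure HSet (S : SlimPLS P) {R : Type*} [Group R] (ρ : S.Rep R) (x y z : P) : Prop where
  hne : x ≠ y
  hncol : ¬ S.Collinear x y
  hmul : ρ.r x * ρ.r y = ρ.r z

namespace HSet

variable {x y z : P}

theorem comm (h : HSet S ρ x y z) : ρ.r x * ρ.r y = ρ.r y * ρ.r x := by
  have h2 : (ρ.r x * ρ.r y) * (ρ.r x * ρ.r y) = 1 := by rw [h.hmul]; exact rr_sq ρ z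
  calc ρ.r x * ρ.r y = (ρ.r x * ρ.r y)⁻¹ := (inv_eq_of_mul_eq_one_right h2).symm
    _ = (ρ.r y)⁻¹ * (ρ.r x)⁻¹ := mul_inv_rev _ _
    _ = ρ.r y * ρ.r x := by rw [rr_inv, rr_inv]

theorem yz (h : HSet S ρ x y z) : ρ.r y * ρ.r z = ρ.r x := by
  rw [← h.hmul, ← mul_assoc, ← h.comm, mul_assoc, rr_sq, mul_one]

theorem xz (h : HSet S ρ x y z) : ρ.r x * ρ.r z = ρ.r y := by
  rw [← h.hmul, ← mul_assoc, rr_sq, one_mul]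

theorem ne_zx (hf : Function.Injective ρ.r) (h : HSet S ρ x y z) : z ≠ x := by
  intro he
  apply rr_ne_one ρ y
  have := h.hmul
  rw [he] at this
  exact mul_left_cancel (a := ρ.r x) (by rw [mul_one, this])

theorem ne_zy (hf : Function.Injective ρ.r) (h : HSet S ρ x y z) : z ≠ y := by
  intro he
  apply rr_ne_one ρ x
  have := h.hmul
  rw [he] at this
  nth_rewrite 2 [← one_mul (ρ.r y)] at this
  exact mul_right_cancel this

theorem ncol_yz (hf : Function.Injective ρ.r) (h : HSet S ρ x y z) : ¬ S.Collinear y z := by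
  intro hc
  have hstar : star S y z = x := star_eq_of_mul hf hc h.yz
  exact h.hncol (col_symm (col_of_mem (lineOf_mem_lines hc) (mem_lineOf_left hc)
    (hstar ▸ star_mem hc) (fun he => h.hne he.symm)))

theorem ncol_xz (hf : Function.Injective ρ.r) (h : HSet S ρ x y z) : ¬ S.Collinear x z := by
  intro hc
  have hstar : star S x z = y := star_eq_of_mul hf hc h.xz
  exact h.hncol (col_of_mem (lineOf_mem_lines hc) (mem_lineOf_left hc)
    (hstar ▸ star_mem hc) h.hne)

theorem rot (hf : Function.Injective ρ.r) (h : HSet S ρ x y z) : HSet S ρ y z x :=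
  ⟨fun he => h.ne_zy hf he.symm, h.ncol_yz hf, h.yz⟩

end HSet

/-- The key transfer lemma: for a hyperbolic triple `(x,y,z)`, on any line through `z`,
any point collinear with `x` is collinear with `y`. -/
theorem transfer (hGQ : S.IsGQ t) (hf : Function.Injective ρ.r) {x y z : P}
    (h : HSet S ρ x y z) {l : Finset P} (hl : l ∈ S.lines) (hzl : z ∈ l) {u : P}
    (hu : u ∈ l) (hxu : S.Collinear x u) : S.Collinear y u := by
  have hzx : ¬ S.Collinear z x := fun hc => h.ncol_xz hf (col_symm hc)
  have hzy : ¬ S.Collinear z y := fun hc => h.ncol_yz hf (col_symm hc)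
  have huz : u ≠ z := fun he => hzx (he ▸ col_symm hxu)
  have hxl : x ∉ l := fun hc => hzx (col_of_mem hl hzl hc (h.ne_zx hf))
  have hyl : y ∉ l := fun hc => hzy (col_of_mem hl hzl hc (h.ne_zy hf))
  have hcol_zu : S.Collinear z u := col_of_mem hl hzl hu huz.symm
  have hl_eq : lineOf S z u = l := lineOf_eq hcol_zu hl hzl hu
  obtain ⟨m, ⟨hm_mem, hm_col⟩, -⟩ := hGQ.2.2.2 y l hl hyl
  rw [← hl_eq] at hm_mem
  rcases (mem_lineOf_iff hcol_zu).1 hm_mem with rfl | rfl | rfl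
  · exact absurd hm_col (h.ncol_yz hf)
  · exact hm_col
  · -- m = star z u =: v; derive contradiction
    exfalso
    set v := star S z u with hv
    have hvl : v ∈ l := hl_eq ▸ star_mem hcol_zu
    have huv_prod : ρ.r z * ρ.r v = ρ.r u := by
      refine ρ.line_rel l hl z hzl v hvl u hu ?_ huz.symm ?_
      · exact fun he => star_ne_left hcol_zu (by rw [hv] at he; exact he.symm)
      · exact fun he => star_ne_right hcol_zu (by rw [hv] at he; exact he)
    have hxv : ρ.r x * ρ.r u = ρ.r y * ρ.r v := by
      rw [← huv_prod, ← mul_assoc, h.xz]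
    have hk : star S x u = star S y v := by
      apply hf
      rw [← line_mul ρ hxu, ← line_mul ρ hm_col, hxv]
    set k := star S x u with hkdef
    have hku : S.Collinear k u := col_symm (col_star_right hxu)
    have hkv : S.Collinear k v := by
      rw [hk]; exact col_symm (col_star_right hm_col)
    have hkl : k ∉ l := by
      rw [← hl_eq]
      intro hmem
      rcases (mem_lineOf_iff hcol_zu).1 hmem with he | he | he
      · exact hzx (col_symm (he ▸ col_star_left hxu))
      · exact star_ne_right hxu he
      · exact star_ne_right hm_col (hk ▸ he)
    exact unique_nbr_on_line hGQ hl hkl hu hvl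
      (fun he => star_ne_right hcol_zu (by rw [hv] at he; exact he.symm)) hku hkv

end GQaux
end Part1
section Part2
namespace GQaux

open SlimPLS

variable {P : Type*} {S : SlimPLS P} {t : ℕ}

/-- The finite set of lines through a point. -/
noncomputable def linesThru (hGQ : S.IsGQ t) (x : P) : Finset (Finset P) :=
  (Set.finite_of_ncard_ne_zero (s := {l | l ∈ S.lines ∧ x ∈ l})
    (by rw [hGQ.2.2.1 x]; omega)).toFinset

theorem mem_linesThru {hGQ : S.IsGQ t} {x : P} {l : Finset P} :
    l ∈ linesThru hGQ x ↔ l ∈ S.lines ∧ x ∈ l := Set.Finite.mem_toFinset _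

theorem card_linesThru (hGQ : S.IsGQ t) (x : P) : (linesThru hGQ x).card = t + 1 := by
  rw [← hGQ.2.2.1 x, linesThru, ← Set.ncard_coe_finset, Set.Finite.coe_toFinset]

/-- The finite set of neighbours of a point. -/
noncomputable def nbrs (hGQ : S.IsGQ t) (x : P) : Finset P :=
  (linesThru hGQ x).biUnion (fun l => l.erase x)

theorem mem_nbrs {hGQ : S.IsGQ t} {x p : P} : p ∈ nbrs hGQ x ↔ S.Collinear x p := by
  simp only [nbrs, Finset.mem_biUnion, mem_linesThru, Finset.mem_erase]
  constructor
  · rintro ⟨l, ⟨hl, hxl⟩, hpx, hpl⟩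
    exact col_of_mem hl hxl hpl (Ne.symm hpx)
  · intro h
    exact ⟨lineOf S x p, ⟨lineOf_mem_lines h, mem_lineOf_left h⟩, h.1.symm, mem_lineOf_right h⟩

theorem card_nbrs (hGQ : S.IsGQ t) (x : P) : (nbrs hGQ x).card = 2 * (t + 1) := by
  rw [nbrs, Finset.card_biUnion]
  · rw [Finset.sum_congr rfl (g := fun _ => 2), Finset.sum_const, card_linesThru, smul_eq_mul,
      mul_comm]
    intro l hl
    rw [mem_linesThru] at hl
    rw [Finset.card_erase_of_mem hl.2, S.three_points l hl.1]
  · intro l1 h1 l2 h2 hne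
    rw [Finset.mem_coe, mem_linesThru] at h1 h2
    rw [Function.onFun, Finset.disjoint_left]
    intro a ha1 ha2
    rw [Finset.mem_erase] at ha1 ha2
    exact hne (S.unique_line _ h1.1 _ h2.1 a x ha1.1 ha1.2 h1.2 ha2.2 h2.2)

/-- Common neighbours. -/
noncomputable def cnbrs (hGQ : S.IsGQ t) (x y : P) : Finset P := nbrs hGQ x ∩ nbrs hGQ y

theorem mem_cnbrs {hGQ : S.IsGQ t} {x y p : P} :
    p ∈ cnbrs hGQ x y ↔ S.Collinear x p ∧ S.Collinear y p := by
  simp [cnbrs, mem_nbrs]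

theorem card_cnbrs (hGQ : S.IsGQ t) {x p : P} (hne : x ≠ p) (hncol : ¬ S.Collinear x p) :
    (cnbrs hGQ x p).card = t + 1 := by
  rw [← card_linesThru hGQ x]
  have hnotmem : ∀ l ∈ linesThru hGQ x, p ∉ l := by
    intro l hl hpl
    rw [mem_linesThru] at hl
    exact hncol (col_of_mem hl.1 hl.2 hpl hne)
  refine Finset.card_bij (fun b _ => lineOf S x b) ?_ ?_ ?_
  · intro b hb
    rw [mem_cnbrs] at hb
    exact mem_linesThru.2 ⟨lineOf_mem_lines hb.1, mem_lineOf_left hb.1⟩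
  · intro b1 hb1 b2 hb2 heq
    rw [mem_cnbrs] at hb1 hb2
    by_contra hne12
    have hl1 : lineOf S x b1 ∈ linesThru hGQ x :=
      mem_linesThru.2 ⟨lineOf_mem_lines hb1.1, mem_lineOf_left hb1.1⟩
    have hb2mem : b2 ∈ lineOf S x b1 := by rw [heq]; exact mem_lineOf_right hb2.1
    exact unique_nbr_on_line hGQ (lineOf_mem_lines hb1.1) (hnotmem _ hl1)
      (mem_lineOf_right hb1.1) hb2mem hne12 hb1.2 hb2.2
  · intro l hl
    have hl' := mem_linesThru.1 hl
    obtain ⟨m, ⟨hm, hcolm⟩, -⟩ := hGQ.2.2.2 p l hl'.1 (hnotmem l hl)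
    have hmx : x ≠ m := fun he => hncol (col_symm (he ▸ hcolm))
    have hcxm : S.Collinear x m := col_of_mem hl'.1 hl'.2 hm hmx
    exact ⟨m, mem_cnbrs.2 ⟨hcxm, hcolm⟩, lineOf_eq hcxm hl'.1 hl'.2 hm⟩

theorem exists_cnbr (hGQ : S.IsGQ t) {x p : P} (hne : p ≠ x) (hncol : ¬ S.Collinear x p) :
    ∃ q, S.Collinear x q ∧ S.Collinear q p := by
  have : (linesThru hGQ p).Nonempty := by
    rw [← Finset.card_pos, card_linesThru]; omega
  obtain ⟨l, hl⟩ := this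
  rw [mem_linesThru] at hl
  have hxl : x ∉ l := fun hc => hncol (col_of_mem hl.1 hc hl.2 (Ne.symm hne))
  obtain ⟨m, ⟨hm, hcolm⟩, -⟩ := hGQ.2.2.2 x l hl.1 hxl
  have hmp : m ≠ p := fun he => hncol (he ▸ hcolm)
  exact ⟨m, hcolm, col_of_mem hl.1 hm hl.2 hmp⟩

/-- The finite set of points distinct from and not collinear with `x`. -/
noncomputable def Mset (hGQ : S.IsGQ t) (x : P) : Finset P :=
  ((nbrs hGQ x).biUnion (fun q => nbrs hGQ q)).filter (fun p => p ≠ x ∧ ¬ S.Collinear x p)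

theorem mem_Mset {hGQ : S.IsGQ t} {x p : P} :
    p ∈ Mset hGQ x ↔ p ≠ x ∧ ¬ S.Collinear x p := by
  rw [Mset, Finset.mem_filter]
  constructor
  · exact fun h => h.2
  · intro h
    obtain ⟨q, h1, h2⟩ := exists_cnbr hGQ h.1 h.2
    exact ⟨Finset.mem_biUnion.2 ⟨q, mem_nbrs.2 h1, mem_nbrs.2 h2⟩, h⟩

theorem double_count {α : Type*} (A B : Finset α) (adj : α → α → Prop) :
    ∑ a ∈ A, (B.filter (fun b => adj a b)).card
      = ∑ b ∈ B, (A.filter (fun a => adj a b)).card := by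
  simp only [Finset.card_filter]
  exact Finset.sum_comm

theorem card_Mset (hGQ : S.IsGQ t) (x : P) : (Mset hGQ x).card = 4 * t := by
  have key : ∑ p ∈ Mset hGQ x, ((nbrs hGQ x).filter (fun q => S.Collinear q p)).card
      = ∑ q ∈ nbrs hGQ x, ((Mset hGQ x).filter (fun p => S.Collinear q p)).card := by
    simpa using double_count (Mset hGQ x) (nbrs hGQ x) (fun p q => S.Collinear q p)
  have row : ∀ q ∈ nbrs hGQ x, ((Mset hGQ x).filter (fun p => S.Collinear q p)).card = 2 * t := by
    intro q hq
    rw [mem_nbrs] at hq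
    have hqx : S.Collinear q x := col_symm hq
    have heq : (Mset hGQ x).filter (fun p => S.Collinear q p)
        = (nbrs hGQ q).filter (fun p => p ≠ x ∧ ¬ S.Collinear x p) := by
      ext a
      simp only [Finset.mem_filter, mem_Mset, mem_nbrs]
      tauto
    rw [heq]
    have hsplit := Finset.card_filter_add_card_filter_not
      (s := nbrs hGQ q) (p := fun p => p ≠ x ∧ ¬ S.Collinear x p)
    have hneg : (nbrs hGQ q).filter (fun p => ¬(p ≠ x ∧ ¬ S.Collinear x p))
        = {x, star S q x} := by
      ext a
      simp only [Finset.mem_filter, mem_nbrs, Finset.mem_insert, Finset.mem_singleton,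
        not_and, not_not, ne_eq]
      constructor
      · rintro ⟨hqa, hrest⟩
        by_cases hax : a = x
        · exact Or.inl hax
        · right
          have hxa : S.Collinear x a := hrest hax
          have := no_triangle hGQ hqx (col_symm hqa) (col_symm hxa)
          rcases (mem_lineOf_iff hqx).1 this with rfl | rfl | rfl
          · exact absurd rfl hqa.1
          · exact absurd rfl hax
          · rfl
      · rintro (rfl | rfl)
        · exact ⟨hqx, fun h => absurd rfl h⟩
        · exact ⟨col_star_left hqx, fun _ => col_star_right hqx⟩
    rw [hneg] at hsplit
    have h2 : ({x, star S q x} : Finset P).card = 2 := by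
      rw [Finset.card_insert_of_notMem, Finset.card_singleton]
      simp only [Finset.mem_singleton]
      exact fun he => star_ne_right hqx he.symm
    rw [h2, card_nbrs] at hsplit
    omega
  have col : ∀ p ∈ Mset hGQ x,
      ((nbrs hGQ x).filter (fun q => S.Collinear q p)).card = t + 1 := by
    intro p hp
    rw [mem_Mset] at hp
    have heq : (nbrs hGQ x).filter (fun q => S.Collinear q p) = cnbrs hGQ x p := by
      ext a
      simp only [Finset.mem_filter, mem_nbrs, mem_cnbrs]
      exact ⟨fun h => ⟨h.1, col_symm h.2⟩, fun h => ⟨h.1, col_symm h.2⟩⟩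
    rw [heq, card_cnbrs hGQ (Ne.symm hp.1) hp.2]
  rw [Finset.sum_congr rfl col, Finset.sum_congr rfl row, Finset.sum_const,
    Finset.sum_const, card_nbrs, smul_eq_mul, smul_eq_mul] at key
  have ht1 : t + 1 ≠ 0 := by omega
  have : (Mset hGQ x).card * (t + 1) = (4 * t) * (t + 1) := by
    rw [mul_comm (Mset hGQ x).card] at key ⊢
    rw [key]; ring
  exact Nat.eq_of_mul_eq_mul_right (by omega) this

end GQaux
end Part2
section Part3
namespace GQaux

open SlimPLS

variable {P : Type*} {S : SlimPLS P} {t : ℕ} {R : Type*} [Group R] {ρ : S.Rep R}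

theorem double_count' {α β : Type*} (A : Finset α) (B : Finset β) (adj : α → β → Prop) :
    ∑ a ∈ A, (B.filter (fun b => adj a b)).card
      = ∑ b ∈ B, (A.filter (fun a => adj a b)).card := by
  simp only [Finset.card_filter]
  exact Finset.sum_comm

theorem offDiag_filter {α : Type*} (s : Finset α) (A : α → Prop) :
    (s.filter A).offDiag = s.offDiag.filter (fun q => A q.1 ∧ A q.2) := by
  ext ⟨u, v⟩
  simp only [Finset.mem_offDiag, Finset.mem_filter]
  tauto

theorem star_ne_star {u v w : P} (h1 : S.Collinear u v) (h2 : S.Collinear u w)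
    (hne : v ≠ w) : star S u v ≠ star S u w := by
  intro he
  have hl : lineOf S u v = lineOf S u w := by
    refine S.unique_line _ (lineOf_mem_lines h1) _ (lineOf_mem_lines h2) u (star S u v)
      (Ne.symm (star_ne_left h1)) (mem_lineOf_left h1) (star_mem h1) (mem_lineOf_left h2)
      (he ▸ star_mem h2)
  have hw : w ∈ lineOf S u v := hl ▸ mem_lineOf_right h2
  rcases (mem_lineOf_iff h1).1 hw with rfl | rfl | rfl
  · exact h2.1 rfl
  · exact hne rfl
  · exact star_ne_right h2 he.symm

variable {x y z : P}

theorem hset_center (hGQ : S.IsGQ t) (hf : Function.Injective ρ.r) (h : HSet S ρ x y z) {u : P} (h1 : S.Collinear x u) (h2 : S.Collinear y u) :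
    S.Collinear z u :=
  transfer hGQ hf (h.rot hf) (lineOf_mem_lines h1) (mem_lineOf_left h1)
    (mem_lineOf_right h1) h2

theorem hset_arc (hGQ : S.IsGQ t) (h : HSet S ρ x y z) {u u' : P} (hu : u ∈ cnbrs hGQ x y) (hu' : u' ∈ cnbrs hGQ x y)
    (hne : u ≠ u') : ¬ S.Collinear u u' := by
  rw [mem_cnbrs] at hu hu'
  intro hc
  have hx : x ∈ lineOf S u u' := no_triangle hGQ hc hu.1 hu'.1
  have hy : y ∈ lineOf S u u' := no_triangle hGQ hc hu.2 hu'.2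
  have hx' : x = star S u u' := by
    rcases (mem_lineOf_iff hc).1 hx with rfl | rfl | rfl
    · exact absurd rfl hu.1.1
    · exact absurd rfl hu'.1.1
    · rfl
  have hy' : y = star S u u' := by
    rcases (mem_lineOf_iff hc).1 hy with rfl | rfl | rfl
    · exact absurd rfl hu.2.1
    · exact absurd rfl hu'.2.1
    · rfl
  exact h.hne (hx'.trans hy'.symm)

theorem t_ge_two (hGQ : S.IsGQ t) (hf : Function.Injective ρ.r) (h : HSet S ρ x y z) :
    2 ≤ t := by
  have hpos : (cnbrs hGQ x y).Nonempty := by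
    rw [← Finset.card_pos, card_cnbrs hGQ h.hne h.hncol]; omega
  obtain ⟨u, hu⟩ := hpos
  have hum := mem_cnbrs.1 hu
  have hux : S.Collinear u x := col_symm hum.1
  have huy : S.Collinear u y := col_symm hum.2
  have huz : S.Collinear u z := col_symm (hset_center hGQ hf h hum.1 hum.2)
  have hsub : ({lineOf S u x, lineOf S u y, lineOf S u z} : Finset (Finset P))
      ⊆ linesThru hGQ u := by
    intro l hl
    simp only [Finset.mem_insert, Finset.mem_singleton] at hl
    rcases hl with rfl | rfl | rfl
    · exact mem_linesThru.2 ⟨lineOf_mem_lines hux, mem_lineOf_left hux⟩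
    · exact mem_linesThru.2 ⟨lineOf_mem_lines huy, mem_lineOf_left huy⟩
    · exact mem_linesThru.2 ⟨lineOf_mem_lines huz, mem_lineOf_left huz⟩
  have hdist : ∀ (p q : P) (hp : S.Collinear u p) (hq : S.Collinear u q),
      ¬ S.Collinear p q → p ≠ q → lineOf S u p ≠ lineOf S u q := by
    intro p q hp hq hnc hne he
    exact hnc (col_of_mem (lineOf_mem_lines hp) (mem_lineOf_right hp)
      (he ▸ mem_lineOf_right hq) hne)
  have hxy' := hdist x y hux huy h.hncol h.hne
  have hxz' := hdist x z hux huz (h.ncol_xz hf) (fun he => h.ne_zx hf he.symm)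
  have hyz' := hdist y z huy huz (h.ncol_yz hf) (fun he => h.ne_zy hf he.symm)
  have hcard3 : ({lineOf S u x, lineOf S u y, lineOf S u z} : Finset (Finset P)).card = 3 := by
    rw [Finset.card_insert_of_notMem, Finset.card_insert_of_notMem, Finset.card_singleton]
    · simp only [Finset.mem_singleton]; exact hyz'
    · simp only [Finset.mem_insert, Finset.mem_singleton]
      push_neg
      exact ⟨hxy', hxz'⟩
  have := Finset.card_le_card hsub
  rw [hcard3, card_linesThru] at this
  omega

/-- points noncollinear with and distinct from all of x, y, z -/
theorem mem_DDset (hGQ : S.IsGQ t) {x y z p : P} :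
    p ∈ (Mset hGQ x).filter
      (fun p => (p ≠ y ∧ ¬ S.Collinear y p) ∧ (p ≠ z ∧ ¬ S.Collinear z p))
    ↔ (p ≠ x ∧ ¬ S.Collinear x p) ∧ (p ≠ y ∧ ¬ S.Collinear y p)
      ∧ (p ≠ z ∧ ¬ S.Collinear z p) := by
  rw [Finset.mem_filter, mem_Mset, and_assoc]

end GQaux
end Part3
section Part3b
namespace GQaux

open SlimPLS

variable {P : Type*} {S : SlimPLS P} {t : ℕ} {R : Type*} [Group R] {ρ : S.Rep R}
variable {x y z : P}

theorem hset_cnbrs_xz (hGQ : S.IsGQ t) (hf : Function.Injective ρ.r) (h : HSet S ρ x y z) :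
    cnbrs hGQ x z = cnbrs hGQ x y := by
  refine (Finset.eq_of_subset_of_card_le ?_ ?_).symm
  · intro u hu
    rw [mem_cnbrs] at hu ⊢
    exact ⟨hu.1, hset_center hGQ hf h hu.1 hu.2⟩
  · rw [card_cnbrs hGQ h.hne h.hncol,
      card_cnbrs hGQ (fun he => (h.ne_zx hf) he.symm) (h.ncol_xz hf)]

theorem hset_cnbrs_yz (hGQ : S.IsGQ t) (hf : Function.Injective ρ.r) (h : HSet S ρ x y z) :
    cnbrs hGQ y z = cnbrs hGQ x y := by
  refine (Finset.eq_of_subset_of_card_le ?_ ?_).symm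
  · intro u hu
    rw [mem_cnbrs] at hu ⊢
    exact ⟨hu.2, hset_center hGQ hf h hu.1 hu.2⟩
  · rw [card_cnbrs hGQ h.hne h.hncol,
      card_cnbrs hGQ (fun he => (h.ne_zy hf) he.symm) (h.ncol_yz hf)]

theorem card_DDset (hGQ : S.IsGQ t) (hf : Function.Injective ρ.r) (h : HSet S ρ x y z) :
    ((Mset hGQ x).filter
      (fun p => (p ≠ y ∧ ¬ S.Collinear y p) ∧ (p ≠ z ∧ ¬ S.Collinear z p))).card
      = 2 * t - 4 := by
  have hxy := h.hncol
  have hyx : ¬ S.Collinear y x := fun hc => hxy (col_symm hc)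
  -- step 1 : card of Df1
  have split1 := Finset.card_filter_add_card_filter_not
    (s := Mset hGQ x) (p := fun p => p ≠ y ∧ ¬ S.Collinear y p)
  have neg1 : (Mset hGQ x).filter (fun p => ¬(p ≠ y ∧ ¬ S.Collinear y p))
      = insert y ((nbrs hGQ y).filter (fun p => p ≠ x ∧ ¬ S.Collinear x p)) := by
    ext p
    simp only [Finset.mem_filter, mem_Mset, mem_nbrs, Finset.mem_insert, not_and, not_not,
      ne_eq]
    constructor
    · rintro ⟨⟨hpx, hpcx⟩, hbad⟩
      by_cases hpy : p = y
      · exact Or.inl hpy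
      · exact Or.inr ⟨hbad hpy, hpx, hpcx⟩
    · rintro (rfl | ⟨hyp, hpx, hpcx⟩)
      · exact ⟨⟨Ne.symm h.hne, hxy⟩, fun hne' => absurd rfl hne'⟩
      · exact ⟨⟨hpx, hpcx⟩, fun _ => hyp⟩
  have hy_notmem : y ∉ (nbrs hGQ y).filter (fun p => p ≠ x ∧ ¬ S.Collinear x p) := by
    simp only [Finset.mem_filter, mem_nbrs]
    exact fun hc => not_col_self y hc.1
  have hcnyM : ((nbrs hGQ y).filter (fun p => p ≠ x ∧ ¬ S.Collinear x p)).card = t + 1 := by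
    have split := Finset.card_filter_add_card_filter_not
      (s := nbrs hGQ y) (p := fun p => p ≠ x ∧ ¬ S.Collinear x p)
    have hneg : (nbrs hGQ y).filter (fun p => ¬(p ≠ x ∧ ¬ S.Collinear x p))
        = cnbrs hGQ x y := by
      ext p
      simp only [Finset.mem_filter, mem_nbrs, mem_cnbrs, not_and, not_not, ne_eq]
      constructor
      · rintro ⟨hyp, hbad⟩
        by_cases hpx : p = x
        · exact absurd (hpx ▸ hyp) hyx
        · exact ⟨hbad hpx, hyp⟩
      · rintro ⟨hxp, hyp⟩
        exact ⟨hyp, fun _ => hxp⟩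
    rw [hneg, card_cnbrs hGQ h.hne h.hncol, card_nbrs] at split
    omega
  have hcard_neg1 : ((Mset hGQ x).filter (fun p => ¬(p ≠ y ∧ ¬ S.Collinear y p))).card
      = t + 2 := by
    rw [neg1, Finset.card_insert_of_notMem hy_notmem, hcnyM]
  -- step 2 : split Df1 by the z-condition
  have hsplit2 := Finset.card_filter_add_card_filter_not
    (s := (Mset hGQ x).filter (fun p => p ≠ y ∧ ¬ S.Collinear y p))
    (p := fun p => p ≠ z ∧ ¬ S.Collinear z p)
  have neg2 : ((Mset hGQ x).filter (fun p => p ≠ y ∧ ¬ S.Collinear y p)).filter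
        (fun p => ¬(p ≠ z ∧ ¬ S.Collinear z p))
      = insert z ((nbrs hGQ z).filter
        (fun p => (p ≠ x ∧ ¬ S.Collinear x p) ∧ (p ≠ y ∧ ¬ S.Collinear y p))) := by
    ext p
    simp only [Finset.mem_filter, mem_Mset, mem_nbrs, Finset.mem_insert, not_and, not_not,
      ne_eq]
    constructor
    · rintro ⟨⟨⟨hpx, hpcx⟩, hpy, hpcy⟩, hbad⟩
      by_cases hpz : p = z
      · exact Or.inl hpz
      · exact Or.inr ⟨hbad hpz, ⟨hpx, hpcx⟩, hpy, hpcy⟩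
    · rintro (rfl | ⟨hzp, ⟨hpx, hpcx⟩, hpy, hpcy⟩)
      · exact ⟨⟨⟨h.ne_zx hf, h.ncol_xz hf⟩, h.ne_zy hf, h.ncol_yz hf⟩,
          fun hne' => absurd rfl hne'⟩
      · exact ⟨⟨⟨hpx, hpcx⟩, hpy, hpcy⟩, fun _ => hzp⟩
  have hz_notmem : z ∉ (nbrs hGQ z).filter
      (fun p => (p ≠ x ∧ ¬ S.Collinear x p) ∧ (p ≠ y ∧ ¬ S.Collinear y p)) := by
    simp only [Finset.mem_filter, mem_nbrs]
    exact fun hc => not_col_self z hc.1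
  have hcnzM : ((nbrs hGQ z).filter
      (fun p => (p ≠ x ∧ ¬ S.Collinear x p) ∧ (p ≠ y ∧ ¬ S.Collinear y p))).card = t + 1 := by
    have split := Finset.card_filter_add_card_filter_not
      (s := nbrs hGQ z)
      (p := fun p => (p ≠ x ∧ ¬ S.Collinear x p) ∧ (p ≠ y ∧ ¬ S.Collinear y p))
    have hneg : (nbrs hGQ z).filter
        (fun p => ¬((p ≠ x ∧ ¬ S.Collinear x p) ∧ (p ≠ y ∧ ¬ S.Collinear y p)))
        = cnbrs hGQ x y := by
      ext p
      simp only [Finset.mem_filter, mem_nbrs, mem_cnbrs, ne_eq]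
      constructor
      · rintro ⟨hzp, hbad⟩
        by_cases hx1 : S.Collinear x p
        · have : p ∈ cnbrs hGQ x z := mem_cnbrs.2 ⟨hx1, hzp⟩
          rw [hset_cnbrs_xz hGQ hf h, mem_cnbrs] at this
          exact this
        by_cases hy1 : S.Collinear y p
        · have : p ∈ cnbrs hGQ y z := mem_cnbrs.2 ⟨hy1, hzp⟩
          rw [hset_cnbrs_yz hGQ hf h, mem_cnbrs] at this
          exact this
        exfalso
        apply hbad
        refine ⟨⟨fun he => (h.ncol_xz hf) (col_symm (he ▸ hzp)), hx1⟩,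
          fun he => (h.ncol_yz hf) (col_symm (he ▸ hzp)), hy1⟩
      · rintro ⟨hxp, hyp⟩
        refine ⟨hset_center hGQ hf h hxp hyp, fun hb => hb.1.2 hxp⟩
    rw [hneg, card_cnbrs hGQ h.hne h.hncol, card_nbrs] at split
    omega
  have hcard_neg2 : (((Mset hGQ x).filter (fun p => p ≠ y ∧ ¬ S.Collinear y p)).filter
      (fun p => ¬(p ≠ z ∧ ¬ S.Collinear z p))).card = t + 2 := by
    rw [neg2, Finset.card_insert_of_notMem hz_notmem, hcnzM]
  have hM := card_Mset hGQ x
  have ht2 := t_ge_two hGQ hf h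
  have hff : ((Mset hGQ x).filter (fun p => p ≠ y ∧ ¬ S.Collinear y p)).filter
      (fun p => p ≠ z ∧ ¬ S.Collinear z p)
      = (Mset hGQ x).filter
        (fun p => (p ≠ y ∧ ¬ S.Collinear y p) ∧ (p ≠ z ∧ ¬ S.Collinear z p)) :=
    Finset.filter_filter _ _ _
  rw [← hff]
  omega

end GQaux
end Part3b
section Part3c
namespace GQaux

open SlimPLS

variable {P : Type*} {S : SlimPLS P} {t : ℕ} {R : Type*} [Group R] {ρ : S.Rep R}
variable {x y z : P}

theorem row_count (hGQ : S.IsGQ t) (hf : Function.Injective ρ.r) (h : HSet S ρ x y z)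
    {u : P} (hu : u ∈ cnbrs hGQ x y) :
    (((Mset hGQ x).filter
        (fun p => (p ≠ y ∧ ¬ S.Collinear y p) ∧ (p ≠ z ∧ ¬ S.Collinear z p))).filter
      (fun p => S.Collinear u p)).card = 2 * t - 4 := by
  have hum := mem_cnbrs.1 hu
  have hux : S.Collinear u x := col_symm hum.1
  have huy : S.Collinear u y := col_symm hum.2
  have huz : S.Collinear u z := col_symm (hset_center hGQ hf h hum.1 hum.2)
  have heq : ((Mset hGQ x).filter
        (fun p => (p ≠ y ∧ ¬ S.Collinear y p) ∧ (p ≠ z ∧ ¬ S.Collinear z p))).filter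
          (fun p => S.Collinear u p)
      = (nbrs hGQ u).filter (fun p => (p ≠ x ∧ ¬ S.Collinear x p) ∧
          (p ≠ y ∧ ¬ S.Collinear y p) ∧ (p ≠ z ∧ ¬ S.Collinear z p)) := by
    ext p
    rw [Finset.mem_filter, mem_DDset hGQ, Finset.mem_filter, mem_nbrs]
    tauto
  rw [heq]
  have split := Finset.card_filter_add_card_filter_not
    (s := nbrs hGQ u) (p := fun p => (p ≠ x ∧ ¬ S.Collinear x p) ∧
      (p ≠ y ∧ ¬ S.Collinear y p) ∧ (p ≠ z ∧ ¬ S.Collinear z p))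
  have hneg : (nbrs hGQ u).filter (fun p => ¬((p ≠ x ∧ ¬ S.Collinear x p) ∧
      (p ≠ y ∧ ¬ S.Collinear y p) ∧ (p ≠ z ∧ ¬ S.Collinear z p)))
      = {x, star S u x, y, star S u y, z, star S u z} := by
    ext p
    simp only [Finset.mem_filter, mem_nbrs, Finset.mem_insert, Finset.mem_singleton]
    constructor
    · rintro ⟨hup, hbad⟩
      have hpu : p ≠ u := fun he => (not_col_self u) (he ▸ hup)
      by_cases h1 : p = x
      · exact Or.inl h1
      by_cases h4 : S.Collinear x p
      · have hmem := no_triangle hGQ hux (col_symm hup) (col_symm h4)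
        rcases (mem_lineOf_iff hux).1 hmem with he | he | he
        · exact absurd he hpu
        · exact Or.inl he
        · exact Or.inr (Or.inl he)
      by_cases h2 : p = y
      · exact Or.inr (Or.inr (Or.inl h2))
      by_cases h5 : S.Collinear y p
      · have hmem := no_triangle hGQ huy (col_symm hup) (col_symm h5)
        rcases (mem_lineOf_iff huy).1 hmem with he | he | he
        · exact absurd he hpu
        · exact Or.inr (Or.inr (Or.inl he))
        · exact Or.inr (Or.inr (Or.inr (Or.inl he)))
      by_cases h3 : p = z
      · exact Or.inr (Or.inr (Or.inr (Or.inr (Or.inl h3))))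
      by_cases h6 : S.Collinear z p
      · have hmem := no_triangle hGQ huz (col_symm hup) (col_symm h6)
        rcases (mem_lineOf_iff huz).1 hmem with he | he | he
        · exact absurd he hpu
        · exact Or.inr (Or.inr (Or.inr (Or.inr (Or.inl he))))
        · exact Or.inr (Or.inr (Or.inr (Or.inr (Or.inr he))))
      · exact absurd ⟨⟨h1, h4⟩, ⟨h2, h5⟩, ⟨h3, h6⟩⟩ hbad
    · rintro (rfl | rfl | rfl | rfl | rfl | rfl)
      · exact ⟨hux, fun hb => hb.1.1 rfl⟩
      · exact ⟨col_star_left hux, fun hb => hb.1.2 (col_star_right hux)⟩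
      · exact ⟨huy, fun hb => hb.2.1.1 rfl⟩
      · exact ⟨col_star_left huy, fun hb => hb.2.1.2 (col_star_right huy)⟩
      · exact ⟨huz, fun hb => hb.2.2.1 rfl⟩
      · exact ⟨col_star_left huz, fun hb => hb.2.2.2 (col_star_right huz)⟩
  have hc6 : ({x, star S u x, y, star S u y, z, star S u z} : Finset P).card = 6 := by
    have nzc : z ≠ star S u z := fun he => star_ne_right huz he.symm
    have nbz : star S u y ≠ z := fun he => (h.ncol_yz hf) (he ▸ col_star_right huy)
    have nbc : star S u y ≠ star S u z :=
      star_ne_star huy huz (fun he => (h.ne_zy hf) he.symm)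
    have nyb : y ≠ star S u y := fun he => star_ne_right huy he.symm
    have nyz : y ≠ z := fun he => (h.ne_zy hf) he.symm
    have nyc : y ≠ star S u z := fun he => (h.ncol_yz hf) (col_symm (he ▸ col_star_right huz))
    have nay : star S u x ≠ y := fun he => h.hncol (he ▸ col_star_right hux)
    have nab : star S u x ≠ star S u y := star_ne_star hux huy h.hne
    have naz : star S u x ≠ z := fun he => (h.ncol_xz hf) (he ▸ col_star_right hux)
    have nac : star S u x ≠ star S u z :=
      star_ne_star hux huz (fun he => (h.ne_zx hf) he.symm)
    have nxa : x ≠ star S u x := fun he => star_ne_right hux he.symm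
    have nxy := h.hne
    have nxb : x ≠ star S u y := fun he => h.hncol (col_symm (he ▸ col_star_right huy))
    have nxz : x ≠ z := fun he => (h.ne_zx hf) he.symm
    have nxc : x ≠ star S u z := fun he => (h.ncol_xz hf) (col_symm (he ▸ col_star_right huz))
    rw [Finset.card_insert_of_notMem, Finset.card_insert_of_notMem,
      Finset.card_insert_of_notMem, Finset.card_insert_of_notMem,
      Finset.card_insert_of_notMem, Finset.card_singleton]
    · simp only [Finset.mem_singleton]; exact nzc
    · simp only [Finset.mem_insert, Finset.mem_singleton]; push_neg
      exact ⟨nbz, nbc⟩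
    · simp only [Finset.mem_insert, Finset.mem_singleton]; push_neg
      exact ⟨nyb, nyz, nyc⟩
    · simp only [Finset.mem_insert, Finset.mem_singleton]; push_neg
      exact ⟨nay, nab, naz, nac⟩
    · simp only [Finset.mem_insert, Finset.mem_singleton]; push_neg
      exact ⟨nxa, nxy, nxb, nxz, nxc⟩
  rw [hneg, hc6, card_nbrs] at split
  omega

theorem pair_count (hGQ : S.IsGQ t) (hf : Function.Injective ρ.r) (h : HSet S ρ x y z)
    {u u' : P} (hu : u ∈ cnbrs hGQ x y) (hu' : u' ∈ cnbrs hGQ x y) (hne : u ≠ u') :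
    (((Mset hGQ x).filter
        (fun p => (p ≠ y ∧ ¬ S.Collinear y p) ∧ (p ≠ z ∧ ¬ S.Collinear z p))).filter
      (fun p => S.Collinear u p ∧ S.Collinear u' p)).card = t - 2 := by
  have hum := mem_cnbrs.1 hu
  have hum' := mem_cnbrs.1 hu'
  have hux : S.Collinear u x := col_symm hum.1
  have huy : S.Collinear u y := col_symm hum.2
  have huz : S.Collinear u z := col_symm (hset_center hGQ hf h hum.1 hum.2)
  have hux' : S.Collinear u' x := col_symm hum'.1
  have huy' : S.Collinear u' y := col_symm hum'.2
  have huz' : S.Collinear u' z := col_symm (hset_center hGQ hf h hum'.1 hum'.2)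
  have harc : ¬ S.Collinear u u' := hset_arc hGQ h hu hu' hne
  -- elimination: a common neighbour of u,u' collinear with x (resp. y,z) is x (resp. y,z)
  have helim : ∀ w : P, S.Collinear u w → S.Collinear u' w →
      ∀ v : P, S.Collinear u v → S.Collinear u' v → S.Collinear v w → w = v := by
    intro w hw hw' v hv hv' hvw
    have hmem := no_triangle hGQ hv (col_symm hw) (col_symm hvw)
    rcases (mem_lineOf_iff hv).1 hmem with he | he | he
    · exact absurd (he ▸ hw) (not_col_self u)
    · exact he
    · exfalso
      have := (star_not_col hGQ hv hv' harc hne).2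
      rw [← he] at this
      exact this (col_symm hw')
  have heq : ((Mset hGQ x).filter
        (fun p => (p ≠ y ∧ ¬ S.Collinear y p) ∧ (p ≠ z ∧ ¬ S.Collinear z p))).filter
          (fun p => S.Collinear u p ∧ S.Collinear u' p)
      = (cnbrs hGQ u u') \ {x, y, z} := by
    ext p
    rw [Finset.mem_filter, mem_DDset hGQ, Finset.mem_sdiff, mem_cnbrs]
    simp only [Finset.mem_insert, Finset.mem_singleton]
    constructor
    · rintro ⟨⟨⟨hpx, -⟩, ⟨hpy, -⟩, ⟨hpz, -⟩⟩, hcu, hcu'⟩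
      exact ⟨⟨hcu, hcu'⟩, by tauto⟩
    · rintro ⟨⟨hcu, hcu'⟩, hnot⟩
      push_neg at hnot
      refine ⟨⟨⟨hnot.1, fun hc => hnot.1 (helim p hcu hcu' x hux hux' hc)⟩,
        ⟨hnot.2.1, fun hc => hnot.2.1 (helim p hcu hcu' y huy huy' hc)⟩,
        ⟨hnot.2.2, fun hc => hnot.2.2 (helim p hcu hcu' z huz huz' hc)⟩⟩,
        hcu, hcu'⟩
  rw [heq, Finset.card_sdiff_of_subset]
  · have h3 : ({x, y, z} : Finset P).card = 3 := by
      rw [Finset.card_insert_of_notMem, Finset.card_insert_of_notMem,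
        Finset.card_singleton]
      · simp only [Finset.mem_singleton]
        exact fun he => (h.ne_zy hf) he.symm
      · simp only [Finset.mem_insert, Finset.mem_singleton]; push_neg
        exact ⟨h.hne, fun he => (h.ne_zx hf) he.symm⟩
    rw [h3, card_cnbrs hGQ hne harc]
    omega
  · intro w hw
    simp only [Finset.mem_insert, Finset.mem_singleton] at hw
    rw [mem_cnbrs]
    rcases hw with rfl | rfl | rfl
    · exact ⟨hux, hux'⟩
    · exact ⟨huy, huy'⟩
    · exact ⟨huz, huz'⟩

end GQaux
end Part3c
section Part3d
namespace GQaux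

open SlimPLS

variable {P : Type*} {S : SlimPLS P} {t : ℕ} {R : Type*} [Group R] {ρ : S.Rep R}
variable {x y z : P}

theorem nat_sq_split (m : ℕ) : m ^ 2 = (m * m - m) + m := by
  rcases Nat.eq_zero_or_pos m with rfl | hpos
  · rfl
  · have : m ≤ m * m := Nat.le_mul_of_pos_left m hpos
    rw [pow_two]
    omega

theorem t_eq_two (hGQ : S.IsGQ t) (hf : Function.Injective ρ.r) (h : HSet S ρ x y z) :
    t = 2 := by
  have ht2 := t_ge_two hGQ hf h
  by_contra hne2
  have ht3 : 3 ≤ t := by omega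
  set DD := (Mset hGQ x).filter
    (fun p => (p ≠ y ∧ ¬ S.Collinear y p) ∧ (p ≠ z ∧ ¬ S.Collinear z p)) with hDD
  set Hf := cnbrs hGQ x y with hHf
  have hcardH : Hf.card = t + 1 := card_cnbrs hGQ h.hne h.hncol
  have hcardDD : DD.card = 2 * t - 4 := card_DDset hGQ hf h
  -- sum of degrees
  have hsum1 : ∑ p ∈ DD, (Hf.filter (fun u => S.Collinear u p)).card
      = (t + 1) * (2 * t - 4) := by
    rw [← double_count' Hf DD (fun u p => S.Collinear u p)]
    rw [Finset.sum_congr rfl (fun u hu => row_count hGQ hf h hu), Finset.sum_const,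
      hcardH, smul_eq_mul]
  -- sum of pair-degrees
  have hsum2 : ∑ p ∈ DD, ((Hf.filter (fun u => S.Collinear u p)).card *
        (Hf.filter (fun u => S.Collinear u p)).card
        - (Hf.filter (fun u => S.Collinear u p)).card)
      = ((t + 1) * t) * (t - 2) := by
    have e1 : ∀ p ∈ DD, (Hf.filter (fun u => S.Collinear u p)).card *
        (Hf.filter (fun u => S.Collinear u p)).card
        - (Hf.filter (fun u => S.Collinear u p)).card
        = ((Hf.offDiag).filter (fun q => S.Collinear q.1 p ∧ S.Collinear q.2 p)).card := by
      intro p _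
      rw [← offDiag_filter Hf (fun u => S.Collinear u p), Finset.offDiag_card]
    have hswap : ∑ p ∈ DD,
        (Hf.offDiag.filter (fun q => S.Collinear q.1 p ∧ S.Collinear q.2 p)).card
        = ∑ q ∈ Hf.offDiag,
          (DD.filter (fun p => S.Collinear q.1 p ∧ S.Collinear q.2 p)).card := by
      simp only [Finset.card_filter]
      exact Finset.sum_comm
    rw [Finset.sum_congr rfl e1, hswap]
    have e2 : ∀ q ∈ Hf.offDiag,
        (DD.filter (fun p => S.Collinear q.1 p ∧ S.Collinear q.2 p)).card = t - 2 := by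
      intro q hq
      rw [Finset.mem_offDiag] at hq
      exact pair_count hGQ hf h hq.1 hq.2.1 hq.2.2
    rw [Finset.sum_congr rfl e2, Finset.sum_const, Finset.offDiag_card, hcardH, smul_eq_mul]
    have e5 : (t + 1) * (t + 1) - (t + 1) = (t + 1) * t := by
      have : (t + 1) * (t + 1) = (t + 1) * t + (t + 1) := by ring
      omega
    rw [e5]
  -- Cauchy–Schwarz
  have hCS := sq_sum_le_card_mul_sum_sq (s := DD)
    (f := fun p => ((Hf.filter (fun u => S.Collinear u p)).card : ℕ))
  have hsq : ∑ p ∈ DD, ((Hf.filter (fun u => S.Collinear u p)).card) ^ 2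
      = ((t + 1) * t) * (t - 2) + (t + 1) * (2 * t - 4) := by
    rw [Finset.sum_congr rfl (fun p _ => nat_sq_split _), Finset.sum_add_distrib, hsum2, hsum1]
  rw [hsum1, hcardDD, hsq] at hCS
  obtain ⟨s, rfl⟩ : ∃ s, t = s + 3 := ⟨t - 3, by omega⟩
  have e3 : 2 * (s + 3) - 4 = 2 * s + 2 := by omega
  have e4 : (s + 3) - 2 = s + 1 := by omega
  rw [e3, e4] at hCS
  nlinarith [hCS, sq_nonneg s]

end GQaux
end Part3d
section Part4a
namespace GQaux

open SlimPLS

variable {P : Type*} {S : SlimPLS P} {R : Type*} [Group R] {ρ : S.Rep R}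

theorem comm_of_mul {p q w : P} (hw : ρ.r p * ρ.r q = ρ.r w) :
    ρ.r p * ρ.r q = ρ.r q * ρ.r p := by
  have h2 : (ρ.r p * ρ.r q) * (ρ.r p * ρ.r q) = 1 := by rw [hw]; exact rr_sq ρ w
  calc ρ.r p * ρ.r q = (ρ.r p * ρ.r q)⁻¹ := (inv_eq_of_mul_eq_one_right h2).symm
    _ = (ρ.r q)⁻¹ * (ρ.r p)⁻¹ := mul_inv_rev _ _
    _ = ρ.r q * ρ.r p := by rw [rr_inv, rr_inv]

theorem swap_left {a b : R} (h : a * b = b * a) (c : R) : b * (a * c) = a * (b * c) := by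
  rw [← mul_assoc, ← h, mul_assoc]

theorem mul4 (A B C D A' B' C' D' : R)
    (h1 : A' * B = B * A') (h2 : A' * C = C * A') (h3 : A' * D = D * A')
    (h4 : B' * C = C * B') (h5 : B' * D = D * B') (h6 : C' * D = D * C') :
    (A * B * C * D) * (A' * B' * C' * D') = (A * A') * (B * B') * (C * C') * (D * D') := by
  simp only [mul_assoc]
  rw [swap_left h3, swap_left h2, swap_left h1, swap_left h5, swap_left h4, swap_left h6]

theorem cond_merge (g : R) (hg : g * g = 1) (a b : Bool) :
    (cond a g 1) * (cond b g 1) = cond (xor a b) g 1 := by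
  cases a <;> cases b <;> simp [hg]

theorem cond_comm {g h : R} (hc : g * h = h * g) (a b : Bool) :
    (cond a g 1) * (cond b h 1) = (cond b h 1) * (cond a g 1) := by
  cases a <;> cases b <;> simp [hc]

/-- in a GQ of order (2,2), the neighbourhood of a point with three specified
pairwise-noncollinear neighbours is enumerated. -/
theorem nbrs_enum {t : ℕ} (hGQ : S.IsGQ t) (ht : t = 2) {w u0 u1 u2 : P}
    (h0 : S.Collinear w u0) (h1 : S.Collinear w u1) (h2 : S.Collinear w u2)
    (hne01 : u0 ≠ u1) (hne02 : u0 ≠ u2) (hne12 : u1 ≠ u2)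
    (harc01 : ¬ S.Collinear u0 u1) (harc02 : ¬ S.Collinear u0 u2)
    (harc12 : ¬ S.Collinear u1 u2) :
    nbrs hGQ w = {u0, u1, u2, star S w u0, star S w u1, star S w u2} := by
  have hstar_ne : ∀ (ui uj : P), S.Collinear w ui → S.Collinear w uj →
      ¬ S.Collinear ui uj → ui ≠ uj → ui ≠ star S w uj := by
    intro ui uj hi hj harc hne he
    apply harc
    refine col_of_mem (lineOf_mem_lines hj) ?_ (mem_lineOf_right hj) hne
    rw [he]
    exact star_mem hj
  have harc10 : ¬ S.Collinear u1 u0 := fun hc => harc01 (col_symm hc)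
  have harc20 : ¬ S.Collinear u2 u0 := fun hc => harc02 (col_symm hc)
  have harc21 : ¬ S.Collinear u2 u1 := fun hc => harc12 (col_symm hc)
  refine (Finset.eq_of_subset_of_card_le ?_ ?_).symm
  · intro p hp
    rw [mem_nbrs]
    simp only [Finset.mem_insert, Finset.mem_singleton] at hp
    rcases hp with rfl | rfl | rfl | rfl | rfl | rfl
    exacts [h0, h1, h2, col_star_left h0, col_star_left h1, col_star_left h2]
  · have hc6 : ({u0, u1, u2, star S w u0, star S w u1, star S w u2} : Finset P).card = 6 := by
      rw [Finset.card_insert_of_notMem, Finset.card_insert_of_notMem,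
        Finset.card_insert_of_notMem, Finset.card_insert_of_notMem,
        Finset.card_insert_of_notMem, Finset.card_singleton]
      · simp only [Finset.mem_singleton]
        exact star_ne_star h1 h2 hne12
      · simp only [Finset.mem_insert, Finset.mem_singleton]; push_neg
        exact ⟨star_ne_star h0 h1 hne01, star_ne_star h0 h2 hne02⟩
      · simp only [Finset.mem_insert, Finset.mem_singleton]; push_neg
        exact ⟨hstar_ne u2 u0 h2 h0 harc20 hne02.symm,
          hstar_ne u2 u1 h2 h1 harc21 hne12.symm,
          fun he => star_ne_right h2 he.symm⟩
      · simp only [Finset.mem_insert, Finset.mem_singleton]; push_neg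
        exact ⟨hne12, hstar_ne u1 u0 h1 h0 harc10 hne01.symm,
          fun he => star_ne_right h1 he.symm, hstar_ne u1 u2 h1 h2 harc12 hne12⟩
      · simp only [Finset.mem_insert, Finset.mem_singleton]; push_neg
        exact ⟨hne01, hne02, fun he => star_ne_right h0 he.symm,
          hstar_ne u0 u1 h0 h1 harc01 hne01, hstar_ne u0 u2 h0 h2 harc02 hne02⟩
    rw [hc6, card_nbrs, ht]

end GQaux
end Part4a
section Part4b
namespace GQaux

variable {R : Type*} [Group R]

def quadProd (g1 g2 g3 g4 : R) (v : Bool × Bool × Bool × Bool) : R :=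
  (cond v.1 g1 1) * (cond v.2.1 g2 1) * (cond v.2.2.1 g3 1) * (cond v.2.2.2 g4 1)

theorem quadProd_mul {g1 g2 g3 g4 : R}
    (h12 : g1 * g2 = g2 * g1) (h13 : g1 * g3 = g3 * g1) (h14 : g1 * g4 = g4 * g1)
    (h23 : g2 * g3 = g3 * g2) (h24 : g2 * g4 = g4 * g2) (h34 : g3 * g4 = g4 * g3)
    (s1 : g1 * g1 = 1) (s2 : g2 * g2 = 1) (s3 : g3 * g3 = 1) (s4 : g4 * g4 = 1)
    (v w : Bool × Bool × Bool × Bool) :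
    quadProd g1 g2 g3 g4 v * quadProd g1 g2 g3 g4 w
      = quadProd g1 g2 g3 g4
        (xor v.1 w.1, xor v.2.1 w.2.1, xor v.2.2.1 w.2.2.1, xor v.2.2.2 w.2.2.2) := by
  unfold quadProd
  rw [mul4 _ _ _ _ _ _ _ _ (cond_comm h12 w.1 v.2.1) (cond_comm h13 w.1 v.2.2.1)
    (cond_comm h14 w.1 v.2.2.2) (cond_comm h23 w.2.1 v.2.2.1)
    (cond_comm h24 w.2.1 v.2.2.2) (cond_comm h34 w.2.2.1 v.2.2.2),
    cond_merge g1 s1, cond_merge g2 s2, cond_merge g3 s3, cond_merge g4 s4]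

theorem quadProd_zero (g1 g2 g3 g4 : R) :
    quadProd g1 g2 g3 g4 (false, false, false, false) = 1 := by
  simp [quadProd]

end GQaux
end Part4b
section Part4c
namespace GQaux

open SlimPLS

variable {P : Type*} {S : SlimPLS P} {t : ℕ} {R : Type*} [Group R] {ρ : S.Rep R}
variable {x y z : P}

theorem hset_conclusion (hGQ : S.IsGQ t) (hf : Function.Injective ρ.r)
    (h : HSet S ρ x y z) : t = 2 ∧ Nat.card R = 2 ^ 4 := by
  have ht := t_eq_two hGQ hf h
  subst ht
  refine ⟨rfl, ?_⟩
  -- the three common neighbours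
  have hcardH : (cnbrs hGQ x y).card = 3 := card_cnbrs hGQ h.hne h.hncol
  obtain ⟨u0, u1, u2, hne01, hne02, hne12, hHf⟩ := Finset.card_eq_three.1 hcardH
  have hu0 : u0 ∈ cnbrs hGQ x y := by rw [hHf]; simp
  have hu1 : u1 ∈ cnbrs hGQ x y := by rw [hHf]; simp
  have hu2 : u2 ∈ cnbrs hGQ x y := by rw [hHf]; simp
  have hm0 := mem_cnbrs.1 hu0
  have hm1 := mem_cnbrs.1 hu1
  have hm2 := mem_cnbrs.1 hu2
  have hxu0 : S.Collinear x u0 := hm0.1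
  have hxu1 : S.Collinear x u1 := hm1.1
  have hxu2 : S.Collinear x u2 := hm2.1
  have hyu0 : S.Collinear y u0 := hm0.2
  have hyu1 : S.Collinear y u1 := hm1.2
  have hyu2 : S.Collinear y u2 := hm2.2
  have hzu0 : S.Collinear z u0 := hset_center hGQ hf h hxu0 hyu0
  have hzu1 : S.Collinear z u1 := hset_center hGQ hf h hxu1 hyu1
  have hzu2 : S.Collinear z u2 := hset_center hGQ hf h hxu2 hyu2
  have harc01 : ¬ S.Collinear u0 u1 := hset_arc hGQ h hu0 hu1 hne01
  have harc02 : ¬ S.Collinear u0 u2 := hset_arc hGQ h hu0 hu2 hne02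
  have harc12 : ¬ S.Collinear u1 u2 := hset_arc hGQ h hu1 hu2 hne12
  have hne_xy := h.hne
  have hne_xz : x ≠ z := fun he => (h.ne_zx hf) he.symm
  have hne_yz : y ≠ z := fun he => (h.ne_zy hf) he.symm
  have hnc_xz := h.ncol_xz hf
  have hnc_yz := h.ncol_yz hf
  have hnc_yx : ¬ S.Collinear y x := fun hc => h.hncol (col_symm hc)
  have hnc_zx : ¬ S.Collinear z x := fun hc => hnc_xz (col_symm hc)
  have hnc_zy : ¬ S.Collinear z y := fun hc => hnc_yz (col_symm hc)
  -- the neighbourhood enumerations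
  have henx := nbrs_enum hGQ rfl hxu0 hxu1 hxu2 hne01 hne02 hne12 harc01 harc02 harc12
  have heny := nbrs_enum hGQ rfl hyu0 hyu1 hyu2 hne01 hne02 hne12 harc01 harc02 harc12
  have henz := nbrs_enum hGQ rfl hzu0 hzu1 hzu2 hne01 hne02 hne12 harc01 harc02 harc12
  set a0 := star S x u0 with ha0d
  set a1 := star S x u1 with ha1d
  set a2 := star S x u2 with ha2d
  set b0 := star S y u0 with hb0d
  set b1 := star S y u1 with hb1d
  set b2 := star S y u2 with hb2d
  set c0 := star S z u0 with hc0d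
  set c1 := star S z u1 with hc1d
  set c2 := star S z u2 with hc2d
  -- representation products on the nine lines
  have hra0 : ρ.r x * ρ.r u0 = ρ.r a0 := by rw [ha0d]; exact line_mul ρ hxu0
  have hra1 : ρ.r x * ρ.r u1 = ρ.r a1 := by rw [ha1d]; exact line_mul ρ hxu1
  have hra2 : ρ.r x * ρ.r u2 = ρ.r a2 := by rw [ha2d]; exact line_mul ρ hxu2
  have hrb0 : ρ.r y * ρ.r u0 = ρ.r b0 := by rw [hb0d]; exact line_mul ρ hyu0
  have hrb1 : ρ.r y * ρ.r u1 = ρ.r b1 := by rw [hb1d]; exact line_mul ρ hyu1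
  have hrb2 : ρ.r y * ρ.r u2 = ρ.r b2 := by rw [hb2d]; exact line_mul ρ hyu2
  have hrc0 : ρ.r z * ρ.r u0 = ρ.r c0 := by rw [hc0d]; exact line_mul ρ hzu0
  have hrc1 : ρ.r z * ρ.r u1 = ρ.r c1 := by rw [hc1d]; exact line_mul ρ hzu1
  have hrc2 : ρ.r z * ρ.r u2 = ρ.r c2 := by rw [hc2d]; exact line_mul ρ hzu2
  -- basic collinearity facts on the stars
  have hca0 : S.Collinear x a0 ∧ S.Collinear u0 a0 := ⟨col_star_left hxu0, col_star_right hxu0⟩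
  have hca1 : S.Collinear x a1 ∧ S.Collinear u1 a1 := ⟨col_star_left hxu1, col_star_right hxu1⟩
  have hca2 : S.Collinear x a2 ∧ S.Collinear u2 a2 := ⟨col_star_left hxu2, col_star_right hxu2⟩
  have hcb0 : S.Collinear y b0 ∧ S.Collinear u0 b0 := ⟨col_star_left hyu0, col_star_right hyu0⟩
  have hcb1 : S.Collinear y b1 ∧ S.Collinear u1 b1 := ⟨col_star_left hyu1, col_star_right hyu1⟩
  have hcb2 : S.Collinear y b2 ∧ S.Collinear u2 b2 := ⟨col_star_left hyu2, col_star_right hyu2⟩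
  have hcc0 : S.Collinear z c0 ∧ S.Collinear u0 c0 := ⟨col_star_left hzu0, col_star_right hzu0⟩
  have hcc1 : S.Collinear z c1 ∧ S.Collinear u1 c1 := ⟨col_star_left hzu1, col_star_right hzu1⟩
  have hcc2 : S.Collinear z c2 ∧ S.Collinear u2 c2 := ⟨col_star_left hzu2, col_star_right hzu2⟩
  -- a0 is not collinear with (nor equal to) y and z
  have hay : a0 ≠ y ∧ ¬ S.Collinear a0 y := by
    rw [ha0d]; exact star_not_col hGQ hxu0 hyu0 h.hncol hne_xy
  have haz : a0 ≠ z ∧ ¬ S.Collinear a0 z := by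
    rw [ha0d]; exact star_not_col hGQ hxu0 hzu0 hnc_xz hne_xz
  -- b1 is not collinear with (nor equal to) x and z
  have hbx : b1 ≠ x ∧ ¬ S.Collinear b1 x := by
    rw [hb1d]; exact star_not_col hGQ hyu1 hxu1 hnc_yx (Ne.symm hne_xy)
  have hbz : b1 ≠ z ∧ ¬ S.Collinear b1 z := by
    rw [hb1d]; exact star_not_col hGQ hyu1 hzu1 hnc_yz hne_yz
  -- a0 is not collinear with u1, u2
  have hsymm_a0 : a0 = star S u0 x := by rw [ha0d]; exact star_symm hxu0
  have hau1 : a0 ≠ u1 ∧ ¬ S.Collinear a0 u1 := by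
    rw [hsymm_a0]
    exact star_not_col hGQ (col_symm hxu0) (col_symm hxu1) harc01 hne01
  have hau2 : a0 ≠ u2 ∧ ¬ S.Collinear a0 u2 := by
    rw [hsymm_a0]
    exact star_not_col hGQ (col_symm hxu0) (col_symm hxu2) harc02 hne02
  -- b1 is not collinear with u0, u2
  have hsymm_b1 : b1 = star S u1 y := by rw [hb1d]; exact star_symm hyu1
  have hbu0 : b1 ≠ u0 ∧ ¬ S.Collinear b1 u0 := by
    rw [hsymm_b1]
    exact star_not_col hGQ (col_symm hyu1) (col_symm hyu0)
      (fun hc => harc01 (col_symm hc)) (Ne.symm hne01)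
  have hbu2 : b1 ≠ u2 ∧ ¬ S.Collinear b1 u2 := by
    rw [hsymm_b1]
    exact star_not_col hGQ (col_symm hyu1) (col_symm hyu2) harc12 hne12
  -- the r-based noncollinearities
  have hab0 : ¬ S.Collinear a0 b0 := by
    intro hc
    have key : ρ.r a0 * ρ.r b0 = ρ.r z := by
      rw [← hra0, ← hrb0, ← h.hmul]
      have hyu0' := line_comm ρ hyu0
      calc (ρ.r x * ρ.r u0) * (ρ.r y * ρ.r u0)
          = ρ.r x * (ρ.r u0 * ρ.r y * ρ.r u0) := by simp only [mul_assoc]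
        _ = ρ.r x * (ρ.r y * ρ.r u0 * ρ.r u0) := by rw [← hyu0']
        _ = ρ.r x * (ρ.r y * (ρ.r u0 * ρ.r u0)) := by simp only [mul_assoc]
        _ = ρ.r x * ρ.r y := by rw [rr_sq ρ u0, mul_one]
    have hst : star S a0 b0 = z := star_eq_of_mul hf hc key
    refine haz.2 (col_of_mem (lineOf_mem_lines hc) (mem_lineOf_left hc) ?_ haz.1)
    rw [← hst]; exact star_mem hc
  have ha0c0 : ¬ S.Collinear a0 c0 := by
    intro hc
    have key : ρ.r a0 * ρ.r c0 = ρ.r y := by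
      rw [← hra0, ← hrc0, ← h.xz]
      have hzu0' := line_comm ρ hzu0
      calc (ρ.r x * ρ.r u0) * (ρ.r z * ρ.r u0)
          = ρ.r x * (ρ.r u0 * ρ.r z * ρ.r u0) := by simp only [mul_assoc]
        _ = ρ.r x * (ρ.r z * ρ.r u0 * ρ.r u0) := by rw [← hzu0']
        _ = ρ.r x * (ρ.r z * (ρ.r u0 * ρ.r u0)) := by simp only [mul_assoc]
        _ = ρ.r x * ρ.r z := by rw [rr_sq ρ u0, mul_one]
    have hst : star S a0 c0 = y := star_eq_of_mul hf hc key
    refine hay.2 (col_of_mem (lineOf_mem_lines hc) (mem_lineOf_left hc) ?_ hay.1)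
    rw [← hst]; exact star_mem hc
  have hb1c1 : ¬ S.Collinear b1 c1 := by
    intro hc
    have key : ρ.r b1 * ρ.r c1 = ρ.r x := by
      rw [← hrb1, ← hrc1, ← h.yz]
      have hzu1' := line_comm ρ hzu1
      calc (ρ.r y * ρ.r u1) * (ρ.r z * ρ.r u1)
          = ρ.r y * (ρ.r u1 * ρ.r z * ρ.r u1) := by simp only [mul_assoc]
        _ = ρ.r y * (ρ.r z * ρ.r u1 * ρ.r u1) := by rw [← hzu1']
        _ = ρ.r y * (ρ.r z * (ρ.r u1 * ρ.r u1)) := by simp only [mul_assoc]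
        _ = ρ.r y * ρ.r z := by rw [rr_sq ρ u1, mul_one]
    have hst : star S b1 c1 = x := star_eq_of_mul hf hc key
    refine hbx.2 (col_of_mem (lineOf_mem_lines hc) (mem_lineOf_left hc) ?_ hbx.1)
    rw [← hst]; exact star_mem hc
  -- common neighbours of y and a0 : gives a0 ~ b1
  have hya0ne : y ≠ a0 := fun he => hay.1 he.symm
  have hya0nc : ¬ S.Collinear y a0 := fun hc => hay.2 (col_symm hc)
  have hsymm_b2 : b2 = star S u2 y := by rw [hb2d]; exact star_symm hyu2
  have hb2u0 : b2 ≠ u0 ∧ ¬ S.Collinear b2 u0 := by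
    rw [hsymm_b2]
    exact star_not_col hGQ (col_symm hyu2) (col_symm hyu0)
      (fun hc => harc02 (col_symm hc)) (Ne.symm hne02)
  have hcard_ub : ({u0, b1, b2} : Finset P).card = 3 := by
    rw [Finset.card_insert_of_notMem, Finset.card_insert_of_notMem, Finset.card_singleton]
    · simp only [Finset.mem_singleton]
      rw [hb1d, hb2d]; exact star_ne_star hyu1 hyu2 hne12
    · simp only [Finset.mem_insert, Finset.mem_singleton]; push_neg
      exact ⟨fun he => hbu0.1 he.symm, fun he => hb2u0.1 he.symm⟩
  have hset_ya0 : cnbrs hGQ y a0 = {u0, b1, b2} := by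
    refine Finset.eq_of_subset_of_card_le ?_ ?_
    · intro w hw
      obtain ⟨hyw, haw⟩ := mem_cnbrs.1 hw
      have hwny : w ∈ nbrs hGQ y := mem_nbrs.2 hyw
      rw [heny] at hwny
      simp only [Finset.mem_insert, Finset.mem_singleton] at hwny ⊢
      rcases hwny with rfl | rfl | rfl | rfl | rfl | rfl
      · exact Or.inl rfl
      · exact absurd haw hau1.2
      · exact absurd haw hau2.2
      · exact absurd haw hab0
      · exact Or.inr (Or.inl rfl)
      · exact Or.inr (Or.inr rfl)
    · rw [hcard_ub, card_cnbrs hGQ hya0ne hya0nc]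
  have hcol_a0b1 : S.Collinear a0 b1 := by
    have hm : b1 ∈ cnbrs hGQ y a0 := by rw [hset_ya0]; simp
    exact (mem_cnbrs.1 hm).2
  -- common neighbours of z and a0 : gives a0 ~ c2
  have hza0ne : z ≠ a0 := fun he => haz.1 he.symm
  have hza0nc : ¬ S.Collinear z a0 := fun hc => haz.2 (col_symm hc)
  have hsymm_c1 : c1 = star S u1 z := by rw [hc1d]; exact star_symm hzu1
  have hsymm_c2 : c2 = star S u2 z := by rw [hc2d]; exact star_symm hzu2
  have hsymm_c0 : c0 = star S u0 z := by rw [hc0d]; exact star_symm hzu0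
  have hc1u0 : c1 ≠ u0 ∧ ¬ S.Collinear c1 u0 := by
    rw [hsymm_c1]
    exact star_not_col hGQ (col_symm hzu1) (col_symm hzu0)
      (fun hc => harc01 (col_symm hc)) (Ne.symm hne01)
  have hc2u0 : c2 ≠ u0 ∧ ¬ S.Collinear c2 u0 := by
    rw [hsymm_c2]
    exact star_not_col hGQ (col_symm hzu2) (col_symm hzu0)
      (fun hc => harc02 (col_symm hc)) (Ne.symm hne02)
  have hc0u1 : c0 ≠ u1 ∧ ¬ S.Collinear c0 u1 := by
    rw [hsymm_c0]
    exact star_not_col hGQ (col_symm hzu0) (col_symm hzu1) harc01 hne01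
  have hc2u1 : c2 ≠ u1 ∧ ¬ S.Collinear c2 u1 := by
    rw [hsymm_c2]
    exact star_not_col hGQ (col_symm hzu2) (col_symm hzu1)
      (fun hc => harc12 (col_symm hc)) (Ne.symm hne12)
  have hcard_uc : ({u0, c1, c2} : Finset P).card = 3 := by
    rw [Finset.card_insert_of_notMem, Finset.card_insert_of_notMem, Finset.card_singleton]
    · simp only [Finset.mem_singleton]
      rw [hc1d, hc2d]; exact star_ne_star hzu1 hzu2 hne12
    · simp only [Finset.mem_insert, Finset.mem_singleton]; push_neg
      exact ⟨fun he => hc1u0.1 he.symm, fun he => hc2u0.1 he.symm⟩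
  have hset_za0 : cnbrs hGQ z a0 = {u0, c1, c2} := by
    refine Finset.eq_of_subset_of_card_le ?_ ?_
    · intro w hw
      obtain ⟨hzw, haw⟩ := mem_cnbrs.1 hw
      have hwnz : w ∈ nbrs hGQ z := mem_nbrs.2 hzw
      rw [henz] at hwnz
      simp only [Finset.mem_insert, Finset.mem_singleton] at hwnz ⊢
      rcases hwnz with rfl | rfl | rfl | rfl | rfl | rfl
      · exact Or.inl rfl
      · exact absurd haw hau1.2
      · exact absurd haw hau2.2
      · exact absurd haw ha0c0
      · exact Or.inr (Or.inl rfl)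
      · exact Or.inr (Or.inr rfl)
    · rw [hcard_uc, card_cnbrs hGQ hza0ne hza0nc]
  have hcol_a0c2 : S.Collinear a0 c2 := by
    have hm : c2 ∈ cnbrs hGQ z a0 := by rw [hset_za0]; simp
    exact (mem_cnbrs.1 hm).2
  -- common neighbours of z and b1 : gives b1 ~ c2
  have hzb1ne : z ≠ b1 := fun he => hbz.1 he.symm
  have hzb1nc : ¬ S.Collinear z b1 := fun hc => hbz.2 (col_symm hc)
  have hcard_uc' : ({u1, c0, c2} : Finset P).card = 3 := by
    rw [Finset.card_insert_of_notMem, Finset.card_insert_of_notMem, Finset.card_singleton]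
    · simp only [Finset.mem_singleton]
      rw [hc0d, hc2d]; exact star_ne_star hzu0 hzu2 hne02
    · simp only [Finset.mem_insert, Finset.mem_singleton]; push_neg
      exact ⟨fun he => hc0u1.1 he.symm, fun he => hc2u1.1 he.symm⟩
  have hset_zb1 : cnbrs hGQ z b1 = {u1, c0, c2} := by
    refine Finset.eq_of_subset_of_card_le ?_ ?_
    · intro w hw
      obtain ⟨hzw, hbw⟩ := mem_cnbrs.1 hw
      have hwnz : w ∈ nbrs hGQ z := mem_nbrs.2 hzw
      rw [henz] at hwnz
      simp only [Finset.mem_insert, Finset.mem_singleton] at hwnz ⊢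
      rcases hwnz with rfl | rfl | rfl | rfl | rfl | rfl
      · exact absurd hbw hbu0.2
      · exact Or.inl rfl
      · exact absurd hbw hbu2.2
      · exact Or.inr (Or.inl rfl)
      · exact absurd hbw hb1c1
      · exact Or.inr (Or.inr rfl)
    · rw [hcard_uc', card_cnbrs hGQ hzb1ne hzb1nc]
  have hcol_b1c2 : S.Collinear b1 c2 := by
    have hm : c2 ∈ cnbrs hGQ z b1 := by rw [hset_zb1]; simp
    exact (mem_cnbrs.1 hm).2
  -- the line {a0, b1, c2} and the relation r u0 * r u1 = r u2
  have hmemc2 : c2 ∈ lineOf S a0 b1 :=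
    no_triangle hGQ hcol_a0b1 (col_symm hcol_a0c2) (col_symm hcol_b1c2)
  have hc2a0 : c2 ≠ a0 := fun he => haz.2 (col_symm (he ▸ hcc2.1))
  have hc2b1 : c2 ≠ b1 := fun he => hbz.2 (col_symm (he ▸ hcc2.1))
  have hstar_ab : c2 = star S a0 b1 := star_unique hcol_a0b1 hmemc2 hc2a0 hc2b1
  have hkey : ρ.r a0 * ρ.r b1 = ρ.r c2 := by rw [line_mul ρ hcol_a0b1, ← hstar_ab]
  have hu2rel : ρ.r u0 * ρ.r u1 = ρ.r u2 := by
    have e0 : (ρ.r x * ρ.r u0) * (ρ.r y * ρ.r u1) = (ρ.r x * ρ.r y) * ρ.r u2 := by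
      rw [hra0, hrb1, hkey, ← hrc2, h.hmul]
    have hyu0' := line_comm ρ hyu0
    have e1 : ρ.r x * (ρ.r u0 * (ρ.r y * ρ.r u1)) = ρ.r x * (ρ.r y * ρ.r u2) := by
      simpa [mul_assoc] using e0
    have e2 : ρ.r u0 * (ρ.r y * ρ.r u1) = ρ.r y * ρ.r u2 := mul_left_cancel e1
    rw [swap_left hyu0' (ρ.r u1)] at e2
    exact mul_left_cancel e2
  -- the four elements generate R
  have hgx : ρ.r x ∈ Subgroup.closure ({ρ.r x, ρ.r y, ρ.r u0, ρ.r u1} : Set R) :=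
    Subgroup.subset_closure (by simp)
  have hgy : ρ.r y ∈ Subgroup.closure ({ρ.r x, ρ.r y, ρ.r u0, ρ.r u1} : Set R) :=
    Subgroup.subset_closure (by simp)
  have hgu0 : ρ.r u0 ∈ Subgroup.closure ({ρ.r x, ρ.r y, ρ.r u0, ρ.r u1} : Set R) :=
    Subgroup.subset_closure (by simp)
  have hgu1 : ρ.r u1 ∈ Subgroup.closure ({ρ.r x, ρ.r y, ρ.r u0, ρ.r u1} : Set R) :=
    Subgroup.subset_closure (by simp)
  have hgu2 : ρ.r u2 ∈ Subgroup.closure ({ρ.r x, ρ.r y, ρ.r u0, ρ.r u1} : Set R) := by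
    rw [← hu2rel]; exact mul_mem hgu0 hgu1
  have hgz : ρ.r z ∈ Subgroup.closure ({ρ.r x, ρ.r y, ρ.r u0, ρ.r u1} : Set R) := by
    rw [← h.hmul]; exact mul_mem hgx hgy
  have hgen : ∀ p : P, ρ.r p ∈ Subgroup.closure ({ρ.r x, ρ.r y, ρ.r u0, ρ.r u1} : Set R) := by
    intro p
    by_cases hpx : p = x
    · rw [hpx]; exact hgx
    by_cases hpy : p = y
    · rw [hpy]; exact hgy
    by_cases hpz : p = z
    · rw [hpz]; exact hgz
    by_cases hcx : S.Collinear x p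
    · have hmem : p ∈ nbrs hGQ x := mem_nbrs.2 hcx
      rw [henx] at hmem
      simp only [Finset.mem_insert, Finset.mem_singleton] at hmem
      rcases hmem with rfl | rfl | rfl | rfl | rfl | rfl
      exacts [hgu0, hgu1, hgu2,
        by rw [← hra0]; exact mul_mem hgx hgu0,
        by rw [← hra1]; exact mul_mem hgx hgu1,
        by rw [← hra2]; exact mul_mem hgx hgu2]
    by_cases hcy : S.Collinear y p
    · have hmem : p ∈ nbrs hGQ y := mem_nbrs.2 hcy
      rw [heny] at hmem
      simp only [Finset.mem_insert, Finset.mem_singleton] at hmem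
      rcases hmem with rfl | rfl | rfl | rfl | rfl | rfl
      exacts [hgu0, hgu1, hgu2,
        by rw [← hrb0]; exact mul_mem hgy hgu0,
        by rw [← hrb1]; exact mul_mem hgy hgu1,
        by rw [← hrb2]; exact mul_mem hgy hgu2]
    by_cases hcz : S.Collinear z p
    · have hmem : p ∈ nbrs hGQ z := mem_nbrs.2 hcz
      rw [henz] at hmem
      simp only [Finset.mem_insert, Finset.mem_singleton] at hmem
      rcases hmem with rfl | rfl | rfl | rfl | rfl | rfl
      exacts [hgu0, hgu1, hgu2,
        by rw [← hrc0]; exact mul_mem hgz hgu0,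
        by rw [← hrc1]; exact mul_mem hgz hgu1,
        by rw [← hrc2]; exact mul_mem hgz hgu2]
    exfalso
    have hDD0 : ((Mset hGQ x).filter
        (fun p => (p ≠ y ∧ ¬ S.Collinear y p) ∧ (p ≠ z ∧ ¬ S.Collinear z p))).card = 0 := by
      have := card_DDset hGQ hf h
      omega
    have hmem : p ∈ (Mset hGQ x).filter
        (fun p => (p ≠ y ∧ ¬ S.Collinear y p) ∧ (p ≠ z ∧ ¬ S.Collinear z p)) :=
      (mem_DDset hGQ).2 ⟨⟨hpx, hcx⟩, ⟨hpy, hcy⟩, ⟨hpz, hcz⟩⟩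
    rw [Finset.card_eq_zero] at hDD0
    exact Finset.notMem_empty p (hDD0 ▸ hmem)
  have htop : Subgroup.closure ({ρ.r x, ρ.r y, ρ.r u0, ρ.r u1} : Set R) = ⊤ := by
    rw [eq_top_iff, ← ρ.gen]
    refine (Subgroup.closure_le _).2 ?_
    rintro g ⟨p, rfl⟩
    exact hgen p
  -- the bijection with Bool⁴
  have hqmul := quadProd_mul h.comm (line_comm ρ hxu0) (line_comm ρ hxu1)
    (line_comm ρ hyu0) (line_comm ρ hyu1) (comm_of_mul hu2rel)
    (rr_sq ρ x) (rr_sq ρ y) (rr_sq ρ u0) (rr_sq ρ u1)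
  set f := quadProd (ρ.r x) (ρ.r y) (ρ.r u0) (ρ.r u1) with hfd
  have hfmul : ∀ v w, f v * f w
      = f (xor v.1 w.1, xor v.2.1 w.2.1, xor v.2.2.1 w.2.2.1, xor v.2.2.2 w.2.2.2) :=
    fun v w => hqmul v w
  have hsq_f : ∀ v, f v * f v = 1 := by
    intro v
    rw [hfmul v v]
    simp only [Bool.xor_self]
    exact quadProd_zero _ _ _ _
  have hsurj : Function.Surjective f := by
    intro g
    have hg : g ∈ Subgroup.closure ({ρ.r x, ρ.r y, ρ.r u0, ρ.r u1} : Set R) :=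
      htop ▸ Subgroup.mem_top g
    refine Subgroup.closure_induction ?_ ?_ ?_ ?_ hg
    · intro w hw
      simp only [Set.mem_insert_iff, Set.mem_singleton_iff] at hw
      rcases hw with rfl | rfl | rfl | rfl
      · exact ⟨(true, false, false, false), by simp [hfd, quadProd]⟩
      · exact ⟨(false, true, false, false), by simp [hfd, quadProd]⟩
      · exact ⟨(false, false, true, false), by simp [hfd, quadProd]⟩
      · exact ⟨(false, false, false, true), by simp [hfd, quadProd]⟩
    · exact ⟨(false, false, false, false), quadProd_zero _ _ _ _⟩
    · rintro g1 g2 - - ⟨v, rfl⟩ ⟨w, rfl⟩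
      exact ⟨_, (hfmul v w).symm⟩
    · rintro g1 - ⟨v, rfl⟩
      exact ⟨v, (inv_eq_of_mul_eq_one_right (hsq_f v)).symm⟩
  have hker : ∀ v, f v = 1 → v = (false, false, false, false) := by
    rintro ⟨a, b, c, d⟩ hv
    cases a <;> cases b <;> cases c <;> cases d <;>
      simp only [hfd, quadProd, cond_true, cond_false, mul_one, one_mul] at hv ⊢
    · exact absurd hv (rr_ne_one ρ u1)
    · exact absurd hv (rr_ne_one ρ u0)
    · rw [hu2rel] at hv; exact absurd hv (rr_ne_one ρ u2)
    · exact absurd hv (rr_ne_one ρ y)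
    · rw [hrb1] at hv; exact absurd hv (rr_ne_one ρ b1)
    · rw [hrb0] at hv; exact absurd hv (rr_ne_one ρ b0)
    · rw [mul_assoc, hu2rel, hrb2] at hv; exact absurd hv (rr_ne_one ρ b2)
    · exact absurd hv (rr_ne_one ρ x)
    · rw [hra1] at hv; exact absurd hv (rr_ne_one ρ a1)
    · rw [hra0] at hv; exact absurd hv (rr_ne_one ρ a0)
    · rw [mul_assoc, hu2rel, hra2] at hv; exact absurd hv (rr_ne_one ρ a2)
    · rw [h.hmul] at hv; exact absurd hv (rr_ne_one ρ z)
    · rw [h.hmul, hrc1] at hv; exact absurd hv (rr_ne_one ρ c1)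
    · rw [h.hmul, hrc0] at hv; exact absurd hv (rr_ne_one ρ c0)
    · rw [h.hmul, mul_assoc, hu2rel, hrc2] at hv; exact absurd hv (rr_ne_one ρ c2)
  have hinj : Function.Injective f := by
    intro v w hvw
    have h1 : f v * f w = 1 := by rw [hvw]; exact hsq_f w
    rw [hfmul v w] at h1
    have h2 := hker _ h1
    obtain ⟨a, b, c, d⟩ := v
    obtain ⟨a', b', c', d'⟩ := w
    simp only [Prod.mk.injEq] at h2 ⊢
    have hxf : ∀ p q : Bool, xor p q = false → p = q := by decide
    exact ⟨hxf _ _ h2.1, hxf _ _ h2.2.1, hxf _ _ h2.2.2.1, hxf _ _ h2.2.2.2⟩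
  have hcard := Nat.card_eq_of_bijective f ⟨hinj, hsurj⟩
  rw [← hcard]
  simp only [Nat.card_eq_fintype_card, Fintype.card_prod, Fintype.card_bool]
  norm_num


end GQaux
end Part4c

/-- For a faithful representation of a `(2,t)`-GQ with
`(t, |R|) ≠ (2, 2^4)`, if `r_x r_y ∈ R_ψ` for distinct points `x, y`,
then `x` and `y` are collinear. -/
theorem gq_rep_product_in_image {P : Type*} (S : SlimPLS P) {t : ℕ}
    (hGQ : S.IsGQ t) {R : Type*} [Group R] (ρ : S.Rep R)
    (hf : Function.Injective ρ.r)
    (hne : ¬ (t = 2 ∧ Nat.card R = 2 ^ 4))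
    (x y : P) (hxy : x ≠ y) (h : ρ.r x * ρ.r y ∈ Set.range ρ.r) :
    S.Collinear x y := by
  by_contra hncol
  obtain ⟨w, hw⟩ := h
  have hH : GQaux.HSet S ρ x y w := ⟨hxy, hncol, hw.symm⟩
  exact hne (GQaux.hset_conclusion hGQ hf hH)
end

section
/- Let S = (P, L) be a generalized quadrangle of order (2,4), let (R, ψ) be a faithful representation of S, and let Q be a (2,2)-subGQ of S. Then the subgroup of R generated by {r_x : x ∈ Q} has order 2^5. -/
open scoped Classical

namespace SlimPLS

variable {P : Type*} {S : SlimPLS P}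

lemma Collinear.ne {x y : P} (h : S.Collinear x y) : x ≠ y := h.1

lemma Collinear.symm' {x y : P} (h : S.Collinear x y) : S.Collinear y x :=
  ⟨h.1.symm, h.2.elim fun l hl => ⟨l, hl.1, hl.2.2, hl.2.1⟩⟩

lemma collinear_of_mem {l : Finset P} (hl : l ∈ S.lines) {x y : P} (hx : x ∈ l) (hy : y ∈ l)
    (hxy : x ≠ y) : S.Collinear x y := ⟨hxy, l, hl, hx, hy⟩

/-- The line through two collinear points. -/
noncomputable def lineOf (S : SlimPLS P) (x y : P) : Finset P :=
  if h : S.Collinear x y then h.2.choose else ∅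

lemma lineOf_mem_lines {x y : P} (h : S.Collinear x y) : S.lineOf x y ∈ S.lines := by
  rw [lineOf, dif_pos h]; exact h.2.choose_spec.1

lemma left_mem_lineOf {x y : P} (h : S.Collinear x y) : x ∈ S.lineOf x y := by
  rw [lineOf, dif_pos h]; exact h.2.choose_spec.2.1

lemma right_mem_lineOf {x y : P} (h : S.Collinear x y) : y ∈ S.lineOf x y := by
  rw [lineOf, dif_pos h]; exact h.2.choose_spec.2.2

lemma line_eq_lineOf {x y : P} (h : S.Collinear x y) {l : Finset P} (hl : l ∈ S.lines)
    (hx : x ∈ l) (hy : y ∈ l) : l = S.lineOf x y :=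
  S.unique_line l hl _ (lineOf_mem_lines h) x y h.1 hx hy (left_mem_lineOf h) (right_mem_lineOf h)

lemma lineOf_symm {x y : P} (h : S.Collinear x y) : S.lineOf y x = S.lineOf x y :=
  line_eq_lineOf h (lineOf_mem_lines h.symm') (right_mem_lineOf h.symm') (left_mem_lineOf h.symm')

/-- The third point on the line through two collinear points. -/
noncomputable def star (S : SlimPLS P) (x y : P) : P :=
  if h : (((S.lineOf x y).erase x).erase y).Nonempty then h.choose else x

lemma star_spec {x y : P} (h : S.Collinear x y) :
    S.star x y ∈ S.lineOf x y ∧ S.star x y ≠ x ∧ S.star x y ≠ y := by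
  have hil : (((S.lineOf x y).erase x).erase y).Nonempty := by
    rw [← Finset.card_pos, Finset.card_erase_of_mem
        (Finset.mem_erase.mpr ⟨h.1.symm, right_mem_lineOf h⟩),
      Finset.card_erase_of_mem (left_mem_lineOf h),
      S.three_points _ (lineOf_mem_lines h)]
    norm_num
  rw [star, dif_pos hil]
  have := hil.choose_spec
  have h1 := Finset.mem_erase.mp this
  have h2 := Finset.mem_erase.mp h1.2
  exact ⟨h2.2, h2.1, h1.1⟩

lemma star_mem_lineOf {x y : P} (h : S.Collinear x y) : S.star x y ∈ S.lineOf x y :=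
  (star_spec h).1

lemma star_ne_left {x y : P} (h : S.Collinear x y) : S.star x y ≠ x := (star_spec h).2.1

lemma star_ne_right {x y : P} (h : S.Collinear x y) : S.star x y ≠ y := (star_spec h).2.2

lemma lineOf_eq_triple {x y : P} (h : S.Collinear x y) :
    S.lineOf x y = {x, y, S.star x y} := by
  refine (Finset.eq_of_subset_of_card_le ?_ ?_).symm
  · intro p hp
    rcases Finset.mem_insert.mp hp with rfl | hp
    · exact left_mem_lineOf h
    rcases Finset.mem_insert.mp hp with rfl | hp
    · exact right_mem_lineOf h
    rw [Finset.mem_singleton.mp hp]; exact star_mem_lineOf h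
  · rw [S.three_points _ (lineOf_mem_lines h)]
    rw [Finset.card_insert_of_notMem, Finset.card_insert_of_notMem, Finset.card_singleton]
    · simp only [Finset.mem_singleton]; exact (star_ne_right h).symm
    · simp only [Finset.mem_insert, Finset.mem_singleton]
      push_neg
      exact ⟨h.1, (star_ne_left h).symm⟩

lemma mem_lineOf_iff {x y p : P} (h : S.Collinear x y) :
    p ∈ S.lineOf x y ↔ p = x ∨ p = y ∨ p = S.star x y := by
  rw [lineOf_eq_triple h]; simp

lemma star_comm {x y : P} (h : S.Collinear x y) : S.star y x = S.star x y := by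
  have hm : S.star y x ∈ S.lineOf x y := by
    rw [← lineOf_symm h]; exact star_mem_lineOf h.symm'
  rcases (mem_lineOf_iff h).mp hm with h1 | h1 | h1
  · exact absurd h1 (star_ne_right h.symm')
  · exact absurd h1 (star_ne_left h.symm')
  · exact h1

lemma col_star_left {x y : P} (h : S.Collinear x y) : S.Collinear x (S.star x y) :=
  collinear_of_mem (lineOf_mem_lines h) (left_mem_lineOf h) (star_mem_lineOf h)
    (Ne.symm (star_ne_left h))

lemma col_star_right {x y : P} (h : S.Collinear x y) : S.Collinear y (S.star x y) :=
  collinear_of_mem (lineOf_mem_lines h) (right_mem_lineOf h) (star_mem_lineOf h)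
    (Ne.symm (star_ne_right h))

end SlimPLS
namespace SlimPLS

variable {P : Type*} {S : SlimPLS P} {t : ℕ}

/-- The unique-collinear-point axiom, applied. -/
lemma exists_unique_col (hGQ : S.IsGQ t) {x : P} {l : Finset P} (hl : l ∈ S.lines)
    (hx : x ∉ l) : ∃! y, y ∈ l ∧ S.Collinear x y := hGQ.2.2.2 x l hl hx

/-- If `p ∈ l` is collinear with `x ∉ l`, no other point of `l` is. -/
lemma not_col_of_other (hGQ : S.IsGQ t) {x : P} {l : Finset P} (hl : l ∈ S.lines)
    (hx : x ∉ l) {p q : P} (hp : p ∈ l) (hcp : S.Collinear x p) (hq : q ∈ l)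
    (hqp : q ≠ p) : ¬ S.Collinear x q := by
  intro hcq
  obtain ⟨w, -, hu⟩ := exists_unique_col hGQ hl hx
  exact hqp ((hu q ⟨hq, hcq⟩).trans (hu p ⟨hp, hcp⟩).symm)

/-- No triangles: three pairwise collinear points lie on one line. -/
lemma triangle_mem (hGQ : S.IsGQ t) {a b c : P} (hab : S.Collinear a b)
    (hac : S.Collinear a c) (hbc : S.Collinear b c) : c ∈ S.lineOf a b := by
  by_contra hc
  obtain ⟨w, -, hu⟩ := exists_unique_col hGQ (lineOf_mem_lines hab) hc
  exact hab.ne ((hu a ⟨left_mem_lineOf hab, hac.symm'⟩).trans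
    (hu b ⟨right_mem_lineOf hab, hbc.symm'⟩).symm)

lemma eq_star_of_triangle (hGQ : S.IsGQ t) {a b c : P} (hab : S.Collinear a b)
    (hac : S.Collinear a c) (hbc : S.Collinear b c) : c = S.star a b := by
  rcases (mem_lineOf_iff hab).mp (triangle_mem hGQ hab hac hbc) with h | h | h
  · exact absurd h.symm hac.ne
  · exact absurd h.symm hbc.ne
  · exact h

section Rep

variable {R : Type*} [Group R] (ρ : S.Rep R)

lemma Rep.r_sq (p : P) : ρ.r p * ρ.r p = 1 := by
  have h := pow_orderOf_eq_one (ρ.r p)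
  rwa [ρ.order_two, pow_two] at h

lemma Rep.r_inv (p : P) : (ρ.r p)⁻¹ = ρ.r p := by
  rw [inv_eq_iff_mul_eq_one, ρ.r_sq]

lemma Rep.r_ne_one (p : P) : ρ.r p ≠ 1 := by
  intro h
  have := ρ.order_two p
  rw [h, orderOf_one] at this
  omega

lemma Rep.r_line {l : Finset P} (hl : l ∈ S.lines) {a b c : P} (ha : a ∈ l) (hb : b ∈ l)
    (hc : c ∈ l) (hab : a ≠ b) (hac : a ≠ c) (hbc : b ≠ c) : ρ.r a * ρ.r b = ρ.r c :=
  ρ.line_rel l hl a ha b hb c hc hab hac hbc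

lemma Rep.r_star {x y : P} (h : S.Collinear x y) : ρ.r x * ρ.r y = ρ.r (S.star x y) :=
  ρ.r_line (lineOf_mem_lines h) (left_mem_lineOf h) (right_mem_lineOf h)
    (star_mem_lineOf h) h.1 (Ne.symm (star_ne_left h)) (Ne.symm (star_ne_right h))

lemma Rep.r_star' {x y : P} (h : S.Collinear x y) : ρ.r x * ρ.r (S.star x y) = ρ.r y :=
  ρ.r_line (lineOf_mem_lines h) (left_mem_lineOf h) (star_mem_lineOf h)
    (right_mem_lineOf h) (Ne.symm (star_ne_left h)) h.1 (star_ne_right h)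

lemma Rep.r_comm_col {x y : P} (h : S.Collinear x y) : ρ.r x * ρ.r y = ρ.r y * ρ.r x := by
  rw [ρ.r_star h, ρ.r_star h.symm', star_comm h]

end Rep

end SlimPLS
namespace SlimPLS

variable {P : Type*} {S : SlimPLS P} {t : ℕ}

lemma noncol_symm {a b : P} (h : ¬ S.Collinear a b) : ¬ S.Collinear b a :=
  fun hc => h hc.symm'

lemma ne_of_noncol_col {p a q : P} (hpa : ¬ S.Collinear p a) (hqa : S.Collinear q a) :
    p ≠ q := fun h => hpa (h ▸ hqa)

section Config

variable {x y z1 z2 : P}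

/-- `x` is not collinear with (and distinct from) `star y z2`. -/
lemma cfgA (hGQ : S.IsGQ t) (hxy : ¬ S.Collinear x y) (hnexy : x ≠ y)
    (hxz2 : S.Collinear x z2) (hyz2 : S.Collinear y z2) :
    ¬ S.Collinear x (S.star y z2) ∧ x ≠ S.star y z2 := by
  have hnm : x ∉ S.lineOf y z2 := by
    intro hmem
    rcases (mem_lineOf_iff hyz2).mp hmem with h | h | h
    · exact hnexy h
    · exact hxz2.ne h
    · exact hxy (h ▸ col_star_left hyz2).symm'
  refine ⟨?_, fun h => hnm (h ▸ star_mem_lineOf hyz2)⟩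
  exact not_col_of_other hGQ (lineOf_mem_lines hyz2) hnm (right_mem_lineOf hyz2) hxz2
    (star_mem_lineOf hyz2) (star_ne_right hyz2)

/-- `z1` is not collinear with (and distinct from) `star y z2`. -/
lemma cfgB (hGQ : S.IsGQ t) (hyz1 : S.Collinear y z1) (hyz2 : S.Collinear y z2)
    (hz12 : ¬ S.Collinear z1 z2) (hz12' : z1 ≠ z2) :
    ¬ S.Collinear z1 (S.star y z2) ∧ z1 ≠ S.star y z2 := by
  have hnm : z1 ∉ S.lineOf y z2 := by
    intro hmem
    rcases (mem_lineOf_iff hyz2).mp hmem with h | h | h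
    · exact hyz1.ne h.symm
    · exact hz12' h
    · exact hz12 (h ▸ col_star_right hyz2).symm'
  refine ⟨?_, fun h => hnm (h ▸ star_mem_lineOf hyz2)⟩
  exact not_col_of_other hGQ (lineOf_mem_lines hyz2) hnm (left_mem_lineOf hyz2) hyz1.symm'
    (star_mem_lineOf hyz2) (star_ne_left hyz2)

/-- `star x z1` and `star y z2` are collinear. -/
lemma cfgC (hGQ : S.IsGQ t) (hxy : ¬ S.Collinear x y) (hnexy : x ≠ y)
    (hxz1 : S.Collinear x z1) (hxz2 : S.Collinear x z2)
    (hyz1 : S.Collinear y z1) (hyz2 : S.Collinear y z2)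
    (hz12 : ¬ S.Collinear z1 z2) (hz12' : z1 ≠ z2) :
    S.Collinear (S.star x z1) (S.star y z2) := by
  obtain ⟨hA, hA'⟩ := cfgA hGQ hxy hnexy hxz2 hyz2
  obtain ⟨hB, hB'⟩ := cfgB hGQ hyz1 hyz2 hz12 hz12'
  have hnm : S.star y z2 ∉ S.lineOf x z1 := by
    intro hmem
    rcases (mem_lineOf_iff hxz1).mp hmem with h | h | h
    · exact hA' h.symm
    · exact hB' h.symm
    · exact hA (h ▸ col_star_left hxz1)
  obtain ⟨p, ⟨hpl, hpc⟩, -⟩ := exists_unique_col hGQ (lineOf_mem_lines hxz1) hnm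
  rcases (mem_lineOf_iff hxz1).mp hpl with h | h | h
  · exact absurd (h ▸ hpc).symm' hA
  · exact absurd (h ▸ hpc).symm' hB
  · exact (h ▸ hpc).symm'

/-- `star (star x z1) (star y z2)` is collinear with `star x z2`. -/
lemma cfgF3 (hGQ : S.IsGQ t) (hxy : ¬ S.Collinear x y) (hnexy : x ≠ y)
    (hxz1 : S.Collinear x z1) (hxz2 : S.Collinear x z2)
    (hyz1 : S.Collinear y z1) (hyz2 : S.Collinear y z2)
    (hz12 : ¬ S.Collinear z1 z2) (hz12' : z1 ≠ z2) :
    S.Collinear (S.star (S.star x z1) (S.star y z2)) (S.star x z2) := by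
  obtain ⟨hA, hA'⟩ := cfgA hGQ hxy hnexy hxz2 hyz2
  obtain ⟨hB2, hB2'⟩ := cfgB hGQ hxz2 hxz1 (noncol_symm hz12) hz12'.symm
  have hC := cfgC hGQ hxy hnexy hxz1 hxz2 hyz1 hyz2 hz12 hz12'
  -- x and the point m := star (star x z1) (star y z2)
  have hxline : x ∉ S.lineOf (S.star x z1) (S.star y z2) := by
    intro hmem
    rcases (mem_lineOf_iff hC).mp hmem with h | h | h
    · exact (star_ne_left hxz1) h.symm
    · exact hA' h
    · exact hA (by rw [h]; exact (col_star_right hC).symm')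
  have hxm : ¬ S.Collinear x (S.star (S.star x z1) (S.star y z2)) :=
    not_col_of_other hGQ (lineOf_mem_lines hC) hxline (left_mem_lineOf hC)
      (col_star_left hxz1) (star_mem_lineOf hC) (star_ne_left hC)
  have hxm' : x ≠ S.star (S.star x z1) (S.star y z2) :=
    ne_of_noncol_col hA ((col_star_right hC).symm')
  -- z2 and m
  have hz2line : z2 ∉ S.lineOf (S.star x z1) (S.star y z2) := by
    intro hmem
    rcases (mem_lineOf_iff hC).mp hmem with h | h | h
    · exact hB2' h
    · exact (star_ne_right hyz2) h.symm
    · exact hB2 (by rw [h]; exact (col_star_left hC).symm')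
  have hz2m : ¬ S.Collinear z2 (S.star (S.star x z1) (S.star y z2)) :=
    not_col_of_other hGQ (lineOf_mem_lines hC) hz2line (right_mem_lineOf hC)
      (col_star_right hyz2) (star_mem_lineOf hC) (star_ne_right hC)
  have hz2m' : z2 ≠ S.star (S.star x z1) (S.star y z2) :=
    ne_of_noncol_col hB2 ((col_star_left hC).symm')
  -- m is not on the line x z2, hence collinear with its third point star x z2
  have hmline : S.star (S.star x z1) (S.star y z2) ∉ S.lineOf x z2 := by
    intro hmem
    rcases (mem_lineOf_iff hxz2).mp hmem with h | h | h
    · exact hxm' h.symm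
    · exact hz2m' h.symm
    · exact (noncol_symm hxm) (h ▸ col_star_left hxz2).symm'
  obtain ⟨p, ⟨hpl, hpc⟩, -⟩ := exists_unique_col hGQ (lineOf_mem_lines hxz2) hmline
  rcases (mem_lineOf_iff hxz2).mp hpl with h | h | h
  · exact absurd (h ▸ hpc) (noncol_symm hxm)
  · exact absurd (h ▸ hpc) (noncol_symm hz2m)
  · exact h ▸ hpc

/-- The key identity: the two "diagonal" third points coincide. -/
lemma cfgD (hGQ : S.IsGQ t) (hxy : ¬ S.Collinear x y) (hnexy : x ≠ y)
    (hxz1 : S.Collinear x z1) (hxz2 : S.Collinear x z2)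
    (hyz1 : S.Collinear y z1) (hyz2 : S.Collinear y z2)
    (hz12 : ¬ S.Collinear z1 z2) (hz12' : z1 ≠ z2) :
    S.star (S.star x z1) (S.star y z2) = S.star (S.star x z2) (S.star y z1) := by
  have hC := cfgC hGQ hxy hnexy hxz1 hxz2 hyz1 hyz2 hz12 hz12'
  have hC2 := cfgC hGQ hxy hnexy hxz2 hxz1 hyz2 hyz1 (noncol_symm hz12) hz12'.symm
  have hF3 := cfgF3 hGQ hxy hnexy hxz1 hxz2 hyz1 hyz2 hz12 hz12'
  have hF4' := cfgF3 hGQ (noncol_symm hxy) hnexy.symm hyz2 hyz1 hxz2 hxz1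
    (noncol_symm hz12) hz12'.symm
  rw [star_comm hC] at hF4'
  exact eq_star_of_triangle hGQ hC2 hF3.symm' hF4'.symm'

/-- In the configuration, the representation elements of `z1, z2` commute. -/
lemma r_comm_of_config {R : Type*} [Group R] (ρ : S.Rep R)
    (hGQ : S.IsGQ t) (hxy : ¬ S.Collinear x y) (hnexy : x ≠ y)
    (hxz1 : S.Collinear x z1) (hxz2 : S.Collinear x z2)
    (hyz1 : S.Collinear y z1) (hyz2 : S.Collinear y z2)
    (hz12 : ¬ S.Collinear z1 z2) (hz12' : z1 ≠ z2) :
    ρ.r z1 * ρ.r z2 = ρ.r z2 * ρ.r z1 := by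
  have hC := cfgC hGQ hxy hnexy hxz1 hxz2 hyz1 hyz2 hz12 hz12'
  have hC2 := cfgC hGQ hxy hnexy hxz2 hxz1 hyz2 hyz1 (noncol_symm hz12) hz12'.symm
  have hD := cfgD hGQ hxy hnexy hxz1 hxz2 hyz1 hyz2 hz12 hz12'
  have k1 : (ρ.r x * ρ.r z1) * (ρ.r y * ρ.r z2)
      = ρ.r (S.star (S.star x z1) (S.star y z2)) := by
    rw [ρ.r_star hxz1, ρ.r_star hyz2, ρ.r_star hC]
  have k2 : (ρ.r x * ρ.r z2) * (ρ.r y * ρ.r z1)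
      = ρ.r (S.star (S.star x z2) (S.star y z1)) := by
    rw [ρ.r_star hxz2, ρ.r_star hyz1, ρ.r_star hC2]
  have key : (ρ.r x * ρ.r z1) * (ρ.r y * ρ.r z2) = (ρ.r x * ρ.r z2) * (ρ.r y * ρ.r z1) := by
    rw [k1, k2, hD]
  rw [mul_assoc, mul_assoc] at key
  have key' := mul_left_cancel key
  have c1 := ρ.r_comm_col hyz1.symm'
  have c2 := ρ.r_comm_col hyz2.symm'
  rw [← mul_assoc, ← mul_assoc, c1, c2, mul_assoc, mul_assoc] at key'
  exact mul_left_cancel key'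

end Config

/-- All generators of a representation of a (2,4)-GQ commute. -/
lemma r_comm_all {R : Type*} [Group R] (ρ : S.Rep R) (hGQ : S.IsGQ 4) (u w : P) :
    ρ.r u * ρ.r w = ρ.r w * ρ.r u := by
  by_cases he : u = w
  · rw [he]
  by_cases hc : S.Collinear u w
  · exact ρ.r_comm_col hc
  -- two distinct lines through u
  have h5 := hGQ.2.2.1 u
  have hTfin : {l | l ∈ S.lines ∧ u ∈ l}.Finite := by
    by_contra h
    rw [Set.Infinite.ncard h] at h5
    omega
  obtain ⟨la, hla, lb, hlb, hne⟩ := (Set.one_lt_ncard hTfin).mp (by omega)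
  have hwa : w ∉ la := fun hmem =>
    hc (collinear_of_mem hla.1 hla.2 hmem he)
  have hwb : w ∉ lb := fun hmem =>
    hc (collinear_of_mem hlb.1 hlb.2 hmem he)
  obtain ⟨xx, ⟨hxl, hxw⟩, -⟩ := exists_unique_col hGQ hla.1 hwa
  obtain ⟨yy, ⟨hyl, hyw⟩, -⟩ := exists_unique_col hGQ hlb.1 hwb
  have hxu : xx ≠ u := fun h => hc (h ▸ hxw).symm'
  have hyu : yy ≠ u := fun h => hc (h ▸ hyw).symm'
  have hcxu : S.Collinear xx u := collinear_of_mem hla.1 hxl hla.2 hxu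
  have hcyu : S.Collinear yy u := collinear_of_mem hlb.1 hyl hlb.2 hyu
  have hxyne : xx ≠ yy := by
    intro h
    exact hne (S.unique_line la hla.1 lb hlb.1 xx u hxu hxl hla.2 (h ▸ hyl) hlb.2)
  have hxynotcol : ¬ S.Collinear xx yy := by
    intro hcol
    have hmem := triangle_mem hGQ hcxu.symm' hcyu.symm' hcol
    have hlaeq : la = S.lineOf u xx := line_eq_lineOf hcxu.symm' hla.1 hla.2 hxl
    rw [← hlaeq] at hmem
    exact hxyne (not_col_of_other hGQ hla.1 hwa hxl hxw hmem
      (fun hh => (hxyne hh.symm).elim) hyw).elim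
  exact r_comm_of_config ρ hGQ hxynotcol hxyne hcxu hxw.symm' hcyu hyw.symm' hc he

end SlimPLS
namespace SlimPLS

variable {P : Type*} {S : SlimPLS P} {t : ℕ} {Q : Set P}
variable {R : Type*} [Group R]

/-- Shifting a relation `r x * r y = r u` along a common neighbour `z`. -/
lemma rel_shift (ρ : S.Rep R) {x y z u : P} (hxz : S.Collinear x z) (hyz : S.Collinear y z)
    (hrel : ρ.r x * ρ.r y = ρ.r u) :
    ρ.r (S.star x z) * ρ.r (S.star y z) = ρ.r u := by
  rw [← ρ.r_star hxz, ← ρ.r_star hyz, mul_assoc,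
    show ρ.r z * (ρ.r y * ρ.r z) = ρ.r y from by
      rw [← mul_assoc, ρ.r_comm_col hyz.symm', mul_assoc, ρ.r_sq, mul_one],
    hrel]

/-- The two "opposite" points `star x z`, `star y z` are non-collinear and distinct. -/
lemma ab_noncol (hGQ : S.IsGQ t) {x y z : P} (hxy : ¬ S.Collinear x y) (hxy' : x ≠ y)
    (hxz : S.Collinear x z) (hyz : S.Collinear y z) :
    ¬ S.Collinear (S.star x z) (S.star y z) ∧ S.star x z ≠ S.star y z := by
  have hA := (cfgA hGQ hxy hxy' hxz hyz).1
  constructor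
  · intro hcol
    have hmem := triangle_mem hGQ (col_star_right hxz) (col_star_right hyz) hcol
    have heq : S.lineOf x z = S.lineOf z (S.star x z) :=
      line_eq_lineOf (col_star_right hxz) (lineOf_mem_lines hxz) (right_mem_lineOf hxz)
        (star_mem_lineOf hxz)
    rw [← heq] at hmem
    rcases (mem_lineOf_iff hxz).mp hmem with h | h | h
    · exact hxy (h ▸ col_star_left hyz).symm'
    · exact (star_ne_right hyz) h
    · exact hA (by rw [h]; exact col_star_left hxz)
  · intro h
    exact hA (by rw [← h]; exact col_star_left hxz)

/-- From `r A * r B = r U` with `A, B` non-collinear, `U` is non-collinear with both. -/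
lemma triple_noncol (hGQ : S.IsGQ 4) (ρ : S.Rep R) (hf : Function.Injective ρ.r)
    {A B U : P} (hAB : ¬ S.Collinear A B) (hABne : A ≠ B)
    (hrel : ρ.r A * ρ.r B = ρ.r U) :
    (¬ S.Collinear A U ∧ A ≠ U) ∧ (¬ S.Collinear B U ∧ B ≠ U) := by
  have hBA : ρ.r B * ρ.r A = ρ.r U := by rw [r_comm_all ρ hGQ B A]; exact hrel
  have main : ∀ C D : P, ¬ S.Collinear C D → ρ.r C * ρ.r D = ρ.r U →
      ¬ S.Collinear C U ∧ C ≠ U := by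
    intro C D hCD hCDrel
    constructor
    · intro hcol
      have h1 : ρ.r D = ρ.r (S.star C U) := by
        rw [← ρ.r_star hcol, ← hCDrel, ← mul_assoc, ρ.r_sq, one_mul]
      have h2 := hf h1
      exact hCD (h2 ▸ col_star_left hcol)
    · intro h
      rw [h] at hCDrel
      have : ρ.r D = 1 := by
        have := hCDrel
        nth_rewrite 2 [← mul_one (ρ.r U)] at this
        exact mul_left_cancel this
      exact ρ.r_ne_one D this
  exact ⟨main A B hAB hrel, main B A (noncol_symm hAB) hBA⟩

/-- Three common neighbours inside `Q` of a non-collinear pair of `Q`. -/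
lemma exists_z (hGQ : S.IsGQ 4) (hQ : S.IsSubGQ Q 2) {x y : P} (hx : x ∈ Q) (hy : y ∈ Q)
    (hxy : ¬ S.Collinear x y) (hxy' : x ≠ y) :
    ∃ z1 z2 z3 : P,
      (z1 ∈ Q ∧ S.Collinear x z1 ∧ S.Collinear y z1) ∧
      (z2 ∈ Q ∧ S.Collinear x z2 ∧ S.Collinear y z2) ∧
      (z3 ∈ Q ∧ S.Collinear x z3 ∧ S.Collinear y z3) ∧
      (¬ S.Collinear z1 z2 ∧ z1 ≠ z2) ∧ (¬ S.Collinear z1 z3 ∧ z1 ≠ z3) ∧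
      (¬ S.Collinear z2 z3 ∧ z2 ≠ z3) := by
  obtain ⟨-, -, hQsub, -, -, hQ3, -⟩ := hQ
  obtain ⟨l1, l2, l3, h12, h13, h23, hset⟩ := Set.ncard_eq_three.mp (hQ3 x hx)
  have hl1 : l1 ∈ S.lines ∧ x ∈ l1 ∧ (↑l1 : Set P) ⊆ Q := by
    have : l1 ∈ {l | l ∈ S.lines ∧ x ∈ l ∧ (↑l : Set P) ⊆ Q} := by rw [hset]; simp
    exact this
  have hl2 : l2 ∈ S.lines ∧ x ∈ l2 ∧ (↑l2 : Set P) ⊆ Q := by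
    have : l2 ∈ {l | l ∈ S.lines ∧ x ∈ l ∧ (↑l : Set P) ⊆ Q} := by rw [hset]; simp
    exact this
  have hl3 : l3 ∈ S.lines ∧ x ∈ l3 ∧ (↑l3 : Set P) ⊆ Q := by
    have : l3 ∈ {l | l ∈ S.lines ∧ x ∈ l ∧ (↑l : Set P) ⊆ Q} := by rw [hset]; simp
    exact this
  have key : ∀ la lb : Finset P, la ∈ S.lines → x ∈ la → (↑la : Set P) ⊆ Q →
      lb ∈ S.lines → x ∈ lb → (↑lb : Set P) ⊆ Q → la ≠ lb →
      ∃ za zb : P, (za ∈ Q ∧ S.Collinear x za ∧ S.Collinear y za) ∧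
        (zb ∈ Q ∧ S.Collinear x zb ∧ S.Collinear y zb) ∧
        ¬ S.Collinear za zb ∧ za ≠ zb ∧ za ∈ la ∧ zb ∈ lb := by
    intro la lb hla hxa hsa hlb hxb hsb hne
    have hya : y ∉ la := fun hmem => hxy (collinear_of_mem hla hxa hmem hxy')
    have hyb : y ∉ lb := fun hmem => hxy (collinear_of_mem hlb hxb hmem hxy')
    obtain ⟨za, ⟨hzal, hzac⟩, -⟩ := exists_unique_col hGQ hla hya
    obtain ⟨zb, ⟨hzbl, hzbc⟩, -⟩ := exists_unique_col hGQ hlb hyb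
    have hzax : za ≠ x := fun h => hxy (h ▸ hzac).symm'
    have hzbx : zb ≠ x := fun h => hxy (h ▸ hzbc).symm'
    have hcxza : S.Collinear x za := collinear_of_mem hla hxa hzal hzax.symm
    have hcxzb : S.Collinear x zb := collinear_of_mem hlb hxb hzbl hzbx.symm
    have hzne : za ≠ zb := by
      intro h
      exact hne (S.unique_line la hla lb hlb za x hzax hzal hxa (h ▸ hzbl) hxb)
    have hznc : ¬ S.Collinear za zb := by
      intro hcol
      have hmem := triangle_mem hGQ hcxza hcxzb hcol
      have heq : la = S.lineOf x za := line_eq_lineOf hcxza hla hxa hzal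
      rw [← heq] at hmem
      exact hzne ((not_col_of_other hGQ hla hya hzal hzac hmem
        (fun hh => hzne hh.symm) hzbc).elim)
    exact ⟨za, zb, ⟨hsa hzal, hcxza, hzac⟩, ⟨hsb hzbl, hcxzb, hzbc⟩, hznc, hzne, hzal, hzbl⟩
  obtain ⟨z1, z2, hz1, hz2, hnc12, hne12, hm1, hm2⟩ :=
    key l1 l2 hl1.1 hl1.2.1 hl1.2.2 hl2.1 hl2.2.1 hl2.2.2 h12
  obtain ⟨z1', z3, hz1', hz3, hnc13', hne13', hm1', hm3⟩ :=
    key l1 l3 hl1.1 hl1.2.1 hl1.2.2 hl3.1 hl3.2.1 hl3.2.2 h13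
  obtain ⟨z2', z3', hz2', hz3', hnc23', hne23', hm2', hm3'⟩ :=
    key l2 l3 hl2.1 hl2.2.1 hl2.2.2 hl3.1 hl3.2.1 hl3.2.2 h23
  -- the unique collinear point on each line is well-defined, so z1' = z1 etc.
  have huniq : ∀ la : Finset P, la ∈ S.lines → x ∈ la → ∀ p q : P, p ∈ la → q ∈ la →
      S.Collinear y p → S.Collinear y q → p = q := by
    intro la hla hxa p q hp hq hcp hcq
    have hya : y ∉ la := fun hmem => hxy (collinear_of_mem hla hxa hmem hxy')
    obtain ⟨w, -, hu⟩ := exists_unique_col hGQ hla hya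
    exact (hu p ⟨hp, hcp⟩).trans (hu q ⟨hq, hcq⟩).symm
  have e1 : z1' = z1 := huniq l1 hl1.1 hl1.2.1 z1' z1 hm1' hm1 hz1'.2.2 hz1.2.2
  have e2 : z2' = z2 := huniq l2 hl2.1 hl2.2.1 z2' z2 hm2' hm2 hz2'.2.2 hz2.2.2
  have e3 : z3' = z3 := huniq l3 hl3.1 hl3.2.1 z3' z3 hm3' hm3 hz3'.2.2 hz3.2.2
  rw [e1] at hnc13' hne13'
  rw [e2] at hnc23' hne23'
  rw [e3] at hnc23' hne23'
  exact ⟨z1, z2, z3, hz1, hz2, hz3, ⟨hnc12, hne12⟩, ⟨hnc13', hne13'⟩, ⟨hnc23', hne23'⟩⟩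

end SlimPLS
namespace SlimPLS

variable {P : Type*} {S : SlimPLS P} {Q : Set P}
variable {R : Type*} [Group R]

/-- In a (2,2)-subGQ `Q` of a (2,4)-GQ there is no non-collinear triple `x, y, u`
with `r x * r y = r u` in a faithful representation. -/
lemma no_triple (hGQ : S.IsGQ 4) (hQ : S.IsSubGQ Q 2) (ρ : S.Rep R)
    (hf : Function.Injective ρ.r) {x y u : P} (hx : x ∈ Q) (hy : y ∈ Q) (hu : u ∈ Q)
    (hxy : ¬ S.Collinear x y) (hxy' : x ≠ y)
    (hxu : ¬ S.Collinear x u) (hxu' : x ≠ u)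
    (hyu : ¬ S.Collinear y u) (hyu' : y ≠ u)
    (hrel : ρ.r x * ρ.r y = ρ.r u) : False := by
  have hQsub := hQ.2.2.1
  have hQ3 := hQ.2.2.2.2.2.1
  obtain ⟨z1, z2, z3, hz1, hz2, hz3, h12, h13, h23⟩ := exists_z hGQ hQ hx hy hxy hxy'
  -- the line through x not inside Q
  have houtside : ∃ l₀, l₀ ∈ S.lines ∧ x ∈ l₀ ∧ ¬ ((↑l₀ : Set P) ⊆ Q) := by
    by_contra hcon
    push_neg at hcon
    have h5 := hGQ.2.2.1 x
    have : {l | l ∈ S.lines ∧ x ∈ l} = {l | l ∈ S.lines ∧ x ∈ l ∧ (↑l : Set P) ⊆ Q} :=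
      Set.ext fun l => ⟨fun h => ⟨h.1, h.2, hcon l h.1 h.2⟩, fun h => ⟨h.1, h.2.1⟩⟩
    rw [this, hQ3 x hx] at h5
    omega
  obtain ⟨l₀, hl₀, hxl₀, hl₀Q⟩ := houtside
  have hyl₀ : y ∉ l₀ := fun hmem => hxy (collinear_of_mem hl₀ hxl₀ hmem hxy')
  obtain ⟨w1, ⟨hw1l, hw1c⟩, -⟩ := exists_unique_col hGQ hl₀ hyl₀
  have hw1x : w1 ≠ x := fun h => hxy (h ▸ hw1c).symm'
  have hcxw1 : S.Collinear x w1 := collinear_of_mem hl₀ hxl₀ hw1l hw1x.symm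
  have hw1Q : w1 ∉ Q := by
    intro hmem
    exact hl₀Q (hQsub l₀ hl₀ x hxl₀ w1 hw1l hw1x.symm hx hmem)
  have hl₀eq : l₀ = S.lineOf x w1 := line_eq_lineOf hcxw1 hl₀ hxl₀ hw1l
  -- x' = star x w1 is outside Q
  have hx'Q : S.star x w1 ∉ Q := by
    intro hmem
    refine hl₀Q (hQsub l₀ hl₀ x hxl₀ (S.star x w1) ?_ (Ne.symm (star_ne_left hcxw1)) hx hmem)
    rw [hl₀eq]; exact star_mem_lineOf hcxw1
  -- relation shifted along w1
  have hrelw : ρ.r (S.star x w1) * ρ.r (S.star y w1) = ρ.r u :=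
    rel_shift ρ hcxw1 hw1c hrel
  obtain ⟨habw, habw'⟩ := ab_noncol hGQ hxy hxy' hcxw1 hw1c
  obtain ⟨⟨hux', hux''⟩, -⟩ := triple_noncol hGQ ρ hf habw habw' hrelw
  -- u is collinear with w1
  have hul₀ : u ∉ l₀ := by
    intro hmem
    rw [hl₀eq] at hmem
    rcases (mem_lineOf_iff hcxw1).mp hmem with h | h | h
    · exact hxu' h.symm
    · exact hw1Q (h ▸ hu)
    · exact hx'Q (h ▸ hu)
  have hcuw1 : S.Collinear u w1 := by
    obtain ⟨p, ⟨hpl, hpc⟩, -⟩ := exists_unique_col hGQ hl₀ hul₀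
    rw [hl₀eq] at hpl
    rcases (mem_lineOf_iff hcxw1).mp hpl with h | h | h
    · exact absurd (h ▸ hpc).symm' hxu
    · exact h ▸ hpc
    · exact absurd (h ▸ hpc) (noncol_symm hux')
  -- f4 = star u w1 is outside Q
  have hf4Q : S.star u w1 ∉ Q := by
    intro hmem
    have hsub : (↑(S.lineOf u w1) : Set P) ⊆ Q :=
      hQsub _ (lineOf_mem_lines hcuw1) u (left_mem_lineOf hcuw1) (S.star u w1)
        (star_mem_lineOf hcuw1) (Ne.symm (star_ne_left hcuw1)) hu hmem
    exact hw1Q (hsub (right_mem_lineOf hcuw1))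
  -- each of the six points star x z_i, star y z_i is collinear with f4
  have sixcol : ∀ z : P, z ∈ Q → S.Collinear x z → S.Collinear y z →
      (S.Collinear (S.star x z) (S.star u w1) ∧ S.star x z ∈ Q) ∧
      (S.Collinear (S.star y z) (S.star u w1) ∧ S.star y z ∈ Q) := by
    intro z hzQ hxz hyz
    have hlz : (↑(S.lineOf x z) : Set P) ⊆ Q :=
      hQsub _ (lineOf_mem_lines hxz) x (left_mem_lineOf hxz) z (right_mem_lineOf hxz)
        hxz.ne hx hzQ
    have hlz' : (↑(S.lineOf y z) : Set P) ⊆ Q :=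
      hQsub _ (lineOf_mem_lines hyz) y (left_mem_lineOf hyz) z (right_mem_lineOf hyz)
        hyz.ne hy hzQ
    have haQ : S.star x z ∈ Q := hlz (star_mem_lineOf hxz)
    have hbQ : S.star y z ∈ Q := hlz' (star_mem_lineOf hyz)
    have hrelz : ρ.r (S.star x z) * ρ.r (S.star y z) = ρ.r u := rel_shift ρ hxz hyz hrel
    obtain ⟨habz, habz'⟩ := ab_noncol hGQ hxy hxy' hxz hyz
    obtain ⟨⟨hua, hua'⟩, ⟨hub, hub'⟩⟩ := triple_noncol hGQ ρ hf habz habz' hrelz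
    -- w1 not collinear with star x z (w1 is off the line x z, which meets it in x)
    have hw1line : w1 ∉ S.lineOf x z := fun hmem => hw1Q (hlz hmem)
    have hnw1a : ¬ S.Collinear w1 (S.star x z) :=
      not_col_of_other hGQ (lineOf_mem_lines hxz) hw1line (left_mem_lineOf hxz)
        hcxw1.symm' (star_mem_lineOf hxz) (star_ne_left hxz)
    have hw1line' : w1 ∉ S.lineOf y z := fun hmem => hw1Q (hlz' hmem)
    have hnw1b : ¬ S.Collinear w1 (S.star y z) :=
      not_col_of_other hGQ (lineOf_mem_lines hyz) hw1line' (left_mem_lineOf hyz)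
        hw1c.symm' (star_mem_lineOf hyz) (star_ne_left hyz)
    -- star x z is not on the line u w1
    have key : ∀ p : P, p ∈ Q → p ≠ u → ¬ S.Collinear u p → ¬ S.Collinear w1 p →
        S.Collinear p (S.star u w1) := by
      intro p hpQ hpu hnup hnw1p
      have hpline : p ∉ S.lineOf u w1 := by
        intro hmem
        rcases (mem_lineOf_iff hcuw1).mp hmem with h | h | h
        · exact hpu h
        · exact hw1Q (h ▸ hpQ)
        · exact hf4Q (h ▸ hpQ)
      obtain ⟨p', ⟨hp'l, hp'c⟩, -⟩ := exists_unique_col hGQ (lineOf_mem_lines hcuw1) hpline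
      rcases (mem_lineOf_iff hcuw1).mp hp'l with h | h | h
      · exact absurd (h ▸ hp'c).symm' hnup
      · exact absurd (h ▸ hp'c).symm' hnw1p
      · exact h ▸ hp'c
    exact ⟨⟨key _ haQ hua' (noncol_symm hua) hnw1a, haQ⟩,
      ⟨key _ hbQ hub' (noncol_symm hub) hnw1b, hbQ⟩⟩
  -- collect the six points
  obtain ⟨hz1Q, hxz1, hyz1⟩ := hz1
  obtain ⟨hz2Q, hxz2, hyz2⟩ := hz2
  obtain ⟨hz3Q, hxz3, hyz3⟩ := hz3
  obtain ⟨⟨ha1f, ha1Q⟩, ⟨hb1f, hb1Q⟩⟩ := sixcol z1 hz1Q hxz1 hyz1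
  obtain ⟨⟨ha2f, ha2Q⟩, ⟨hb2f, hb2Q⟩⟩ := sixcol z2 hz2Q hxz2 hyz2
  obtain ⟨⟨ha3f, ha3Q⟩, ⟨hb3f, hb3Q⟩⟩ := sixcol z3 hz3Q hxz3 hyz3
  -- distinctness of the six points
  have hadist : ∀ v za zb : P, S.Collinear v za → S.Collinear v zb →
      ¬ S.Collinear za zb → za ≠ zb → S.star v za ≠ S.star v zb := by
    intro v za zb hxa hxb hnab hab h
    have hmem : S.star v za ∈ S.lineOf v zb := h ▸ star_mem_lineOf hxb
    have heq : S.lineOf v za = S.lineOf v zb :=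
      S.unique_line _ (lineOf_mem_lines hxa) _ (lineOf_mem_lines hxb) v (S.star v za)
        (Ne.symm (star_ne_left hxa)) (left_mem_lineOf hxa) (star_mem_lineOf hxa)
        (left_mem_lineOf hxb) hmem
    have : zb ∈ S.lineOf v za := heq ▸ right_mem_lineOf hxb
    rcases (mem_lineOf_iff hxa).mp this with hh | hh | hh
    · exact hxb.ne hh.symm
    · exact hab hh.symm
    · exact hnab (show S.Collinear za zb by rw [hh]; exact col_star_right hxa)
  have hab' : ∀ za zb : P, S.Collinear x za → S.Collinear y zb → S.Collinear y za →
      S.star x za ≠ S.star y zb := by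
    intro za zb hxa hyb hya
    have hyA := (cfgA hGQ (noncol_symm hxy) hxy'.symm hya hxa).1
    exact fun h => hyA (by rw [h]; exact col_star_left hyb)
  -- the six lines through f4
  have hlinj : ∀ p q : P, p ∈ Q → q ∈ Q → p ≠ q →
      (hpc : S.Collinear p (S.star u w1)) → (hqc : S.Collinear q (S.star u w1)) →
      S.lineOf p (S.star u w1) ≠ S.lineOf q (S.star u w1) := by
    intro p q hpQ hqQ hpq hpc hqc heq
    have hqmem : q ∈ S.lineOf p (S.star u w1) := heq ▸ left_mem_lineOf hqc
    have hsub : (↑(S.lineOf p (S.star u w1)) : Set P) ⊆ Q :=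
      hQsub _ (lineOf_mem_lines hpc) p (left_mem_lineOf hpc) q hqmem hpq hpQ hqQ
    exact hf4Q (hsub (right_mem_lineOf hpc))
  -- pigeonhole: six distinct lines through f4, but only five exist
  have h5 := hGQ.2.2.1 (S.star u w1)
  have hLfin : {l | l ∈ S.lines ∧ S.star u w1 ∈ l}.Finite := by
    by_contra h
    rw [Set.Infinite.ncard h] at h5
    omega
  set n1 := S.lineOf (S.star x z1) (S.star u w1) with hn1
  set n2 := S.lineOf (S.star x z2) (S.star u w1) with hn2
  set n3 := S.lineOf (S.star x z3) (S.star u w1) with hn3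
  set n4 := S.lineOf (S.star y z1) (S.star u w1) with hn4
  set n5 := S.lineOf (S.star y z2) (S.star u w1) with hn5
  set n6 := S.lineOf (S.star y z3) (S.star u w1) with hn6
  have hmemL : ∀ p : P, (hpc : S.Collinear p (S.star u w1)) →
      S.lineOf p (S.star u w1) ∈ {l | l ∈ S.lines ∧ S.star u w1 ∈ l} :=
    fun p hpc => ⟨lineOf_mem_lines hpc, right_mem_lineOf hpc⟩
  have d12 := hlinj _ _ ha1Q ha2Q (hadist x z1 z2 hxz1 hxz2 h12.1 h12.2) ha1f ha2f
  have d13 := hlinj _ _ ha1Q ha3Q (hadist x z1 z3 hxz1 hxz3 h13.1 h13.2) ha1f ha3f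
  have d23 := hlinj _ _ ha2Q ha3Q (hadist x z2 z3 hxz2 hxz3 h23.1 h23.2) ha2f ha3f
  have d45 := hlinj _ _ hb1Q hb2Q (hadist y z1 z2 hyz1 hyz2 h12.1 h12.2) hb1f hb2f
  have d46 := hlinj _ _ hb1Q hb3Q (hadist y z1 z3 hyz1 hyz3 h13.1 h13.2) hb1f hb3f
  have d56 := hlinj _ _ hb2Q hb3Q (hadist y z2 z3 hyz2 hyz3 h23.1 h23.2) hb2f hb3f
  have d14 := hlinj _ _ ha1Q hb1Q (hab' z1 z1 hxz1 hyz1 hyz1) ha1f hb1f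
  have d15 := hlinj _ _ ha1Q hb2Q (hab' z1 z2 hxz1 hyz2 hyz1) ha1f hb2f
  have d16 := hlinj _ _ ha1Q hb3Q (hab' z1 z3 hxz1 hyz3 hyz1) ha1f hb3f
  have d24 := hlinj _ _ ha2Q hb1Q (hab' z2 z1 hxz2 hyz1 hyz2) ha2f hb1f
  have d25 := hlinj _ _ ha2Q hb2Q (hab' z2 z2 hxz2 hyz2 hyz2) ha2f hb2f
  have d26 := hlinj _ _ ha2Q hb3Q (hab' z2 z3 hxz2 hyz3 hyz2) ha2f hb3f
  have d34 := hlinj _ _ ha3Q hb1Q (hab' z3 z1 hxz3 hyz1 hyz3) ha3f hb1f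
  have d35 := hlinj _ _ ha3Q hb2Q (hab' z3 z2 hxz3 hyz2 hyz3) ha3f hb2f
  have d36 := hlinj _ _ ha3Q hb3Q (hab' z3 z3 hxz3 hyz3 hyz3) ha3f hb3f
  have hsub6 : ({n1, n2, n3, n4, n5, n6} : Set (Finset P)) ⊆
      {l | l ∈ S.lines ∧ S.star u w1 ∈ l} := by
    intro l hl
    rcases hl with rfl | rfl | rfl | rfl | rfl | rfl
    · exact hmemL _ ha1f
    · exact hmemL _ ha2f
    · exact hmemL _ ha3f
    · exact hmemL _ hb1f
    · exact hmemL _ hb2f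
    · exact hmemL _ hb3f
  have hcard6 : ({n1, n2, n3, n4, n5, n6} : Set (Finset P)).ncard = 6 := by
    rw [Set.ncard_insert_of_notMem (by simp [hn1, hn2, hn3, hn4, hn5, hn6, d12, d13, d14, d15, d16]),
      Set.ncard_insert_of_notMem (by simp [hn1, hn2, hn3, hn4, hn5, hn6, d23, d24, d25, d26]),
      Set.ncard_insert_of_notMem (by simp [hn1, hn2, hn3, hn4, hn5, hn6, d34, d35, d36]),
      Set.ncard_insert_of_notMem (by simp [hn1, hn2, hn3, hn4, hn5, hn6, d45, d46]),
      Set.ncard_insert_of_notMem (by simp [hn1, hn2, hn3, hn4, hn5, hn6, d56]),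
      Set.ncard_singleton]
  have hle := Set.ncard_le_ncard hsub6 hLfin
  rw [hcard6, h5] at hle
  omega

end SlimPLS
namespace SlimPLS

variable {P : Type*} {S : SlimPLS P} {t : ℕ} {Q : Set P}
variable {R : Type*} [Group R]

/-- Two distinct non-collinear points collinear with `v` give distinct stars. -/
lemma star_ne_star {v za zb : P} (hxa : S.Collinear v za) (hxb : S.Collinear v zb)
    (hnab : ¬ S.Collinear za zb) (hab : za ≠ zb) : S.star v za ≠ S.star v zb := by
  intro h
  have hmem : S.star v za ∈ S.lineOf v zb := h ▸ star_mem_lineOf hxb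
  have heq : S.lineOf v za = S.lineOf v zb :=
    S.unique_line _ (lineOf_mem_lines hxa) _ (lineOf_mem_lines hxb) v (S.star v za)
      (Ne.symm (star_ne_left hxa)) (left_mem_lineOf hxa) (star_mem_lineOf hxa)
      (left_mem_lineOf hxb) hmem
  have : zb ∈ S.lineOf v za := heq ▸ right_mem_lineOf hxb
  rcases (mem_lineOf_iff hxa).mp this with hh | hh | hh
  · exact hxb.ne hh.symm
  · exact hab hh.symm
  · exact hnab (show S.Collinear za zb by rw [hh]; exact col_star_right hxa)

/-- The two lines through `v` and distinct non-collinear `za, zb` are distinct. -/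
lemma lineOf_ne (hGQ : S.IsGQ t) {v za zb : P} (hxa : S.Collinear v za)
    (hxb : S.Collinear v zb) (hnab : ¬ S.Collinear za zb) (hab : za ≠ zb) :
    S.lineOf v za ≠ S.lineOf v zb := by
  intro h
  have : zb ∈ S.lineOf v za := h ▸ right_mem_lineOf hxb
  rcases (mem_lineOf_iff hxa).mp this with hh | hh | hh
  · exact hxb.ne hh.symm
  · exact hab hh.symm
  · exact hnab (show S.Collinear za zb by rw [hh]; exact col_star_right hxa)

/-- Sibling stars at a common apex are non-collinear. -/
lemma sibling_noncol (hGQ : S.IsGQ t) {v za zb : P} (hva : S.Collinear v za)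
    (hvb : S.Collinear v zb) (hnc : ¬ S.Collinear za zb) (hne : za ≠ zb) :
    ¬ S.Collinear (S.star v za) (S.star v zb) := by
  intro hcol
  have hmem := triangle_mem hGQ (col_star_left hva) (col_star_left hvb) hcol
  have heq : S.lineOf v za = S.lineOf v (S.star v za) :=
    line_eq_lineOf (col_star_left hva) (lineOf_mem_lines hva) (left_mem_lineOf hva)
      (star_mem_lineOf hva)
  rw [← heq] at hmem
  rcases (mem_lineOf_iff hva).mp hmem with h | h | h
  · exact (star_ne_left hvb) h
  · exact hnc (show S.Collinear za zb from
      (show S.Collinear zb za by rw [← h]; exact col_star_right hvb).symm')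
  · exact star_ne_star hva hvb hnc hne h.symm

/-- Exhaustiveness of a triple of Q-lines through a point of Q. -/
lemma qlines_exhaust (hQ3 : ∀ p ∈ Q, {l | l ∈ S.lines ∧ p ∈ l ∧ (↑l : Set P) ⊆ Q}.ncard = 2 + 1)
    {p : P} (hp : p ∈ Q) {la lb lc : Finset P}
    (ha : la ∈ S.lines) (hpa : p ∈ la) (hsa : (↑la : Set P) ⊆ Q)
    (hb : lb ∈ S.lines) (hpb : p ∈ lb) (hsb : (↑lb : Set P) ⊆ Q)
    (hc : lc ∈ S.lines) (hpc : p ∈ lc) (hsc : (↑lc : Set P) ⊆ Q)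
    (hab : la ≠ lb) (hac : la ≠ lc) (hbc : lb ≠ lc)
    {l : Finset P} (hl : l ∈ S.lines) (hpl : p ∈ l) (hsl : (↑l : Set P) ⊆ Q) :
    l = la ∨ l = lb ∨ l = lc := by
  have hT : {l | l ∈ S.lines ∧ p ∈ l ∧ (↑l : Set P) ⊆ Q}.ncard = 3 := hQ3 p hp
  have hfin : {l | l ∈ S.lines ∧ p ∈ l ∧ (↑l : Set P) ⊆ Q}.Finite := by
    obtain ⟨u1, u2, u3, -, -, -, hset⟩ := Set.ncard_eq_three.mp hT
    rw [hset]
    exact Set.toFinite _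
  have hsub : ({la, lb, lc} : Set (Finset P)) ⊆
      {l | l ∈ S.lines ∧ p ∈ l ∧ (↑l : Set P) ⊆ Q} := by
    intro l' hl'
    rcases hl' with rfl | rfl | rfl
    · exact ⟨ha, hpa, hsa⟩
    · exact ⟨hb, hpb, hsb⟩
    · exact ⟨hc, hpc, hsc⟩
  have hcard : ({la, lb, lc} : Set (Finset P)).ncard = 3 :=
    Set.ncard_eq_three.mpr ⟨la, lb, lc, hab, hac, hbc, rfl⟩
  have heq := Set.eq_of_subset_of_ncard_le hsub (by rw [hT, hcard]) hfin
  have : l ∈ ({la, lb, lc} : Set (Finset P)) := by rw [heq]; exact ⟨hl, hpl, hsl⟩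
  simpa using this

/-- Generation: every `r w`, `w ∈ Q`, lies in the subgroup generated by the five. -/
lemma generation (hGQ : S.IsGQ 4) (hQ : S.IsSubGQ Q 2) (ρ : S.Rep R)
    {x y z1 z2 z3 : P} (hx : x ∈ Q) (hy : y ∈ Q)
    (hxy : ¬ S.Collinear x y) (hxy' : x ≠ y)
    (hz1Q : z1 ∈ Q) (hxz1 : S.Collinear x z1) (hyz1 : S.Collinear y z1)
    (hz2Q : z2 ∈ Q) (hxz2 : S.Collinear x z2) (hyz2 : S.Collinear y z2)
    (hz3Q : z3 ∈ Q) (hxz3 : S.Collinear x z3) (hyz3 : S.Collinear y z3)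
    (hnc12 : ¬ S.Collinear z1 z2) (hne12 : z1 ≠ z2)
    (hnc13 : ¬ S.Collinear z1 z3) (hne13 : z1 ≠ z3)
    (hnc23 : ¬ S.Collinear z2 z3) (hne23 : z2 ≠ z3) :
    ∀ w ∈ Q, ρ.r w ∈ Subgroup.closure {ρ.r x, ρ.r y, ρ.r z1, ρ.r z2, ρ.r z3} := by
  have hQsub := hQ.2.2.1
  have hQ3 := hQ.2.2.2.2.2.1
  set H := Subgroup.closure {ρ.r x, ρ.r y, ρ.r z1, ρ.r z2, ρ.r z3} with hH
  have hrx : ρ.r x ∈ H := Subgroup.subset_closure (by simp)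
  have hry : ρ.r y ∈ H := Subgroup.subset_closure (by simp)
  have hrz1 : ρ.r z1 ∈ H := Subgroup.subset_closure (by simp)
  have hrz2 : ρ.r z2 ∈ H := Subgroup.subset_closure (by simp)
  have hrz3 : ρ.r z3 ∈ H := Subgroup.subset_closure (by simp)
  -- products of generators along lines stay in H
  have lineH : ∀ v z w : P, S.Collinear v z → ρ.r v ∈ H → ρ.r z ∈ H →
      w ∈ S.lineOf v z → ρ.r w ∈ H := by
    intro v z w hvz hv hz hw
    rcases (mem_lineOf_iff hvz).mp hw with rfl | rfl | rfl
    · exact hv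
    · exact hz
    · rw [← ρ.r_star hvz]; exact mul_mem hv hz
  have hra1 : ρ.r (S.star x z1) ∈ H := by rw [← ρ.r_star hxz1]; exact mul_mem hrx hrz1
  have hrb2 : ρ.r (S.star y z2) ∈ H := by rw [← ρ.r_star hyz2]; exact mul_mem hry hrz2
  have hrb3 : ρ.r (S.star y z3) ∈ H := by rw [← ρ.r_star hyz3]; exact mul_mem hry hrz3
  -- abbreviations
  have hC12 := cfgC hGQ hxy hxy' hxz1 hxz2 hyz1 hyz2 hnc12 hne12
  have hC13 := cfgC hGQ hxy hxy' hxz1 hxz3 hyz1 hyz3 hnc13 hne13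
  have hrm12 : ρ.r (S.star (S.star x z1) (S.star y z2)) ∈ H := by
    rw [← ρ.r_star hC12]; exact mul_mem hra1 hrb2
  -- Q-memberships of the derived points
  have subline : ∀ v z : P, v ∈ Q → z ∈ Q → (h : S.Collinear v z) →
      (↑(S.lineOf v z) : Set P) ⊆ Q := by
    intro v z hv hz h
    exact hQsub _ (lineOf_mem_lines h) v (left_mem_lineOf h) z (right_mem_lineOf h) h.ne hv hz
  have ha1Q : S.star x z1 ∈ Q := subline x z1 hx hz1Q hxz1 (star_mem_lineOf hxz1)
  have ha2Q : S.star x z2 ∈ Q := subline x z2 hx hz2Q hxz2 (star_mem_lineOf hxz2)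
  have ha3Q : S.star x z3 ∈ Q := subline x z3 hx hz3Q hxz3 (star_mem_lineOf hxz3)
  have hb1Q : S.star y z1 ∈ Q := subline y z1 hy hz1Q hyz1 (star_mem_lineOf hyz1)
  have hb2Q : S.star y z2 ∈ Q := subline y z2 hy hz2Q hyz2 (star_mem_lineOf hyz2)
  have hb3Q : S.star y z3 ∈ Q := subline y z3 hy hz3Q hyz3 (star_mem_lineOf hyz3)
  have hm12Q : S.star (S.star x z1) (S.star y z2) ∈ Q :=
    subline _ _ ha1Q hb2Q hC12 (star_mem_lineOf hC12)
  -- non-collinearity facts around m12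
  obtain ⟨hxb2, hxb2'⟩ := cfgA hGQ hxy hxy' hxz2 hyz2
  obtain ⟨hxb3, hxb3'⟩ := cfgA hGQ hxy hxy' hxz3 hyz3
  obtain ⟨hxb1, hxb1'⟩ := cfgA hGQ hxy hxy' hxz1 hyz1
  obtain ⟨hya1, hya1'⟩ := cfgA hGQ (noncol_symm hxy) hxy'.symm hyz1 hxz1
  obtain ⟨hya2, hya2'⟩ := cfgA hGQ (noncol_symm hxy) hxy'.symm hyz2 hxz2
  obtain ⟨hya3, hya3'⟩ := cfgA hGQ (noncol_symm hxy) hxy'.symm hyz3 hxz3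
  obtain ⟨hz1b2, hz1b2'⟩ := cfgB hGQ hyz1 hyz2 hnc12 hne12
  obtain ⟨hz2a1, hz2a1'⟩ := cfgB hGQ hxz2 hxz1 (noncol_symm hnc12) hne12.symm
  obtain ⟨hz3a1, hz3a1'⟩ := cfgB hGQ hxz3 hxz1 (noncol_symm hnc13) hne13.symm
  obtain ⟨hz3b2, hz3b2'⟩ := cfgB hGQ hyz3 hyz2 (noncol_symm hnc23) hne23.symm
  obtain ⟨hz1a2, hz1a2'⟩ := cfgB hGQ hxz1 hxz2 hnc12 hne12
  obtain ⟨hz1a3, hz1a3'⟩ := cfgB hGQ hxz1 hxz3 hnc13 hne13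
  obtain ⟨hz2b1, hz2b1'⟩ := cfgB hGQ hyz2 hyz1 (noncol_symm hnc12) hne12.symm
  obtain ⟨hz2a3, hz2a3'⟩ := cfgB hGQ hxz2 hxz3 hnc23 hne23
  obtain ⟨hz3b1, hz3b1'⟩ := cfgB hGQ hyz3 hyz1 (noncol_symm hnc13) hne13.symm
  obtain ⟨hz2b3, hz2b3'⟩ := cfgB hGQ hyz2 hyz3 hnc23 hne23
  -- z3 is collinear with m12
  have hz3m12 : S.Collinear z3 (S.star (S.star x z1) (S.star y z2)) := by
    have hnm : z3 ∉ S.lineOf (S.star x z1) (S.star y z2) := by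
      intro hmem
      rcases (mem_lineOf_iff hC12).mp hmem with h | h | h
      · exact hz3a1' h
      · exact hz3b2' h
      · have hc := col_star_left hC12
        rw [← h] at hc
        exact hz3a1 hc.symm'
    obtain ⟨p, ⟨hpl, hpc⟩, -⟩ := exists_unique_col hGQ (lineOf_mem_lines hC12) hnm
    rcases (mem_lineOf_iff hC12).mp hpl with h | h | h
    · exact absurd (h ▸ hpc) hz3a1
    · exact absurd (h ▸ hpc) hz3b2
    · exact h ▸ hpc
  set s := S.star z3 (S.star (S.star x z1) (S.star y z2)) with hs_def
  have hrs : ρ.r s ∈ H := by rw [hs_def, ← ρ.r_star hz3m12]; exact mul_mem hrz3 hrm12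
  have hsQ : s ∈ Q := subline _ _ hz3Q hm12Q hz3m12 (star_mem_lineOf hz3m12)
  have hz3s : S.Collinear z3 s := col_star_left hz3m12
  -- x is not collinear with m12
  have hxm12 : ¬ S.Collinear x (S.star (S.star x z1) (S.star y z2)) := by
    have hxline : x ∉ S.lineOf (S.star x z1) (S.star y z2) := by
      intro hmem
      rcases (mem_lineOf_iff hC12).mp hmem with h | h | h
      · exact (star_ne_left hxz1) h.symm
      · exact hxb2' h
      · exact hxb2 (by rw [h]; exact (col_star_right hC12).symm')
    exact not_col_of_other hGQ (lineOf_mem_lines hC12) hxline (left_mem_lineOf hC12)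
      (col_star_left hxz1) (star_mem_lineOf hC12) (star_ne_left hC12)
  have hxm12' : x ≠ S.star (S.star x z1) (S.star y z2) :=
    ne_of_noncol_col hxb2 ((col_star_right hC12).symm')
  -- y is not collinear with m12
  have hym12 : ¬ S.Collinear y (S.star (S.star x z1) (S.star y z2)) := by
    have hyline : y ∉ S.lineOf (S.star x z1) (S.star y z2) := by
      intro hmem
      rcases (mem_lineOf_iff hC12).mp hmem with h | h | h
      · exact hya1' h
      · exact (star_ne_left hyz2) h.symm
      · exact hya1 (by rw [h]; exact (col_star_left hC12).symm')
    exact not_col_of_other hGQ (lineOf_mem_lines hC12) hyline (right_mem_lineOf hC12)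
      (col_star_left hyz2) (star_mem_lineOf hC12) (star_ne_right hC12)
  have hym12' : y ≠ S.star (S.star x z1) (S.star y z2) :=
    ne_of_noncol_col hya1 ((col_star_left hC12).symm')
  -- x, y are not collinear with s
  have hxs : ¬ S.Collinear x s ∧ x ≠ s := by
    have hxline : x ∉ S.lineOf z3 (S.star (S.star x z1) (S.star y z2)) := by
      intro hmem
      rcases (mem_lineOf_iff hz3m12).mp hmem with h | h | h
      · exact hxz3.ne h
      · exact hxm12' h
      · have hc := (col_star_right hz3m12).symm'
        rw [← h] at hc
        exact hxm12 hc
    refine ⟨?_, ne_of_noncol_col hxm12 ((col_star_right hz3m12).symm')⟩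
    rw [hs_def]
    exact not_col_of_other hGQ (lineOf_mem_lines hz3m12) hxline (left_mem_lineOf hz3m12)
      hxz3 (star_mem_lineOf hz3m12) (star_ne_left hz3m12)
  have hys : ¬ S.Collinear y s ∧ y ≠ s := by
    have hyline : y ∉ S.lineOf z3 (S.star (S.star x z1) (S.star y z2)) := by
      intro hmem
      rcases (mem_lineOf_iff hz3m12).mp hmem with h | h | h
      · exact hyz3.ne h
      · exact hym12' h
      · have hc := (col_star_right hz3m12).symm'
        rw [← h] at hc
        exact hym12 hc
    refine ⟨?_, ne_of_noncol_col hym12 ((col_star_right hz3m12).symm')⟩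
    rw [hs_def]
    exact not_col_of_other hGQ (lineOf_mem_lines hz3m12) hyline (left_mem_lineOf hz3m12)
      hyz3 (star_mem_lineOf hz3m12) (star_ne_left hz3m12)
  -- z1 and z2 are not collinear with m12
  have hz1m12 : ¬ S.Collinear z1 (S.star (S.star x z1) (S.star y z2)) ∧
      z1 ≠ S.star (S.star x z1) (S.star y z2) := by
    have hline : z1 ∉ S.lineOf (S.star x z1) (S.star y z2) := by
      intro hmem
      rcases (mem_lineOf_iff hC12).mp hmem with h | h | h
      · exact (star_ne_right hxz1) h.symm
      · exact hz1b2' h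
      · exact hz1b2 (by rw [h]; exact (col_star_right hC12).symm')
    exact ⟨not_col_of_other hGQ (lineOf_mem_lines hC12) hline (left_mem_lineOf hC12)
      (col_star_right hxz1) (star_mem_lineOf hC12) (star_ne_left hC12),
      ne_of_noncol_col hz1b2 ((col_star_right hC12).symm')⟩
  have hz2m12 : ¬ S.Collinear z2 (S.star (S.star x z1) (S.star y z2)) ∧
      z2 ≠ S.star (S.star x z1) (S.star y z2) := by
    have hline : z2 ∉ S.lineOf (S.star x z1) (S.star y z2) := by
      intro hmem
      rcases (mem_lineOf_iff hC12).mp hmem with h | h | h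
      · exact hz2a1' h
      · exact (star_ne_right hyz2) h.symm
      · exact hz2a1 (by rw [h]; exact (col_star_left hC12).symm')
    exact ⟨not_col_of_other hGQ (lineOf_mem_lines hC12) hline (right_mem_lineOf hC12)
      (col_star_right hyz2) (star_mem_lineOf hC12) (star_ne_right hC12),
      ne_of_noncol_col hz2a1 ((col_star_left hC12).symm')⟩
  -- z1 and z2 are collinear with s
  have hz1s : S.Collinear z1 s := by
    have hline : z1 ∉ S.lineOf z3 (S.star (S.star x z1) (S.star y z2)) := by
      intro hmem
      rcases (mem_lineOf_iff hz3m12).mp hmem with h | h | h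
      · exact hne13 h
      · exact hz1m12.2 h
      · have hc := col_star_left hz3m12
        rw [← h] at hc
        exact (noncol_symm hnc13) hc
    obtain ⟨p, ⟨hpl, hpc⟩, -⟩ := exists_unique_col hGQ (lineOf_mem_lines hz3m12) hline
    rcases (mem_lineOf_iff hz3m12).mp hpl with h | h | h
    · exact absurd (h ▸ hpc) hnc13
    · exact absurd (h ▸ hpc) hz1m12.1
    · rw [h] at hpc; exact hpc
  have hz2s : S.Collinear z2 s := by
    have hline : z2 ∉ S.lineOf z3 (S.star (S.star x z1) (S.star y z2)) := by
      intro hmem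
      rcases (mem_lineOf_iff hz3m12).mp hmem with h | h | h
      · exact hne23 h
      · exact hz2m12.2 h
      · have hc := col_star_left hz3m12
        rw [← h] at hc
        exact (noncol_symm hnc23) hc
    obtain ⟨p, ⟨hpl, hpc⟩, -⟩ := exists_unique_col hGQ (lineOf_mem_lines hz3m12) hline
    rcases (mem_lineOf_iff hz3m12).mp hpl with h | h | h
    · exact absurd (h ▸ hpc) hnc23
    · exact absurd (h ▸ hpc) hz2m12.1
    · rw [h] at hpc; exact hpc
  -- the main case analysis
  intro w hw
  by_cases hwx : w = x
  · rw [hwx]; exact hrx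
  by_cases hwy : w = y
  · rw [hwy]; exact hry
  by_cases hwz1 : w = z1
  · rw [hwz1]; exact hrz1
  by_cases hwz2 : w = z2
  · rw [hwz2]; exact hrz2
  by_cases hwz3 : w = z3
  · rw [hwz3]; exact hrz3
  by_cases hcxw : S.Collinear x w
  · -- w is a neighbour of x
    have hexh := qlines_exhaust hQ3 hx
      (lineOf_mem_lines hxz1) (left_mem_lineOf hxz1) (subline x z1 hx hz1Q hxz1)
      (lineOf_mem_lines hxz2) (left_mem_lineOf hxz2) (subline x z2 hx hz2Q hxz2)
      (lineOf_mem_lines hxz3) (left_mem_lineOf hxz3) (subline x z3 hx hz3Q hxz3)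
      (lineOf_ne hGQ hxz1 hxz2 hnc12 hne12) (lineOf_ne hGQ hxz1 hxz3 hnc13 hne13)
      (lineOf_ne hGQ hxz2 hxz3 hnc23 hne23)
      (lineOf_mem_lines hcxw) (left_mem_lineOf hcxw) (subline x w hx hw hcxw)
    rcases hexh with h | h | h
    · exact lineH x z1 w hxz1 hrx hrz1 (h ▸ right_mem_lineOf hcxw)
    · exact lineH x z2 w hxz2 hrx hrz2 (h ▸ right_mem_lineOf hcxw)
    · exact lineH x z3 w hxz3 hrx hrz3 (h ▸ right_mem_lineOf hcxw)
  by_cases hcyw : S.Collinear y w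
  · have hexh := qlines_exhaust hQ3 hy
      (lineOf_mem_lines hyz1) (left_mem_lineOf hyz1) (subline y z1 hy hz1Q hyz1)
      (lineOf_mem_lines hyz2) (left_mem_lineOf hyz2) (subline y z2 hy hz2Q hyz2)
      (lineOf_mem_lines hyz3) (left_mem_lineOf hyz3) (subline y z3 hy hz3Q hyz3)
      (lineOf_ne hGQ hyz1 hyz2 hnc12 hne12) (lineOf_ne hGQ hyz1 hyz3 hnc13 hne13)
      (lineOf_ne hGQ hyz2 hyz3 hnc23 hne23)
      (lineOf_mem_lines hcyw) (left_mem_lineOf hcyw) (subline y w hy hw hcyw)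
    rcases hexh with h | h | h
    · exact lineH y z1 w hyz1 hry hrz1 (h ▸ right_mem_lineOf hcyw)
    · exact lineH y z2 w hyz2 hry hrz2 (h ▸ right_mem_lineOf hcyw)
    · exact lineH y z3 w hyz3 hry hrz3 (h ▸ right_mem_lineOf hcyw)
  -- helper for the common-neighbour case
  have caseIV : ∀ z : P, z ∈ Q → S.Collinear x z → S.Collinear y z → S.Collinear z s →
      ρ.r z ∈ H → S.Collinear z w → ρ.r w ∈ H := by
    intro z hzQ hxz hyz hzs hrz hczw
    have hd1 : S.lineOf x z ≠ S.lineOf y z := by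
      intro h
      have : x ∈ S.lineOf y z := h ▸ left_mem_lineOf hxz
      rcases (mem_lineOf_iff hyz).mp this with hh | hh | hh
      · exact hxy' hh
      · exact hxz.ne hh
      · have hc := col_star_left hyz
        rw [← hh] at hc
        exact hxy hc.symm'
    have hd2 : S.lineOf x z ≠ S.lineOf z s := by
      intro h
      have : s ∈ S.lineOf x z := h ▸ right_mem_lineOf hzs
      rcases (mem_lineOf_iff hxz).mp this with hh | hh | hh
      · exact hxs.2 hh.symm
      · exact hzs.ne hh.symm
      · exact hxs.1 (by rw [hh]; exact col_star_left hxz)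
    have hd3 : S.lineOf y z ≠ S.lineOf z s := by
      intro h
      have : s ∈ S.lineOf y z := h ▸ right_mem_lineOf hzs
      rcases (mem_lineOf_iff hyz).mp this with hh | hh | hh
      · exact hys.2 hh.symm
      · exact hzs.ne hh.symm
      · exact hys.1 (by rw [hh]; exact col_star_left hyz)
    have hexh := qlines_exhaust hQ3 hzQ
      (lineOf_mem_lines hxz) (right_mem_lineOf hxz) (subline x z hx hzQ hxz)
      (lineOf_mem_lines hyz) (right_mem_lineOf hyz) (subline y z hy hzQ hyz)
      (lineOf_mem_lines hzs) (left_mem_lineOf hzs) (subline z s hzQ hsQ hzs)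
      hd1 hd2 hd3
      (lineOf_mem_lines hczw) (left_mem_lineOf hczw) (subline z w hzQ hw hczw)
    rcases hexh with h | h | h
    · have hmem : w ∈ S.lineOf x z := h ▸ right_mem_lineOf hczw
      rcases (mem_lineOf_iff hxz).mp hmem with hh | hh | hh
      · exact absurd hh hwx
      · exact absurd (hh ▸ hczw) (fun hc => hc.ne rfl)
      · exact absurd (show S.Collinear x w by rw [hh]; exact col_star_left hxz) hcxw
    · have hmem : w ∈ S.lineOf y z := h ▸ right_mem_lineOf hczw
      rcases (mem_lineOf_iff hyz).mp hmem with hh | hh | hh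
      · exact absurd hh hwy
      · exact absurd (hh ▸ hczw) (fun hc => hc.ne rfl)
      · exact absurd (show S.Collinear y w by rw [hh]; exact col_star_left hyz) hcyw
    · exact lineH z s w hzs hrz hrs (h ▸ right_mem_lineOf hczw)
  by_cases hcz1w : S.Collinear z1 w
  · exact caseIV z1 hz1Q hxz1 hyz1 hz1s hrz1 hcz1w
  by_cases hcz2w : S.Collinear z2 w
  · exact caseIV z2 hz2Q hxz2 hyz2 hz2s hrz2 hcz2w
  by_cases hcz3w : S.Collinear z3 w
  · exact caseIV z3 hz3Q hxz3 hyz3 hz3s hrz3 hcz3w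
  -- final case: w is collinear with star x z1
  obtain ⟨hz1b3, hz1b3'⟩ := cfgB hGQ hyz1 hyz3 hnc13 hne13
  have hwa1 : S.Collinear w (S.star x z1) := by
    have hline : w ∉ S.lineOf x z1 := by
      intro hmem
      rcases (mem_lineOf_iff hxz1).mp hmem with h | h | h
      · exact hwx h
      · exact hwz1 h
      · exact hcxw (by rw [h]; exact col_star_left hxz1)
    obtain ⟨p, ⟨hpl, hpc⟩, -⟩ := exists_unique_col hGQ (lineOf_mem_lines hxz1) hline
    rcases (mem_lineOf_iff hxz1).mp hpl with h | h | h
    · exact absurd (h ▸ hpc).symm' hcxw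
    · exact absurd (h ▸ hpc) (fun hc => hcz1w hc.symm')
    · exact h ▸ hpc
  have hd1 : S.lineOf x z1 ≠ S.lineOf (S.star x z1) (S.star y z2) := by
    intro h
    have : S.star y z2 ∈ S.lineOf x z1 := h ▸ right_mem_lineOf hC12
    rcases (mem_lineOf_iff hxz1).mp this with hh | hh | hh
    · exact hxb2' hh.symm
    · exact hz1b2' hh.symm
    · exact hxb2 (by rw [hh]; exact col_star_left hxz1)
  have hd2 : S.lineOf x z1 ≠ S.lineOf (S.star x z1) (S.star y z3) := by
    intro h
    have : S.star y z3 ∈ S.lineOf x z1 := h ▸ right_mem_lineOf hC13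
    rcases (mem_lineOf_iff hxz1).mp this with hh | hh | hh
    · exact hxb3' hh.symm
    · exact hz1b3' hh.symm
    · exact hxb3 (by rw [hh]; exact col_star_left hxz1)
  have hd3 : S.lineOf (S.star x z1) (S.star y z2) ≠ S.lineOf (S.star x z1) (S.star y z3) :=
    lineOf_ne hGQ hC12 hC13 (sibling_noncol hGQ hyz2 hyz3 hnc23 hne23)
      (star_ne_star hyz2 hyz3 hnc23 hne23)
  have hexh := qlines_exhaust hQ3 ha1Q
    (lineOf_mem_lines hxz1) (star_mem_lineOf hxz1) (subline x z1 hx hz1Q hxz1)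
    (lineOf_mem_lines hC12) (left_mem_lineOf hC12) (subline _ _ ha1Q hb2Q hC12)
    (lineOf_mem_lines hC13) (left_mem_lineOf hC13) (subline _ _ ha1Q hb3Q hC13)
    hd1 hd2 hd3
    (lineOf_mem_lines hwa1.symm') (left_mem_lineOf hwa1.symm')
    (subline _ w ha1Q hw hwa1.symm')
  rcases hexh with h | h | h
  · have hmem : w ∈ S.lineOf x z1 := h ▸ right_mem_lineOf hwa1.symm'
    rcases (mem_lineOf_iff hxz1).mp hmem with hh | hh | hh
    · exact absurd hh hwx
    · exact absurd hh hwz1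
    · exact absurd (show S.Collinear x w by rw [hh]; exact col_star_left hxz1) hcxw
  · exact lineH _ _ w hC12 hra1 hrb2 (h ▸ right_mem_lineOf hwa1.symm')
  · exact lineH _ _ w hC13 hra1 hrb3 (h ▸ right_mem_lineOf hwa1.symm')

end SlimPLS
namespace SlimPLS

variable {P : Type*} {S : SlimPLS P}
variable {R : Type*} [Group R]

lemma Rep.r_cancel (ρ : S.Rep R) {p : P} {X : R} (h : ρ.r p * X = 1) : X = ρ.r p := by
  have h2 : ρ.r p * X = ρ.r p * ρ.r p := by rw [h, ρ.r_sq]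
  exact mul_left_cancel h2

end SlimPLS
open SlimPLS in
/-- For a faithful representation of the `(2,4)`-GQ and a
`(2,2)`-subGQ `Q`, the subgroup generated by `{r_x : x ∈ Q}` has order `2^5`. -/
theorem gq24_subGQ22_closure_card {P : Type*} (S : SlimPLS P)
    (hGQ : S.IsGQ 4) {R : Type*} [Group R] (ρ : S.Rep R)
    (hf : Function.Injective ρ.r)
    (Q : Set P) (hQ : S.IsSubGQ Q 2) :
    Nat.card (Subgroup.closure (ρ.r '' Q)) = 2 ^ 5 := by
  classical
  obtain ⟨x, hx⟩ := hQ.1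
  obtain ⟨y, hy, hyx, hxy⟩ := hQ.2.2.2.2.1 x hx
  have hxy' : x ≠ y := fun h => hyx h.symm
  obtain ⟨z1, z2, z3, ⟨hz1Q, hxz1, hyz1⟩, ⟨hz2Q, hxz2, hyz2⟩, ⟨hz3Q, hxz3, hyz3⟩,
    ⟨hnc12, hne12⟩, ⟨hnc13, hne13⟩, ⟨hnc23, hne23⟩⟩ := exists_z hGQ hQ hx hy hxy hxy'
  have hQsub := hQ.2.2.1
  have hcomm : ∀ u w : P, ρ.r u * ρ.r w = ρ.r w * ρ.r u := fun u w => r_comm_all ρ hGQ u w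
  obtain ⟨hxb1, hxb1'⟩ := cfgA hGQ hxy hxy' hxz1 hyz1
  obtain ⟨hxb2, hxb2'⟩ := cfgA hGQ hxy hxy' hxz2 hyz2
  obtain ⟨hxb3, hxb3'⟩ := cfgA hGQ hxy hxy' hxz3 hyz3
  obtain ⟨hz2a1, hz2a1'⟩ := cfgB hGQ hxz2 hxz1 (noncol_symm hnc12) hne12.symm
  obtain ⟨hz3a1, hz3a1'⟩ := cfgB hGQ hxz3 hxz1 (noncol_symm hnc13) hne13.symm
  obtain ⟨hz3a2, hz3a2'⟩ := cfgB hGQ hxz3 hxz2 (noncol_symm hnc23) hne23.symm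
  obtain ⟨hz2b1, hz2b1'⟩ := cfgB hGQ hyz2 hyz1 (noncol_symm hnc12) hne12.symm
  obtain ⟨hz3b1, hz3b1'⟩ := cfgB hGQ hyz3 hyz1 (noncol_symm hnc13) hne13.symm
  obtain ⟨hz3b2, hz3b2'⟩ := cfgB hGQ hyz3 hyz2 (noncol_symm hnc23) hne23.symm
  have hC12 := cfgC hGQ hxy hxy' hxz1 hxz2 hyz1 hyz2 hnc12 hne12
  have hC13 := cfgC hGQ hxy hxy' hxz1 hxz3 hyz1 hyz3 hnc13 hne13
  have hC23 := cfgC hGQ hxy hxy' hxz2 hxz3 hyz2 hyz3 hnc23 hne23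
  have ha1Q : S.star x z1 ∈ Q :=
    hQsub _ (lineOf_mem_lines hxz1) x (left_mem_lineOf hxz1) z1
      (right_mem_lineOf hxz1) hxz1.ne hx hz1Q (star_mem_lineOf hxz1)
  have hb1Q : S.star y z1 ∈ Q :=
    hQsub _ (lineOf_mem_lines hyz1) y (left_mem_lineOf hyz1) z1
      (right_mem_lineOf hyz1) hyz1.ne hy hz1Q (star_mem_lineOf hyz1)
  have pair_ne : ∀ p q : P, p ≠ q → ρ.r p * ρ.r q ≠ 1 := by
    intro p q hne h
    exact hne (hf (ρ.r_cancel h)).symm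
  -- the kill lemmas for nontrivial products of the five generators
  have K1 : ρ.r z3 = 1 → False := fun h => ρ.r_ne_one z3 h
  have K2 : ρ.r z2 = 1 → False := fun h => ρ.r_ne_one z2 h
  have K3 : ρ.r z2 * ρ.r z3 = 1 → False := fun h => pair_ne z2 z3 hne23 h
  have K4 : ρ.r z1 = 1 → False := fun h => ρ.r_ne_one z1 h
  have K5 : ρ.r z1 * ρ.r z3 = 1 → False := fun h => pair_ne z1 z3 hne13 h
  have K6 : ρ.r z1 * ρ.r z2 = 1 → False := fun h => pair_ne z1 z2 hne12 h
  have K7 : ρ.r z1 * (ρ.r z2 * ρ.r z3) = 1 → False := fun hv => by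
    have h2 := ρ.r_cancel hv
    exact no_triple hGQ hQ ρ hf hz2Q hz3Q hz1Q hnc23 hne23 (noncol_symm hnc12) hne12.symm
      (noncol_symm hnc13) hne13.symm h2
  have K8 : ρ.r y = 1 → False := fun h => ρ.r_ne_one y h
  have K9 : ρ.r y * ρ.r z3 = 1 → False := fun h => pair_ne y z3 hyz3.ne h
  have K10 : ρ.r y * ρ.r z2 = 1 → False := fun h => pair_ne y z2 hyz2.ne h
  have K11 : ρ.r y * (ρ.r z2 * ρ.r z3) = 1 → False := fun hv => by
    rw [← mul_assoc, ρ.r_star hyz2] at hv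
    exact pair_ne _ z3 hz3b2'.symm hv
  have K12 : ρ.r y * ρ.r z1 = 1 → False := fun h => pair_ne y z1 hyz1.ne h
  have K13 : ρ.r y * (ρ.r z1 * ρ.r z3) = 1 → False := fun hv => by
    rw [← mul_assoc, ρ.r_star hyz1] at hv
    exact pair_ne _ z3 hz3b1'.symm hv
  have K14 : ρ.r y * (ρ.r z1 * ρ.r z2) = 1 → False := fun hv => by
    rw [← mul_assoc, ρ.r_star hyz1] at hv
    exact pair_ne _ z2 hz2b1'.symm hv
  have K15 : ρ.r y * (ρ.r z1 * (ρ.r z2 * ρ.r z3)) = 1 → False := fun hv => by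
    rw [← mul_assoc, ρ.r_star hyz1] at hv
    have h2 := ρ.r_cancel hv
    exact no_triple hGQ hQ ρ hf hz2Q hz3Q hb1Q hnc23 hne23 hz2b1 hz2b1' hz3b1 hz3b1' h2
  have K16 : ρ.r x = 1 → False := fun h => ρ.r_ne_one x h
  have K17 : ρ.r x * ρ.r z3 = 1 → False := fun h => pair_ne x z3 hxz3.ne h
  have K18 : ρ.r x * ρ.r z2 = 1 → False := fun h => pair_ne x z2 hxz2.ne h
  have K19 : ρ.r x * (ρ.r z2 * ρ.r z3) = 1 → False := fun hv => by
    rw [← mul_assoc, ρ.r_star hxz2] at hv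
    exact pair_ne _ z3 hz3a2'.symm hv
  have K20 : ρ.r x * ρ.r z1 = 1 → False := fun h => pair_ne x z1 hxz1.ne h
  have K21 : ρ.r x * (ρ.r z1 * ρ.r z3) = 1 → False := fun hv => by
    rw [← mul_assoc, ρ.r_star hxz1] at hv
    exact pair_ne _ z3 hz3a1'.symm hv
  have K22 : ρ.r x * (ρ.r z1 * ρ.r z2) = 1 → False := fun hv => by
    rw [← mul_assoc, ρ.r_star hxz1] at hv
    exact pair_ne _ z2 hz2a1'.symm hv
  have K23 : ρ.r x * (ρ.r z1 * (ρ.r z2 * ρ.r z3)) = 1 → False := fun hv => by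
    rw [← mul_assoc, ρ.r_star hxz1] at hv
    have h2 := ρ.r_cancel hv
    exact no_triple hGQ hQ ρ hf hz2Q hz3Q ha1Q hnc23 hne23 hz2a1 hz2a1' hz3a1 hz3a1' h2
  have K24 : ρ.r x * ρ.r y = 1 → False := fun h => pair_ne x y hxy' h
  have K25 : ρ.r x * (ρ.r y * ρ.r z3) = 1 → False := fun hv => by
    rw [ρ.r_star hyz3] at hv
    exact pair_ne x _ hxb3' hv
  have K26 : ρ.r x * (ρ.r y * ρ.r z2) = 1 → False := fun hv => by
    rw [ρ.r_star hyz2] at hv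
    exact pair_ne x _ hxb2' hv
  have K27 : ρ.r x * (ρ.r y * (ρ.r z2 * ρ.r z3)) = 1 → False := fun hv => by
    have h2 : (ρ.r x * ρ.r z2) * (ρ.r y * ρ.r z3) = 1 := by
      rw [mul_assoc, ← mul_assoc (ρ.r z2), hcomm z2 y, mul_assoc (ρ.r y)]
      exact hv
    rw [ρ.r_star hxz2, ρ.r_star hyz3, ρ.r_star hC23] at h2
    exact ρ.r_ne_one _ h2
  have K28 : ρ.r x * (ρ.r y * ρ.r z1) = 1 → False := fun hv => by
    rw [ρ.r_star hyz1] at hv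
    exact pair_ne x _ hxb1' hv
  have K29 : ρ.r x * (ρ.r y * (ρ.r z1 * ρ.r z3)) = 1 → False := fun hv => by
    have h2 : (ρ.r x * ρ.r z1) * (ρ.r y * ρ.r z3) = 1 := by
      rw [mul_assoc, ← mul_assoc (ρ.r z1), hcomm z1 y, mul_assoc (ρ.r y)]
      exact hv
    rw [ρ.r_star hxz1, ρ.r_star hyz3, ρ.r_star hC13] at h2
    exact ρ.r_ne_one _ h2
  have K30 : ρ.r x * (ρ.r y * (ρ.r z1 * ρ.r z2)) = 1 → False := fun hv => by
    have h2 : (ρ.r x * ρ.r z1) * (ρ.r y * ρ.r z2) = 1 := by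
      rw [mul_assoc, ← mul_assoc (ρ.r z1), hcomm z1 y, mul_assoc (ρ.r y)]
      exact hv
    rw [ρ.r_star hxz1, ρ.r_star hyz2, ρ.r_star hC12] at h2
    exact ρ.r_ne_one _ h2
  have K31 : ρ.r x * (ρ.r y * (ρ.r z1 * (ρ.r z2 * ρ.r z3))) = 1 → False := fun hv => by
    have h2 : ((ρ.r x * ρ.r z1) * (ρ.r y * ρ.r z2)) * ρ.r z3 = 1 := by
      rw [mul_assoc (ρ.r x * ρ.r z1), mul_assoc (ρ.r x), mul_assoc (ρ.r y),
        ← mul_assoc (ρ.r z1), hcomm z1 y, mul_assoc (ρ.r y)]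
      exact hv
    rw [ρ.r_star hxz1, ρ.r_star hyz2, ρ.r_star hC12] at h2
    exact pair_ne _ z3 (ne_of_noncol_col hz3a1 ((col_star_left hC12).symm')).symm h2
  -- the elementary abelian model
  have hsplit : ∀ (p : P) (a b : ZMod 2), ρ.r p ^ (a + b).val = ρ.r p ^ a.val * ρ.r p ^ b.val := by
    intro p a b
    have two_cases : ∀ a : ZMod 2, a = 0 ∨ a = 1 := by decide
    rcases two_cases a with rfl | rfl <;> rcases two_cases b with rfl | rfl <;>
      simp [ρ.r_sq p, show ((1 : ZMod 2) + 1).val = 0 from rfl,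
        show ((0 : ZMod 2) + 1).val = 1 from rfl, show ((1 : ZMod 2) + 0).val = 1 from rfl,
        show ((0 : ZMod 2) + 0).val = 0 from rfl, show (0 : ZMod 2).val = 0 from rfl,
        show (1 : ZMod 2).val = 1 from rfl]
  have co : ∀ (p q : P) (m n : ℕ), Commute (ρ.r p ^ m) (ρ.r q ^ n) :=
    fun p q m n => Commute.pow_pow (hcomm p q) m n
  have shuffle : ∀ a b c d : R, Commute b c → a * b * (c * d) = a * c * (b * d) :=
    fun a b c d h => h.mul_mul_mul_comm a d
  have hmulF : ∀ v w : ZMod 2 × ZMod 2 × ZMod 2 × ZMod 2 × ZMod 2,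
      ρ.r x ^ (v + w).1.val * (ρ.r y ^ (v + w).2.1.val * (ρ.r z1 ^ (v + w).2.2.1.val *
        (ρ.r z2 ^ (v + w).2.2.2.1.val * ρ.r z3 ^ (v + w).2.2.2.2.val))) =
      (ρ.r x ^ v.1.val * (ρ.r y ^ v.2.1.val * (ρ.r z1 ^ v.2.2.1.val *
        (ρ.r z2 ^ v.2.2.2.1.val * ρ.r z3 ^ v.2.2.2.2.val)))) *
      (ρ.r x ^ w.1.val * (ρ.r y ^ w.2.1.val * (ρ.r z1 ^ w.2.2.1.val *
        (ρ.r z2 ^ w.2.2.2.1.val * ρ.r z3 ^ w.2.2.2.2.val)))) := by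
    intro v w
    obtain ⟨a1, a2, a3, a4, a5⟩ := v
    obtain ⟨b1, b2, b3, b4, b5⟩ := w
    simp only [Prod.mk_add_mk]
    rw [hsplit x a1 b1, hsplit y a2 b2, hsplit z1 a3 b3, hsplit z2 a4 b4, hsplit z3 a5 b5]
    rw [shuffle (ρ.r z2 ^ a4.val) (ρ.r z2 ^ b4.val) (ρ.r z3 ^ a5.val) (ρ.r z3 ^ b5.val)
        (co z2 z3 _ _)]
    rw [shuffle (ρ.r z1 ^ a3.val) (ρ.r z1 ^ b3.val) _ _
        ((co z1 z2 _ _).mul_right (co z1 z3 _ _))]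
    rw [shuffle (ρ.r y ^ a2.val) (ρ.r y ^ b2.val) _ _
        ((co y z1 _ _).mul_right ((co y z2 _ _).mul_right (co y z3 _ _)))]
    rw [shuffle (ρ.r x ^ a1.val) (ρ.r x ^ b1.val) _ _
        ((co x y _ _).mul_right ((co x z1 _ _).mul_right
          ((co x z2 _ _).mul_right (co x z3 _ _))))]
  have hKill : ∀ u : ZMod 2 × ZMod 2 × ZMod 2 × ZMod 2 × ZMod 2,
      ρ.r x ^ u.1.val * (ρ.r y ^ u.2.1.val * (ρ.r z1 ^ u.2.2.1.val *
        (ρ.r z2 ^ u.2.2.2.1.val * ρ.r z3 ^ u.2.2.2.2.val))) = 1 → u = 0 := by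
    intro u hv
    obtain ⟨a1, a2, a3, a4, a5⟩ := u
    have two_cases : ∀ a : ZMod 2, a = 0 ∨ a = 1 := by decide
    rcases two_cases a1 with rfl | rfl <;> rcases two_cases a2 with rfl | rfl <;>
      rcases two_cases a3 with rfl | rfl <;> rcases two_cases a4 with rfl | rfl <;>
      rcases two_cases a5 with rfl | rfl <;>
      simp only [show (0 : ZMod 2).val = 0 from rfl, show (1 : ZMod 2).val = 1 from rfl,
        pow_zero, pow_one, one_mul, mul_one] at hv ⊢ <;>
      first
        | rfl
        | exact absurd hv K1 | exact absurd hv K2 | exact absurd hv K3 | exact absurd hv K4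
        | exact absurd hv K5 | exact absurd hv K6 | exact absurd hv K7 | exact absurd hv K8
        | exact absurd hv K9 | exact absurd hv K10 | exact absurd hv K11 | exact absurd hv K12
        | exact absurd hv K13 | exact absurd hv K14 | exact absurd hv K15 | exact absurd hv K16
        | exact absurd hv K17 | exact absurd hv K18 | exact absurd hv K19 | exact absurd hv K20
        | exact absurd hv K21 | exact absurd hv K22 | exact absurd hv K23 | exact absurd hv K24
        | exact absurd hv K25 | exact absurd hv K26 | exact absurd hv K27 | exact absurd hv K28
        | exact absurd hv K29 | exact absurd hv K30 | exact absurd hv K31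
  -- build the monoid homomorphism
  let φ : Multiplicative (ZMod 2 × ZMod 2 × ZMod 2 × ZMod 2 × ZMod 2) →* R :=
    MonoidHom.mk' (fun u => ρ.r x ^ u.toAdd.1.val * (ρ.r y ^ u.toAdd.2.1.val *
      (ρ.r z1 ^ u.toAdd.2.2.1.val * (ρ.r z2 ^ u.toAdd.2.2.2.1.val *
        ρ.r z3 ^ u.toAdd.2.2.2.2.val))))
      (fun a b => hmulF a.toAdd b.toAdd)
  have hinjφ : Function.Injective φ := by
    rw [injective_iff_map_eq_one]
    intro v hv
    have h0 : v.toAdd = 0 := hKill v.toAdd hv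
    exact congrArg Multiplicative.ofAdd h0
  have hsub1 : Subgroup.closure (ρ.r '' Q) ≤ φ.range := by
    rw [Subgroup.closure_le]
    rintro g ⟨w, hwQ, rfl⟩
    have hg := generation hGQ hQ ρ hx hy hxy hxy' hz1Q hxz1 hyz1 hz2Q hxz2 hyz2
      hz3Q hxz3 hyz3 hnc12 hne12 hnc13 hne13 hnc23 hne23 w hwQ
    refine (Subgroup.closure_le φ.range).mpr ?_ hg
    rintro g' hg'
    simp only [Set.mem_insert_iff, Set.mem_singleton_iff] at hg'
    rw [SetLike.mem_coe, MonoidHom.mem_range]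
    rcases hg' with rfl | rfl | rfl | rfl | rfl
    · exact ⟨Multiplicative.ofAdd (1, 0, 0, 0, 0), by
        show ρ.r x ^ (1 : ZMod 2).val * (ρ.r y ^ (0 : ZMod 2).val * (ρ.r z1 ^ (0 : ZMod 2).val *
          (ρ.r z2 ^ (0 : ZMod 2).val * ρ.r z3 ^ (0 : ZMod 2).val))) = ρ.r x
        simp [show (1 : ZMod 2).val = 1 from rfl, show (0 : ZMod 2).val = 0 from rfl]⟩
    · exact ⟨Multiplicative.ofAdd (0, 1, 0, 0, 0), by
        show ρ.r x ^ (0 : ZMod 2).val * (ρ.r y ^ (1 : ZMod 2).val * (ρ.r z1 ^ (0 : ZMod 2).val *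
          (ρ.r z2 ^ (0 : ZMod 2).val * ρ.r z3 ^ (0 : ZMod 2).val))) = ρ.r y
        simp [show (1 : ZMod 2).val = 1 from rfl, show (0 : ZMod 2).val = 0 from rfl]⟩
    · exact ⟨Multiplicative.ofAdd (0, 0, 1, 0, 0), by
        show ρ.r x ^ (0 : ZMod 2).val * (ρ.r y ^ (0 : ZMod 2).val * (ρ.r z1 ^ (1 : ZMod 2).val *
          (ρ.r z2 ^ (0 : ZMod 2).val * ρ.r z3 ^ (0 : ZMod 2).val))) = ρ.r z1
        simp [show (1 : ZMod 2).val = 1 from rfl, show (0 : ZMod 2).val = 0 from rfl]⟩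
    · exact ⟨Multiplicative.ofAdd (0, 0, 0, 1, 0), by
        show ρ.r x ^ (0 : ZMod 2).val * (ρ.r y ^ (0 : ZMod 2).val * (ρ.r z1 ^ (0 : ZMod 2).val *
          (ρ.r z2 ^ (1 : ZMod 2).val * ρ.r z3 ^ (0 : ZMod 2).val))) = ρ.r z2
        simp [show (1 : ZMod 2).val = 1 from rfl, show (0 : ZMod 2).val = 0 from rfl]⟩
    · exact ⟨Multiplicative.ofAdd (0, 0, 0, 0, 1), by
        show ρ.r x ^ (0 : ZMod 2).val * (ρ.r y ^ (0 : ZMod 2).val * (ρ.r z1 ^ (0 : ZMod 2).val *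
          (ρ.r z2 ^ (0 : ZMod 2).val * ρ.r z3 ^ (1 : ZMod 2).val))) = ρ.r z3
        simp [show (1 : ZMod 2).val = 1 from rfl, show (0 : ZMod 2).val = 0 from rfl]⟩
  have hsub2 : φ.range ≤ Subgroup.closure (ρ.r '' Q) := by
    rintro g ⟨v, rfl⟩
    have hm1 : ρ.r x ∈ Subgroup.closure (ρ.r '' Q) := Subgroup.subset_closure ⟨x, hx, rfl⟩
    have hm2 : ρ.r y ∈ Subgroup.closure (ρ.r '' Q) := Subgroup.subset_closure ⟨y, hy, rfl⟩
    have hm3 : ρ.r z1 ∈ Subgroup.closure (ρ.r '' Q) := Subgroup.subset_closure ⟨z1, hz1Q, rfl⟩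
    have hm4 : ρ.r z2 ∈ Subgroup.closure (ρ.r '' Q) := Subgroup.subset_closure ⟨z2, hz2Q, rfl⟩
    have hm5 : ρ.r z3 ∈ Subgroup.closure (ρ.r '' Q) := Subgroup.subset_closure ⟨z3, hz3Q, rfl⟩
    show ρ.r x ^ v.toAdd.1.val * (ρ.r y ^ v.toAdd.2.1.val * (ρ.r z1 ^ v.toAdd.2.2.1.val *
      (ρ.r z2 ^ v.toAdd.2.2.2.1.val * ρ.r z3 ^ v.toAdd.2.2.2.2.val)))
        ∈ Subgroup.closure (ρ.r '' Q)
    exact mul_mem (pow_mem hm1 _) (mul_mem (pow_mem hm2 _) (mul_mem (pow_mem hm3 _)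
      (mul_mem (pow_mem hm4 _) (pow_mem hm5 _))))
  have hre : Subgroup.closure (ρ.r '' Q) = φ.range := le_antisymm hsub1 hsub2
  rw [hre]
  have hcard : Nat.card (Multiplicative (ZMod 2 × ZMod 2 × ZMod 2 × ZMod 2 × ZMod 2)) = 2 ^ 5 := by
    simp [Nat.card_eq_fintype_card]
  rw [← hcard]
  exact (Nat.card_congr (MonoidHom.ofInjective hinjφ).toEquiv).symm
end
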